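/- arXiv:2401.07821 — 8 statements merged into one kernel-verified Lean document; each statement's English description precedes it below -/
import Mathlib

section
/- Every group homomorphism Φ : G_α → G_β satisfies at least one of the following: (i) Φ(ℤ^m) ⊆ ℤ^{m'} (Φ is of type I), or (ii) there exists v ∈ F_{n'} such that π'(Φ(g)) ∈ ⟨v⟩ for every g ∈ G_α, i.e. the projection to F_{n'} of the image of Φ is a cyclic subgroup of F_{n'}. -/
open Matrix SemidirectProduct

/-- The free abelian group `ℤ^m`, written multiplicatively. -/
abbrev FA (m : ℕ) : Type := Multiplicative (Fin m → ℤ)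

/-- The (right) action of `GL_m(ℤ)` on `ℤ^m` (row vectors), as a homomorphism into
`MulAut (ℤ^m)`: the automorphism attached to `M` sends `a` to `a · M⁻¹`, so that in the
semidirect product below one gets the relation `u⁻¹ tᵃ u = t^(a·A_u)`. -/
def rowAction (m : ℕ) :
    Matrix.GeneralLinearGroup (Fin m) ℤ →* MulAut (FA m) where
  toFun M :=
  { toFun := fun a => Multiplicative.ofAdd
      (Matrix.vecMul (Multiplicative.toAdd a)
        ((↑(M⁻¹) : Matrix (Fin m) (Fin m) ℤ)))
    invFun := fun a => Multiplicative.ofAdd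
      (Matrix.vecMul (Multiplicative.toAdd a) ((↑M : Matrix (Fin m) (Fin m) ℤ)))
    left_inv := by
      intro a
      simp [Matrix.vecMul_vecMul]
    right_inv := by
      intro a
      simp [Matrix.vecMul_vecMul]
    map_mul' := by
      intro a b
      simp [Matrix.add_vecMul] }
  map_one' := by
    ext a
    simp
  map_mul' := by
    intro M N
    ext a
    simp [Matrix.vecMul_vecMul, _root_.mul_inv_rev]

/-- The free-abelian by free group `G_α = F_n ⋉_α ℤ^m` associated to
`α : F_n → GL_m(ℤ)`; it satisfies `u⁻¹ tᵃ u = t^(a·A_u)`. -/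
abbrev Gsd {n m : ℕ} (α : FreeGroup (Fin n) →* Matrix.GeneralLinearGroup (Fin m) ℤ) :
    Type :=
  FA m ⋊[(rowAction m).comp α] FreeGroup (Fin n)

/-- `tA α a` is the element `tᵃ` of the abelian part of `G_α`. -/
def tA {n m : ℕ} (α : FreeGroup (Fin n) →* Matrix.GeneralLinearGroup (Fin m) ℤ)
    (a : Fin m → ℤ) : Gsd α :=
  SemidirectProduct.inl (Multiplicative.ofAdd a)

/-- `fE α u` is the element `u` of the free part of `G_α`. -/
def fE {n m : ℕ} (α : FreeGroup (Fin n) →* Matrix.GeneralLinearGroup (Fin m) ℤ)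
    (u : FreeGroup (Fin n)) : Gsd α :=
  SemidirectProduct.inr u

/-- The projection `τ : G_α → ℤ^m`, reading off the abelian part of the normal form
`g = u · tᵃ` (i.e. `τ (fE α u * tA α a) = a`). -/
def tau {n m : ℕ} (α : FreeGroup (Fin n) →* Matrix.GeneralLinearGroup (Fin m) ℤ)
    (g : Gsd α) : Fin m → ℤ :=
  Matrix.vecMul (Multiplicative.toAdd (SemidirectProduct.left g))
    ((↑(α (SemidirectProduct.right g)) : Matrix (Fin m) (Fin m) ℤ))


namespace MyFG
open FreeGroup List

variable {α : Type*} [DecidableEq α]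

attribute [local simp] List.Chain'

/-- no-cancellation relation between adjacent letters -/
def Rel : (α × Bool) → (α × Bool) → Prop := fun p q => ¬(p.1 = q.1 ∧ p.2 = !q.2)

lemma chain'_reduce (L : List (α × Bool)) : List.Chain' Rel (reduce L) := by
  induction L with
  | nil => simp
  | cons x L ih =>
    rw [FreeGroup.reduce.cons]
    rcases h : reduce L with _ | ⟨hd, tl⟩
    · simp
    · rw [h] at ih
      by_cases hc : x.1 = hd.1 ∧ x.2 = !hd.2
      · simpa [hc] using ih.tail
      · simpa [hc, List.isChain_cons_cons] using ⟨hc, ih⟩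

lemma reduce_eq_self_of_chain' {L : List (α × Bool)} (h : List.Chain' Rel L) :
    reduce L = L := by
  induction L with
  | nil => simp
  | cons x L ih =>
    have hL : List.Chain' Rel L := h.tail
    rw [FreeGroup.reduce.cons, ih hL]
    cases L with
    | nil => rfl
    | cons y T =>
      have hxy : Rel x y := (List.isChain_cons_cons.1 h).1
      simp only [Rel] at hxy
      simp [hxy]

lemma toWord_chain' (x : FreeGroup α) : List.Chain' Rel x.toWord := by
  rw [← FreeGroup.reduce_toWord]; exact chain'_reduce _

lemma toWord_mk_of_chain' {L : List (α × Bool)} (h : List.Chain' Rel L) :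
    (FreeGroup.mk L).toWord = L := by
  rw [FreeGroup.toWord_mk]; exact reduce_eq_self_of_chain' h

lemma norm_mk_of_chain' {L : List (α × Bool)} (h : List.Chain' Rel L) :
    FreeGroup.norm (FreeGroup.mk L) = L.length := by
  rw [FreeGroup.norm, toWord_mk_of_chain' h]


open FreeGroup List

lemma cons_eq_append_singleton {β : Type*} : ∀ {l : List β} {a : β},
    a :: l = l ++ [a] → l = List.replicate l.length a
  | [], a, _ => rfl
  | b :: t, a, h => by
    simp only [List.cons_append, List.cons.injEq] at h
    obtain ⟨rfl, h2⟩ := h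
    have := cons_eq_append_singleton (l := t) (a := a) h2
    simp [List.replicate_succ, ← this]

variable {α : Type*} [DecidableEq α]

lemma mk_single_false (y : α) : FreeGroup.mk [((y : α), false)] = (FreeGroup.of y)⁻¹ := by
  rw [FreeGroup.of, FreeGroup.inv_mk]; rfl

/-- Case A of the commuting-with-a-generator lemma. -/
lemma caseA {c : FreeGroup α} {y : α}
    (hh : c.toWord.head? ≠ some (y, false))
    (hl : c.toWord.getLast? ≠ some (y, false))
    (h : FreeGroup.of y * c = c * FreeGroup.of y) :
    c = FreeGroup.of y ^ c.toWord.length := by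
  rcases hL : c.toWord with _ | ⟨hd, T⟩
  · have : c = 1 := by rwa [FreeGroup.toWord_eq_nil_iff] at hL
    simp [this]
  · -- c = mk (hd :: T), reduced
    set L := hd :: T with hLdef
    have hcL : c = FreeGroup.mk L := by rw [← hL, FreeGroup.mk_toWord]
    have hch : List.Chain' Rel L := by rw [← hL]; exact toWord_chain' c
    have hh' : hd ≠ (y, false) := by
      rw [hL, hLdef] at hh; simpa using hh
    have hl' : L.getLast (by simp) ≠ (y, false) := by
      rw [hL] at hl
      intro hcon
      exact hl (by rw [← hcon, List.getLast?_eq_getLast])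
    -- left side: (y,true) :: L is reduced
    have hchl : List.Chain' Rel ((y, true) :: L) := by
      simp only [List.Chain']; rw [List.isChain_cons_cons]
      refine ⟨?_, hch⟩
      intro ⟨h1, h2⟩
      apply hh'
      have : hd.2 = false := by simpa using h2.symm
      ext1
      · exact h1.symm
      · simpa using this
    -- right side: L ++ [(y,true)] is reduced
    have hchr : List.Chain' Rel (L ++ [(y, true)]) := by
      simp only [List.Chain']; rw [List.isChain_append]
      refine ⟨hch, List.isChain_singleton _, ?_⟩
      intro p hp q hq
      simp only [List.head?_cons, Option.mem_def, Option.some.injEq] at hq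
      intro ⟨h1, h2⟩
      apply hl'
      rw [List.getLast?_eq_getLast (by simp)] at hp
      simp only [Option.mem_def, Option.some.injEq] at hp
      rw [hp]
      subst hq
      ext1
      · exact h1
      · simpa using h2
    have e1 : FreeGroup.of y * c = FreeGroup.mk ((y, true) :: L) := by
      rw [hcL, FreeGroup.of, FreeGroup.mul_mk]; rfl
    have e2 : c * FreeGroup.of y = FreeGroup.mk (L ++ [(y, true)]) := by
      rw [hcL, FreeGroup.of, FreeGroup.mul_mk]
    have heq : (y, true) :: L = L ++ [(y, true)] := by
      have := congrArg FreeGroup.toWord (e1.symm.trans (h.trans e2))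
      rwa [toWord_mk_of_chain' hchl, toWord_mk_of_chain' hchr] at this
    have hrep : L = List.replicate L.length (y, true) := cons_eq_append_singleton heq
    rw [← FreeGroup.toWord_inj, FreeGroup.toWord_of_pow, hL]
    exact hrep

lemma chain'_cons_single {L : List (α × Bool)} {y : α} (hch : List.Chain' Rel L)
    (hh : L.head? ≠ some (y, false)) : List.Chain' Rel ((y, true) :: L) := by
  simp only [List.Chain']; rw [List.isChain_cons]
  refine ⟨?_, hch⟩
  intro q hq
  intro ⟨h1, h2⟩
  apply hh
  rw [Option.mem_def] at hq
  rw [hq]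
  have : q.2 = false := by simpa using h2.symm
  congr 1
  ext1
  · exact h1.symm
  · exact this

lemma chain'_append_single {L : List (α × Bool)} {y : α} (hch : List.Chain' Rel L)
    (hl : L.getLast? ≠ some (y, false)) : List.Chain' Rel (L ++ [(y, true)]) := by
  simp only [List.Chain']; rw [List.isChain_append]
  refine ⟨hch, List.isChain_singleton _, ?_⟩
  intro p hp q hq
  simp only [List.head?_cons, Option.mem_def, Option.some.injEq] at hq
  intro ⟨h1, h2⟩
  apply hl
  rw [Option.mem_def] at hp
  rw [hp]
  subst hq
  congr 1
  ext1
  · exact h1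
  · simpa using h2

lemma commute_of_eq_zpow {c : FreeGroup α} {y : α}
    (h : FreeGroup.of y * c = c * FreeGroup.of y) :
    ∃ k : ℤ, c = FreeGroup.of y ^ k := by
  by_cases hP : c.toWord.head? = some (y, false) <;>
    by_cases hQ : c.toWord.getLast? = some (y, false)
  · -- both ends are (y, false): apply case A to c⁻¹
    have hcom : Commute (FreeGroup.of y) c := h
    have h' : FreeGroup.of y * c⁻¹ = c⁻¹ * FreeGroup.of y := (hcom.inv_right).eq
    have hiw : c⁻¹.toWord = (List.map (fun g : α × Bool => (g.1, !g.2)) c.toWord).reverse := by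
      rw [FreeGroup.toWord_inv]; rfl
    have hh' : c⁻¹.toWord.head? ≠ some (y, false) := by
      rw [hiw, List.head?_reverse, List.getLast?_map, hQ]
      simp
    have hl' : c⁻¹.toWord.getLast? ≠ some (y, false) := by
      rw [hiw, List.getLast?_reverse, List.head?_map, hP]
      simp
    have := caseA hh' hl' h'
    refine ⟨-(c⁻¹.toWord.length : ℤ), ?_⟩
    rw [_root_.zpow_neg, _root_.zpow_natCast, ← this, _root_.inv_inv]
  · -- head (y,false), last not: norm contradiction
    exfalso
    rcases hL : c.toWord with _ | ⟨hd, T⟩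
    · rw [hL] at hP; simp at hP
    have hd_eq : hd = (y, false) := by rw [hL] at hP; simpa using hP
    have hcL : c = FreeGroup.mk (hd :: T) := by rw [← hL, FreeGroup.mk_toWord]
    have hch : List.Chain' Rel (hd :: T) := by rw [← hL]; exact toWord_chain' c
    have e1 : FreeGroup.of y * c = FreeGroup.mk T := by
      rw [hcL, hd_eq]
      have : FreeGroup.mk ((y, false) :: T) = (FreeGroup.of y)⁻¹ * FreeGroup.mk T := by
        rw [← mk_single_false, FreeGroup.mul_mk]
        rfl
      rw [this, ← mul_assoc, _root_.mul_inv_cancel, one_mul]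
    have e2 : c * FreeGroup.of y = FreeGroup.mk ((hd :: T) ++ [(y, true)]) := by
      rw [hcL, FreeGroup.of, FreeGroup.mul_mk]
    have h1 : FreeGroup.norm (FreeGroup.of y * c) ≤ T.length := by
      rw [e1]; exact FreeGroup.norm_mk_le
    have h2 : FreeGroup.norm (c * FreeGroup.of y) = T.length + 2 := by
      rw [e2, norm_mk_of_chain' (chain'_append_single hch (by rw [← hL]; exact hQ))]
      simp
    rw [h, h2] at h1
    omega
  · -- last (y,false), head not: norm contradiction
    exfalso
    have hne : c.toWord ≠ [] := by
      intro hnil; rw [hnil] at hQ; simp at hQ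
    have hlast : c.toWord.getLast hne = (y, false) := by
      rw [List.getLast?_eq_getLast hne] at hQ; simpa using hQ
    have hsplit : c.toWord.dropLast ++ [(y, false)] = c.toWord := by
      rw [← hlast]; exact List.dropLast_append_getLast hne
    have hcL : c = FreeGroup.mk (c.toWord.dropLast ++ [(y, false)]) := by
      rw [hsplit, FreeGroup.mk_toWord]
    have e2 : c * FreeGroup.of y = FreeGroup.mk c.toWord.dropLast := by
      conv_lhs => rw [hcL]
      rw [FreeGroup.of, FreeGroup.mul_mk, ← FreeGroup.mul_mk, ← FreeGroup.mul_mk]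
      have h3 : FreeGroup.mk [((y : α), false)] * FreeGroup.mk [((y : α), true)] = 1 := by
        rw [mk_single_false]
        exact _root_.inv_mul_cancel _
      rw [mul_assoc, h3, mul_one]
    have e1 : FreeGroup.of y * c = FreeGroup.mk ((y, true) :: c.toWord) := by
      conv_lhs => rw [← FreeGroup.mk_toWord (x := c)]
      rw [FreeGroup.of, FreeGroup.mul_mk]
      rfl
    have h1 : FreeGroup.norm (FreeGroup.of y * c) = c.toWord.length + 1 := by
      rw [e1, norm_mk_of_chain' (chain'_cons_single (toWord_chain' c) hP)]
      simp
    have h2 : FreeGroup.norm (c * FreeGroup.of y) ≤ c.toWord.length - 1 := by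
      rw [e2]
      calc FreeGroup.norm (FreeGroup.mk c.toWord.dropLast) ≤ c.toWord.dropLast.length :=
            FreeGroup.norm_mk_le
        _ = c.toWord.length - 1 := by rw [List.length_dropLast]
    have hpos : 0 < c.toWord.length := List.length_pos_iff.2 hne
    rw [h] at h1
    omega
  · exact ⟨(c.toWord.length : ℤ), by rw [_root_.zpow_natCast]; exact caseA hP hQ h⟩

lemma mk_singleton_not (p : α × Bool) :
    FreeGroup.mk [(p.1, !p.2)] = (FreeGroup.mk [p])⁻¹ := by
  rw [FreeGroup.inv_mk]; rfl

lemma head?_flatten_replicate {L : List (α × Bool)} {n : ℕ} {q : α × Bool}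
    (hq : (List.flatten (List.replicate n L)).head? = some q) : L.head? = some q := by
  cases n with
  | zero => simp at hq
  | succ m =>
    rw [List.replicate_succ, List.flatten_cons] at hq
    cases L with
    | nil => simp at hq
    | cons a t => simpa using hq

lemma flatten_replicate_chain' {L : List (α × Bool)} (hch : List.Chain' Rel L)
    (hok : ∀ p q, L.getLast? = some p → L.head? = some q → Rel p q) :
    ∀ n : ℕ, List.Chain' Rel (List.flatten (List.replicate n L))
  | 0 => by simp
  | n + 1 => by
    rw [List.replicate_succ, List.flatten_cons]; simp only [List.Chain']; rw [List.isChain_append]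
    refine ⟨hch, flatten_replicate_chain' hch hok n, ?_⟩
    intro p hp q hq
    exact hok p q hp (head?_flatten_replicate hq)

lemma tf_aux : ∀ (N : ℕ) (x : FreeGroup α), FreeGroup.norm x ≤ N →
    ∀ n : ℕ, n ≠ 0 → x ^ n = 1 → x = 1 := by
  intro N
  induction N with
  | zero =>
    intro x hx n _ _
    rw [← FreeGroup.norm_eq_zero]
    omega
  | succ N IH =>
    intro x hx n hn h
    rcases hL : x.toWord with _ | ⟨hd, T⟩
    · rwa [FreeGroup.toWord_eq_nil_iff] at hL
    have hch : List.Chain' Rel (hd :: T) := by rw [← hL]; exact toWord_chain' x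
    have hxmk : x = FreeGroup.mk (hd :: T) := by rw [← hL, FreeGroup.mk_toWord]
    by_cases hc : (hd :: T).getLast (by simp) = (hd.1, !hd.2)
    · -- ends cancel: pass to the shorter conjugate
      have hT : T ≠ [] := by
        rintro rfl
        simp only [List.getLast_singleton] at hc
        have := congrArg Prod.snd hc
        simp at this
      have hgl : (hd :: T).getLast (by simp) = T.getLast hT := List.getLast_cons hT
      have hsplit : T.dropLast ++ [(hd.1, !hd.2)] = T := by
        rw [← hc, hgl]
        exact List.dropLast_append_getLast hT
      have hxy : x = FreeGroup.mk [hd] * FreeGroup.mk T.dropLast * (FreeGroup.mk [hd])⁻¹ := by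
        rw [← mk_singleton_not, FreeGroup.mul_mk, FreeGroup.mul_mk, hxmk, ← hsplit]
        simp
      have hyn : FreeGroup.mk T.dropLast ^ n = 1 := by
        have hconj : x ^ n
            = FreeGroup.mk [hd] * FreeGroup.mk T.dropLast ^ n * (FreeGroup.mk [hd])⁻¹ := by
          rw [hxy, _root_.conj_pow]
        rw [h] at hconj
        have := hconj.symm
        calc FreeGroup.mk T.dropLast ^ n
            = (FreeGroup.mk [hd])⁻¹ * (FreeGroup.mk [hd] * FreeGroup.mk T.dropLast ^ n
                * (FreeGroup.mk [hd])⁻¹) * FreeGroup.mk [hd] := by group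
          _ = (FreeGroup.mk [hd])⁻¹ * 1 * FreeGroup.mk [hd] := by rw [← this]
          _ = 1 := by group
      have hnorm : FreeGroup.norm (FreeGroup.mk T.dropLast) ≤ N := by
        have h1 : FreeGroup.norm (FreeGroup.mk T.dropLast) ≤ T.dropLast.length :=
          FreeGroup.norm_mk_le
        have h2 : FreeGroup.norm x = T.length + 1 := by
          rw [FreeGroup.norm, hL]; simp
        have h3 := List.length_dropLast (xs := T)
        omega
      have hy1 : FreeGroup.mk T.dropLast = 1 := IH _ hnorm n hn hyn
      rw [hxy, hy1]
      group
    · -- cyclically reduced: powers have no cancellation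
      exfalso
      have hok : ∀ p q : α × Bool, (hd :: T).getLast? = some p → (hd :: T).head? = some q →
          Rel p q := by
        intro p q hp hq
        rw [List.getLast?_eq_getLast (by simp)] at hp
        simp only [Option.some.injEq] at hp hq
        simp only [List.head?_cons, Option.some.injEq] at hq
        intro ⟨h1, h2⟩
        apply hc
        rw [hp]
        subst hq
        ext1
        · exact h1
        · exact h2
      have hflat : List.Chain' Rel (List.flatten (List.replicate n (hd :: T))) :=
        flatten_replicate_chain' hch hok n
      have hxn : x ^ n = FreeGroup.mk (List.flatten (List.replicate n (hd :: T))) := by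
        rw [hxmk, FreeGroup.pow_mk]
      have := congrArg FreeGroup.toWord (hxn.symm.trans h)
      rw [toWord_mk_of_chain' hflat, FreeGroup.toWord_one] at this
      obtain ⟨m, rfl⟩ := Nat.exists_eq_succ_of_ne_zero hn
      rw [List.replicate_succ, List.flatten_cons] at this
      simp at this

lemma eq_one_of_pow_eq_one {x : FreeGroup α} {n : ℕ} (hn : n ≠ 0) (h : x ^ n = 1) :
    x = 1 :=
  tf_aux (FreeGroup.norm x) x le_rfl n hn h

lemma eq_one_of_zpow_eq_one {x : FreeGroup α} {k : ℤ} (hk : k ≠ 0) (h : x ^ k = 1) :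
    x = 1 := by
  rcases lt_trichotomy k 0 with hlt | rfl | hgt
  · have : x⁻¹ ^ (-k).toNat = 1 := by
      rw [← _root_.zpow_natCast, Int.toNat_of_nonneg (by omega), _root_.inv_zpow, ← _root_.zpow_neg, neg_neg, h]
    have := eq_one_of_pow_eq_one (n := (-k).toNat) (by omega) this
    rwa [inv_eq_one] at this
  · exact absurd rfl hk
  · have : x ^ k.toNat = 1 := by
      rw [← _root_.zpow_natCast, Int.toNat_of_nonneg (by omega), h]
    exact eq_one_of_pow_eq_one (by omega) this

section Abstract

lemma noncomm_of {S : Type*} {a b : S} (hab : a ≠ b) :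
    ¬ Commute (FreeGroup.of a) (FreeGroup.of b) := by
  have hperm : ¬ (Equiv.swap (0 : Fin 3) 1 * Equiv.swap 1 2
      = Equiv.swap (1 : Fin 3) 2 * Equiv.swap (0 : Fin 3) 1) := by decide
  classical
  intro hcom
  set σ : Equiv.Perm (Fin 3) := Equiv.swap 0 1 with hσ
  set τ : Equiv.Perm (Fin 3) := Equiv.swap 1 2 with hτ
  have hmap := hcom.map (FreeGroup.lift (fun s => if s = a then σ else if s = b then τ else 1))
  rw [FreeGroup.lift_apply_of, FreeGroup.lift_apply_of, if_pos rfl, if_neg (Ne.symm hab), if_pos rfl]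
    at hmap
  rw [hσ, hτ] at hmap
  exact hperm hmap

lemma exists_gen_of_subsingleton {S : Type*} (hS : ∀ a b : S, a = b) :
    ∃ g : FreeGroup S, ∀ x, x ∈ Subgroup.zpowers g := by
  by_cases h : Nonempty S
  · obtain ⟨s⟩ := h
    refine ⟨FreeGroup.of s, fun x => ?_⟩
    induction x using FreeGroup.induction_on with
    | C1 => exact one_mem _
    | of t => have := hS t s; subst this; exact Subgroup.mem_zpowers _
    | inv_of t ht => exact inv_mem ht
    | mul x y hx hy => exact mul_mem hx hy
  · refine ⟨1, fun x => ?_⟩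
    induction x using FreeGroup.induction_on with
    | C1 => exact one_mem _
    | of t => exact absurd ⟨t⟩ h
    | inv_of t ht => exact inv_mem ht
    | mul x y hx hy => exact mul_mem hx hy

lemma exists_gen_of_mulEquiv {G H : Type*} [Group G] [Group H] (e : G ≃* H)
    (h : ∃ g : G, ∀ x, x ∈ Subgroup.zpowers g) :
    ∃ g : H, ∀ x, x ∈ Subgroup.zpowers g := by
  obtain ⟨g, hg⟩ := h
  refine ⟨e g, fun x => ?_⟩
  obtain ⟨k, hk⟩ := Subgroup.mem_zpowers_iff.1 (hg (e.symm x))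
  exact Subgroup.mem_zpowers_iff.2 ⟨k, by rw [← _root_.map_zpow, hk]; simp⟩

lemma cyclic_of_central {G : Type*} [Group G] [IsFreeGroup G] (z : G) (hz : z ≠ 1)
    (hc : ∀ x : G, Commute x z) : ∃ g : G, ∀ x : G, x ∈ Subgroup.zpowers g := by
  classical
  set S := IsFreeGroup.Generators G with hSdef
  set e : G ≃* FreeGroup S := IsFreeGroup.toFreeGroup G with hedef
  by_cases hS : ∃ a b : S, a ≠ b
  · exfalso
    obtain ⟨a, b, hab⟩ := hS
    set z' : FreeGroup S := e z with hz'def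
    have hz' : z' ≠ 1 := by
      intro hh
      apply hz
      apply e.injective
      rw [_root_.map_one]
      exact hh
    have hca : FreeGroup.of a * z' = z' * FreeGroup.of a := by
      have h2 := (hc (e.symm (FreeGroup.of a))).map e
      simpa using h2.eq
    have hcb : FreeGroup.of b * z' = z' * FreeGroup.of b := by
      have h2 := (hc (e.symm (FreeGroup.of b))).map e
      simpa using h2.eq
    obtain ⟨k, hk⟩ := commute_of_eq_zpow hca
    obtain ⟨l, hl⟩ := commute_of_eq_zpow hcb
    set χ : FreeGroup S →* Multiplicative ℤ :=
      FreeGroup.lift (fun s => if s = a then Multiplicative.ofAdd (1 : ℤ) else 1) with hχ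
    have h1 : χ z' = Multiplicative.ofAdd k := by
      rw [hk, _root_.map_zpow, hχ, FreeGroup.lift_apply_of, if_pos rfl, ← ofAdd_zsmul]
      simp
    have h2 : χ z' = 1 := by
      rw [hl, _root_.map_zpow, hχ, FreeGroup.lift_apply_of, if_neg (Ne.symm hab), _root_.one_zpow]
    have hk0 : k = 0 := by
      rw [h2] at h1
      have := congrArg Multiplicative.toAdd h1
      simpa using this.symm
    rw [hk0, _root_.zpow_zero] at hk
    exact hz' hk
  · have hsub : ∀ a b : S, a = b := by
      push_neg at hS; exact hS
    exact exists_gen_of_mulEquiv e.symm (exists_gen_of_subsingleton hsub)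

lemma cyclic_of_comm {G : Type*} [Group G] [IsFreeGroup G]
    (hc : ∀ x y : G, Commute x y) : ∃ g : G, ∀ x : G, x ∈ Subgroup.zpowers g := by
  classical
  set S := IsFreeGroup.Generators G with hSdef
  set e : G ≃* FreeGroup S := IsFreeGroup.toFreeGroup G with hedef
  by_cases hS : ∃ a b : S, a ≠ b
  · exfalso
    obtain ⟨a, b, hab⟩ := hS
    apply noncomm_of hab
    have := (hc (e.symm (FreeGroup.of a)) (e.symm (FreeGroup.of b))).map e
    simpa using this
  · have hsub : ∀ a b : S, a = b := by
      push_neg at hS; exact hS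
    exact exists_gen_of_mulEquiv e.symm (exists_gen_of_subsingleton hsub)

lemma zpow_eq_one_abs {G : Type*} [Group G] [IsFreeGroup G] {x : G} {k : ℤ}
    (hk : k ≠ 0) (h : x ^ k = 1) : x = 1 := by
  classical
  set e : G ≃* FreeGroup (IsFreeGroup.Generators G) := IsFreeGroup.toFreeGroup G
  have h1 : e x = 1 := eq_one_of_zpow_eq_one hk (by rw [← _root_.map_zpow, h, _root_.map_one])
  exact e.injective (by rw [h1, _root_.map_one])

lemma conj_zpow_eq {G : Type*} [Group G] (u x : G) (k : ℤ) :
    (u * x * u⁻¹) ^ k = u * x ^ k * u⁻¹ := by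
  have := _root_.map_zpow (MulAut.conj u) x k
  simpa [MulAut.conj_apply] using this

lemma zpow_self_of_conj {G : Type*} [Group G] {u z : G} {p q : ℤ}
    (hq : u * z * u⁻¹ = z ^ q) (hp : u⁻¹ * z * u = z ^ p) : z ^ (p * q) = z := by
  have h1 : z = u⁻¹ * (u * z * u⁻¹) * u := by group
  rw [hq] at h1
  have h2 : u⁻¹ * z ^ q * u = (u⁻¹ * z * u) ^ q := by
    have := conj_zpow_eq u⁻¹ z q
    rw [_root_.inv_inv] at this
    exact this.symm
  rw [h2, hp, ← _root_.zpow_mul] at h1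
  exact h1.symm

lemma closure_comm {G : Type*} [Group G] {s : Set G}
    (hs : ∀ x ∈ s, ∀ y ∈ s, Commute x y) :
    ∀ x ∈ Subgroup.closure s, ∀ y ∈ Subgroup.closure s, Commute x y := by
  intro x hx y hy
  exact Subgroup.closure_induction₂ (p := fun x y _ _ => Commute x y)
    (fun a b ha hb => hs a ha b hb)
    (fun _ _ => Commute.one_left _) (fun _ _ => Commute.one_right _)
    (fun _ _ _ _ _ _ h1 h2 => h1.mul_left h2) (fun _ _ _ _ _ _ h1 h2 => h1.mul_right h2)
    (fun _ _ _ _ hh => hh.inv_left) (fun _ _ _ _ hh => hh.inv_right) hx hy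

theorem master {G : Type*} [Group G] [IsFreeGroup G] (W : G) (hW : W ≠ 1)
    (h : ∀ u : G, Commute (u * W * u⁻¹) W) :
    ∃ g : G, ∀ x : G, x ∈ Subgroup.zpowers g := by
  classical
  -- all conjugates of W pairwise commute
  have hconj : ∀ u v : G, Commute (u * W * u⁻¹) (v * W * v⁻¹) := by
    intro u v
    have h1 := (h (v⁻¹ * u)).map (MulAut.conj v)
    simp only [MulAut.conj_apply] at h1
    have e1 : v * (v⁻¹ * u * W * (v⁻¹ * u)⁻¹) * v⁻¹ = u * W * u⁻¹ := by group
    rwa [e1] at h1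
  -- the normal closure of W is abelian
  set N : Subgroup G := Subgroup.normalClosure {W} with hN
  have hNcomm : ∀ x ∈ N, ∀ y ∈ N, Commute x y := by
    apply closure_comm
    intro x hx y hy
    rw [Group.mem_conjugatesOfSet_iff] at hx hy
    obtain ⟨a, ha, hca⟩ := hx
    obtain ⟨b, hb, hcb⟩ := hy
    rw [Set.mem_singleton_iff] at ha hb
    subst ha; subst hb
    obtain ⟨u, hu⟩ := isConj_iff.1 hca
    obtain ⟨v, hv⟩ := isConj_iff.1 hcb
    rw [← hu, ← hv]
    exact hconj u v
  have hWN : W ∈ N := Subgroup.subset_normalClosure (Set.mem_singleton W)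
  -- hence it is cyclic, generated by some z ≠ 1
  have hNsub : ∀ x y : ↥N, Commute x y := by
    intro x y
    exact Subtype.ext (by
      simp only [Subgroup.coe_mul]
      exact hNcomm ↑x x.2 ↑y y.2)
  obtain ⟨zhat, hzhat⟩ := cyclic_of_comm hNsub
  set z : G := ↑zhat with hzdef
  have hzN : z ∈ N := zhat.2
  have hNz : ∀ x ∈ N, ∃ k : ℤ, x = z ^ k := by
    intro x hx
    obtain ⟨k, hk⟩ := Subgroup.mem_zpowers_iff.1 (hzhat ⟨x, hx⟩)
    refine ⟨k, ?_⟩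
    have := congrArg (Subtype.val) hk
    simp only [SubgroupClass.coe_zpow] at this
    exact this.symm
  have hz1 : z ≠ 1 := by
    intro h0
    apply hW
    obtain ⟨k, hk⟩ := hNz W hWN
    rw [hk, h0, _root_.one_zpow]
  -- conjugation dichotomy
  have hdich : ∀ u : G, u * z * u⁻¹ = z ∨ u * z * u⁻¹ = z⁻¹ := by
    intro u
    have hq' : u * z * u⁻¹ ∈ N := Subgroup.Normal.conj_mem inferInstance z hzN u
    obtain ⟨q, hq⟩ := hNz _ hq'
    have hp' : u⁻¹ * z * u ∈ N := by
      have := Subgroup.Normal.conj_mem (H := N) inferInstance z hzN u⁻¹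
      rwa [_root_.inv_inv] at this
    obtain ⟨p, hp⟩ := hNz _ hp'
    have hzpq : z ^ (p * q) = z := zpow_self_of_conj hq hp
    have hone : z ^ (p * q - 1) = 1 := by
      rw [_root_.zpow_sub, _root_.zpow_one, hzpq, _root_.mul_inv_cancel]
    have hpq : p * q = 1 := by
      by_contra hne
      exact hz1 (zpow_eq_one_abs (by omega) hone)
    rcases Int.mul_eq_one_iff_eq_one_or_neg_one.1 hpq with ⟨_, hq1⟩ | ⟨_, hq1⟩
    · left; rw [hq, hq1, _root_.zpow_one]
    · right; rw [hq, hq1, _root_.zpow_neg, _root_.zpow_one]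
  -- the centralizer of z
  set C : Subgroup G := Subgroup.centralizer {z} with hC
  have hmemC : ∀ u : G, u ∈ C ↔ u * z = z * u := by
    intro u
    rw [hC, Subgroup.mem_centralizer_iff]
    constructor
    · intro hh; exact (hh z (Set.mem_singleton z)).symm
    · intro hh g hg; rw [Set.mem_singleton_iff] at hg; subst hg; exact hh.symm
  have hCconj : ∀ g u : G, u ∈ C → g * u * g⁻¹ ∈ C := by
    intro g u hu
    rw [hmemC] at hu ⊢
    have hz' : g⁻¹ * z * g = z ∨ g⁻¹ * z * g = z⁻¹ := by
      have := hdich g⁻¹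
      rwa [_root_.inv_inv] at this
    have huz : u * z⁻¹ = z⁻¹ * u := (show Commute u z from hu).inv_right.eq
    have key : ∀ w : G, g⁻¹ * z * g = w → u * w = w * u →
        g * u * g⁻¹ * z = z * (g * u * g⁻¹) := by
      intro w hw hcw
      calc g * u * g⁻¹ * z = g * (u * (g⁻¹ * z * g)) * g⁻¹ := by group
        _ = g * (u * w) * g⁻¹ := by rw [hw]
        _ = g * (w * u) * g⁻¹ := by rw [hcw]
        _ = g * ((g⁻¹ * z * g) * u) * g⁻¹ := by rw [hw]
        _ = z * (g * u * g⁻¹) := by group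
    rcases hz' with h' | h'
    · exact key z h' hu
    · exact key z⁻¹ h' huz
  by_cases hall : ∀ u : G, u ∈ C
  · exact cyclic_of_central z hz1 (fun x => (hmemC x).1 (hall x))
  · exfalso
    push_neg at hall
    obtain ⟨h0, hh0⟩ := hall
    have hhz : h0 * z * h0⁻¹ = z⁻¹ := by
      rcases hdich h0 with h' | h'
      · rw [_root_.mul_inv_eq_iff_eq_mul] at h'
        exact absurd ((hmemC h0).2 h') hh0
      · exact h'
    have hzz : z⁻¹ ≠ z := by
      intro he
      apply hz1
      apply zpow_eq_one_abs (k := 2) (by omega)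
      have h2 : z * z = 1 := inv_eq_iff_mul_eq_one.1 he
      rw [show (2:ℤ) = 1 + 1 from rfl, _root_.zpow_add, _root_.zpow_one, h2]
    -- C is a free group with z in its center, hence cyclic
    have hzC : z ∈ C := (hmemC z).2 rfl
    set zc : ↥C := ⟨z, hzC⟩ with hzc
    have hzc1 : zc ≠ 1 := by
      intro he
      exact hz1 (congrArg Subtype.val he)
    have hcen : ∀ x : ↥C, Commute x zc := by
      intro x
      exact Subtype.ext (by
        simp only [Subgroup.coe_mul]
        exact (hmemC ↑x).1 x.2)
    obtain ⟨rhat, hrhat⟩ := cyclic_of_central zc hzc1 hcen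
    set r : G := ↑rhat with hrdef
    have hrC : r ∈ C := rhat.2
    have hCr : ∀ x ∈ C, ∃ k : ℤ, x = r ^ k := by
      intro x hx
      obtain ⟨k, hk⟩ := Subgroup.mem_zpowers_iff.1 (hrhat ⟨x, hx⟩)
      refine ⟨k, ?_⟩
      have := congrArg (Subtype.val) hk
      simp only [SubgroupClass.coe_zpow] at this
      exact this.symm
    obtain ⟨s, hs⟩ := hCr z hzC
    have hs0 : s ≠ 0 := by
      intro he
      exact hz1 (by rw [hs, he, _root_.zpow_zero])
    have hr1 : r ≠ 1 := by
      intro he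
      exact hz1 (by rw [hs, he, _root_.one_zpow])
    obtain ⟨q, hq⟩ := hCr _ (hCconj h0 r hrC)
    have hp' : h0⁻¹ * r * h0 ∈ C := by
      have := hCconj h0⁻¹ r hrC
      rwa [_root_.inv_inv] at this
    obtain ⟨p, hp⟩ := hCr _ hp'
    have hrpq : r ^ (p * q) = r := zpow_self_of_conj hq hp
    have hone : r ^ (p * q - 1) = 1 := by
      rw [_root_.zpow_sub, _root_.zpow_one, hrpq, _root_.mul_inv_cancel]
    have hpq : p * q = 1 := by
      by_contra hne
      exact hr1 (zpow_eq_one_abs (by omega) hone)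
    have hqm : q = -1 := by
      rcases Int.mul_eq_one_iff_eq_one_or_neg_one.1 hpq with ⟨_, hq1⟩ | ⟨_, hq1⟩
      · exfalso
        apply hzz
        rw [← hhz, hs, ← conj_zpow_eq, hq, hq1, _root_.zpow_one]
      · exact hq1
    have hqr : h0 * r * h0⁻¹ = r⁻¹ := by rw [hq, hqm, _root_.zpow_neg, _root_.zpow_one]
    have hh2C : h0 * h0 ∈ C := by
      rw [hmemC]
      have e1 : (h0 * h0) * z * (h0 * h0)⁻¹ = z := by
        calc (h0 * h0) * z * (h0 * h0)⁻¹ = h0 * (h0 * z * h0⁻¹) * h0⁻¹ := by group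
          _ = h0 * z⁻¹ * h0⁻¹ := by rw [hhz]
          _ = (h0 * z * h0⁻¹)⁻¹ := by group
          _ = (z⁻¹)⁻¹ := by rw [hhz]
          _ = z := _root_.inv_inv z
      rw [_root_.mul_inv_eq_iff_eq_mul] at e1
      exact e1
    obtain ⟨t, ht⟩ := hCr _ hh2C
    have e2 : h0 * (h0 * h0) * h0⁻¹ = h0 * h0 := by group
    rw [ht, ← conj_zpow_eq, hqr, _root_.inv_zpow] at e2
    have e3 : r ^ (t + t) = 1 := by
      rw [_root_.zpow_add]
      nth_rewrite 1 [← e2]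
      exact _root_.inv_mul_cancel _
    have ht0 : t = 0 := by
      by_contra hne
      exact hr1 (zpow_eq_one_abs (by omega) e3)
    have hh1 : h0 * h0 = 1 := by rw [ht, ht0, _root_.zpow_zero]
    have hone' : h0 = 1 := by
      apply zpow_eq_one_abs (k := 2) (by omega)
      rw [show (2:ℤ) = 1 + 1 from rfl, _root_.zpow_add, _root_.zpow_one, hh1]
    exact hh0 (hone' ▸ one_mem C)

end Abstract

end MyFG


/-- Every homomorphism `Φ : G_α → G_β` is of type I (`Φ(ℤ^m) ⊆ ℤ^{m'}`) or else the
projection to `F_{n'}` of its image is contained in a cyclic subgroup. -/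
theorem typeI_or_typeII {n m n' m' : ℕ} (hn : 2 ≤ n) (hm : 1 ≤ m)
    (hn' : 2 ≤ n') (hm' : 1 ≤ m')
    (α : FreeGroup (Fin n) →* Matrix.GeneralLinearGroup (Fin m) ℤ)
    (β : FreeGroup (Fin n') →* Matrix.GeneralLinearGroup (Fin m') ℤ)
    (Φ : Gsd α →* Gsd β) :
    (∀ a : Fin m → ℤ, ∃ b : Fin m' → ℤ, Φ (tA α a) = tA β b) ∨
      (∃ v : FreeGroup (Fin n'), ∀ g : Gsd α,
        SemidirectProduct.rightHom (Φ g) ∈ Subgroup.zpowers v) := by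
  by_cases htype : ∀ a : Fin m → ℤ, SemidirectProduct.rightHom (Φ (tA α a)) = 1
  · left
    intro a
    have hker : Φ (tA α a) ∈ (SemidirectProduct.rightHom :
        Gsd β →* FreeGroup (Fin n')).ker := htype a
    rw [← SemidirectProduct.range_inl_eq_ker_rightHom] at hker
    obtain ⟨b', hb'⟩ := hker
    exact ⟨Multiplicative.toAdd b', by rw [← hb']; rfl⟩
  · right
    push_neg at htype
    obtain ⟨a₀, ha₀⟩ := htype
    set f : Gsd α →* FreeGroup (Fin n') :=
      (SemidirectProduct.rightHom : Gsd β →* FreeGroup (Fin n')).comp Φ with hf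
    set K : Subgroup (FreeGroup (Fin n')) := f.range with hK
    have hwK : f (tA α a₀) ∈ K := ⟨tA α a₀, rfl⟩
    set What : ↥K := ⟨f (tA α a₀), hwK⟩ with hWhat
    have hW1 : What ≠ 1 := by
      intro he
      exact ha₀ (congrArg Subtype.val he)
    -- conjugates of tA α a₀ commute with it after applying f
    have hcomm : ∀ u : ↥K, Commute (u * What * u⁻¹) What := by
      intro u
      obtain ⟨g, hg⟩ := u.2
      have hker : g * tA α a₀ * g⁻¹ ∈ (SemidirectProduct.rightHom :
          Gsd α →* FreeGroup (Fin n)).ker := by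
        rw [MonoidHom.mem_ker, _root_.map_mul, _root_.map_mul, _root_.map_inv]
        have : SemidirectProduct.rightHom (tA α a₀) = 1 :=
          SemidirectProduct.rightHom_inl _
        rw [this, mul_one, _root_.mul_inv_cancel]
      rw [← SemidirectProduct.range_inl_eq_ker_rightHom] at hker
      obtain ⟨c, hc⟩ := hker
      have hcommG : Commute (g * tA α a₀ * g⁻¹) (tA α a₀) := by
        rw [← hc]
        show SemidirectProduct.inl c * SemidirectProduct.inl _
          = SemidirectProduct.inl _ * SemidirectProduct.inl c
        rw [← _root_.map_mul, ← _root_.map_mul, mul_comm]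
      have hmap := hcommG.map f
      apply Subtype.ext ∘ fun h => h
      show ((u * What * u⁻¹ : ↥K) : FreeGroup (Fin n')) * (What : FreeGroup (Fin n'))
        = (What : FreeGroup (Fin n')) * ((u * What * u⁻¹ : ↥K) : FreeGroup (Fin n'))
      push_cast
      rw [← hg]
      simp only [_root_.map_mul, _root_.map_inv] at hmap
      exact hmap
    obtain ⟨ghat, hgen⟩ := MyFG.master What hW1 hcomm
    refine ⟨(ghat : FreeGroup (Fin n')), fun g => ?_⟩
    have hmem : f g ∈ K := ⟨g, rfl⟩
    obtain ⟨k, hk⟩ := Subgroup.mem_zpowers_iff.1 (hgen ⟨f g, hmem⟩)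
    refine Subgroup.mem_zpowers_iff.2 ⟨k, ?_⟩
    have := congrArg Subtype.val hk
    simpa [SubgroupClass.coe_zpow, hf] using this
end

section
/- Let Φ be a type I endomorphism of G_α, with associated matrix Q, homomorphism φ and map β_Φ. Then for every integer k > 0, every u ∈ F_n and every a ∈ ℤ^m, Φ^k(u·t^a) = φ^k(u) · t^{c}, where c = a·Q^k + Σ_{i=0}^{k-1} β_Φ(φ^i(u))·Q^{k-1-i}. -/
open Matrix SemidirectProduct


lemma sum_vecMul' {m : ℕ} {ι : Type*} (s : Finset ι) (f : ι → (Fin m → ℤ))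
    (M : Matrix (Fin m) (Fin m) ℤ) :
    Matrix.vecMul (∑ i ∈ s, f i) M = ∑ i ∈ s, Matrix.vecMul (f i) M :=
  map_sum (Matrix.vecMulLinear M) f s

lemma tA_mul_tA {n m : ℕ} (α : FreeGroup (Fin n) →* Matrix.GeneralLinearGroup (Fin m) ℤ)
    (a b : Fin m → ℤ) : tA α a * tA α b = tA α (a + b) := by
  rw [tA, tA, tA, ← _root_.map_mul]
  rfl

lemma decomp {n m : ℕ} (α : FreeGroup (Fin n) →* Matrix.GeneralLinearGroup (Fin m) ℤ)
    (g : Gsd α) : g = fE α g.right * tA α (tau α g) := by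
  ext : 1
  · show g.left = (fE α g.right * tA α (tau α g)).left
    change g.left = 1 * ((rowAction m).comp α) g.right (Multiplicative.ofAdd (tau α g))
    simp [fE, tA, SemidirectProduct.mul_left, rowAction, tau, Matrix.vecMul_vecMul]
  · show g.right = (fE α g.right * tA α (tau α g)).right
    simp [fE, tA, SemidirectProduct.mul_right]

lemma phi_fE {n m : ℕ} {α : FreeGroup (Fin n) →* Matrix.GeneralLinearGroup (Fin m) ℤ}
    {Φ : Monoid.End (Gsd α)} {φ : Monoid.End (FreeGroup (Fin n))}
    (hφ : ∀ u : FreeGroup (Fin n), SemidirectProduct.rightHom (Φ (fE α u)) = φ u)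
    (u : FreeGroup (Fin n)) :
    Φ (fE α u) = fE α (φ u) * tA α (tau α (Φ (fE α u))) := by
  conv_lhs => rw [decomp α (Φ (fE α u))]
  have : (Φ (fE α u)).right = φ u := hφ u
  rw [this]

/-- Powers of a type I endomorphism:
`Φ^k(u·tᵃ) = φ^k(u) · t^(a·Q^k + ∑_{i<k} β_Φ(φ^i(u))·Q^(k-1-i))`. -/
theorem typeI_power_formula {n m : ℕ} (hn : 2 ≤ n) (hm : 1 ≤ m)
    (α : FreeGroup (Fin n) →* Matrix.GeneralLinearGroup (Fin m) ℤ)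
    (Φ : Monoid.End (Gsd α)) (Q : Matrix (Fin m) (Fin m) ℤ)
    (hQ : ∀ a : Fin m → ℤ, Φ (tA α a) = tA α (Matrix.vecMul a Q))
    (φ : Monoid.End (FreeGroup (Fin n)))
    (hφ : ∀ u : FreeGroup (Fin n), SemidirectProduct.rightHom (Φ (fE α u)) = φ u)
    (k : ℕ) (hk : 0 < k) (u : FreeGroup (Fin n)) (a : Fin m → ℤ) :
    (Φ ^ k) (fE α u * tA α a)
      = fE α ((φ ^ k) u)
          * tA α (Matrix.vecMul a (Q ^ k)
              + ∑ i ∈ Finset.range k,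
                  Matrix.vecMul (tau α (Φ (fE α ((φ ^ i) u)))) (Q ^ (k - 1 - i))) := by
  clear hk hn hm
  induction k with
  | zero =>
    simp [pow_zero]
  | succ k ih =>
    have hβ : ∀ j : ℕ, Φ (fE α ((φ ^ j) u))
        = fE α ((φ ^ (j + 1)) u) * tA α (tau α (Φ (fE α ((φ ^ j) u)))) := by
      intro j
      have hp : (φ ^ (j + 1)) u = φ ((φ ^ j) u) := by rw [pow_succ']; rfl
      rw [hp]
      exact phi_fE hφ ((φ ^ j) u)
    have hstep : (Φ ^ (k + 1)) (fE α u * tA α a) = Φ ((Φ ^ k) (fE α u * tA α a)) := by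
      rw [pow_succ']
      rfl
    rw [hstep, ih, _root_.map_mul, hQ, hβ k, mul_assoc, tA_mul_tA]
    congr 1
    rw [Matrix.add_vecMul, Matrix.vecMul_vecMul, ← pow_succ, sum_vecMul',
      Finset.sum_range_succ]
    have hsum : ∀ i ∈ Finset.range k,
        Matrix.vecMul (Matrix.vecMul (tau α (Φ (fE α ((φ ^ i) u)))) (Q ^ (k - 1 - i))) Q
          = Matrix.vecMul (tau α (Φ (fE α ((φ ^ i) u)))) (Q ^ (k + 1 - 1 - i)) := by
      intro i hi
      simp only [Finset.mem_range] at hi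
      rw [Matrix.vecMul_vecMul, ← pow_succ]
      have h2 : k - 1 - i + 1 = k + 1 - 1 - i := by omega
      rw [h2]
    rw [Finset.sum_congr rfl hsum]
    have : k + 1 - 1 - k = 0 := by omega
    rw [this, pow_zero, Matrix.vecMul_one]
    abel
end

section
/- Every type II homomorphism Φ : G_α → G_β (i.e. one with Φ(ℤ^m) ⊄ ℤ^{m'}) is neither injective nor surjective. -/
open Matrix SemidirectProduct

open FreeGroup Classical in
noncomputable def expHom {T : Type*} (s : T) : FreeGroup T →* Multiplicative ℤ :=
  FreeGroup.lift (fun t => Multiplicative.ofAdd (if t = s then 1 else 0))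

noncomputable def eS {T : Type*} (s : T) (x : FreeGroup T) : ℤ :=
  Multiplicative.toAdd (expHom s x)

lemma eS_zpow {T : Type*} (s : T) (x : FreeGroup T) (k : ℤ) : eS s (x ^ k) = k * eS s x := by
  simp [eS, _root_.map_zpow, toAdd_zpow]

lemma eS_of_self {T : Type*} (s : T) : eS s (FreeGroup.of s) = 1 := by
  simp [eS, expHom, FreeGroup.lift_apply_of]

lemma eS_of_ne {T : Type*} {s t : T} (h : t ≠ s) : eS s (FreeGroup.of t) = 0 := by
  simp [eS, expHom, FreeGroup.lift_apply_of, h]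

lemma swap_ncomm : ¬ Commute (Equiv.swap (0:Fin 3) 1) (Equiv.swap 1 2) := fun h => absurd (Equiv.congr_fun h 0) (by decide)

lemma not_commute_of_of {T : Type*} {a b : T} (hab : a ≠ b) :
    ¬ Commute (FreeGroup.of a (α := T)) (FreeGroup.of b) := by
  classical
  intro hc
  let f : T → Equiv.Perm (Fin 3) := fun t => if t = a then Equiv.swap 0 1 else
    if t = b then Equiv.swap 1 2 else 1
  have := hc.map (FreeGroup.lift f)
  simp only [FreeGroup.lift_apply_of] at this
  rw [show f a = Equiv.swap 0 1 from if_pos rfl,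
    show f b = Equiv.swap 1 2 from by simp [f, hab.symm]] at this
  exact swap_ncomm this

lemma freeGroup_subsingleton_zpow {T : Type*} [Subsingleton T] (t : T) (x : FreeGroup T) :
    ∃ k : ℤ, x = (FreeGroup.of t) ^ k := by
  induction x using FreeGroup.induction_on with
  | C1 => exact ⟨0, by simp⟩
  | of a => exact ⟨1, by rw [Subsingleton.elim a t, zpow_one]⟩
  | inv_of a ih => obtain ⟨k, hk⟩ := ih; exact ⟨-k, by rw [hk, ← _root_.zpow_neg]⟩
  | mul x y hx hy =>
      obtain ⟨k, hk⟩ := hx; obtain ⟨l, hl⟩ := hy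
      exact ⟨k + l, by rw [hk, hl, _root_.zpow_add]⟩

lemma freeGroup_isEmpty_eq_one {T : Type*} [IsEmpty T] (x : FreeGroup T) : x = 1 := by
  induction x using FreeGroup.induction_on with
  | C1 => rfl
  | of a => exact isEmptyElim a
  | inv_of a ih => rw [ih]; simp
  | mul x y hx hy => rw [hx, hy, one_mul]

/-- An abelian free group is cyclic. -/
lemma cyclic_of_isFreeGroup_comm {G : Type*} [Group G] [IsFreeGroup G]
    (hcomm : ∀ x y : G, Commute x y) : ∃ c : G, ∀ x : G, ∃ k : ℤ, x = c ^ k := by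
  classical
  set T := IsFreeGroup.Generators G
  have e : G ≃* FreeGroup T := IsFreeGroup.toFreeGroup G
  have hsub : Subsingleton T := by
    by_contra hns
    rw [not_subsingleton_iff_nontrivial] at hns
    obtain ⟨a, b, hab⟩ := hns
    exact not_commute_of_of hab (by
      simpa using (hcomm (e.symm (FreeGroup.of a)) (e.symm (FreeGroup.of b))).map e.toMonoidHom)
  by_cases hT : Nonempty T
  · obtain ⟨t⟩ := hT
    refine ⟨e.symm (FreeGroup.of t), fun x => ?_⟩
    obtain ⟨k, hk⟩ := freeGroup_subsingleton_zpow t (e x)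
    exact ⟨k, by rw [← _root_.map_zpow, ← hk, MulEquiv.symm_apply_apply]⟩
  · have : IsEmpty T := not_nonempty_iff.mp hT
    refine ⟨1, fun x => ⟨0, ?_⟩⟩
    have := freeGroup_isEmpty_eq_one (e x)
    simpa using e.injective (by simpa using this)

open Subgroup in
/-- The closure of a pairwise-commuting set is pairwise commuting. -/
lemma closure_comm {G : Type*} [Group G] {S : Set G}
    (hS : ∀ x ∈ S, ∀ y ∈ S, Commute x y) :
    ∀ x ∈ closure S, ∀ y ∈ closure S, Commute x y := by
  intro x hx y hy
  refine closure_induction₂ (p := fun a b _ _ => Commute a b)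
    (fun a b ha hb => hS a ha b hb)
    (fun a _ => (Commute.one_left a)) (fun a _ => (Commute.one_right a))
    (fun a b c _ _ _ h1 h2 => h1.mul_left h2)
    (fun a b c _ _ _ h1 h2 => h1.mul_right h2)
    (fun a b _ _ h => h.inv_left) (fun a b _ _ h => h.inv_right) hx hy

open Subgroup in
/-- An abelian subgroup of a free group is cyclic. -/
lemma subgroup_cyclic_of_comm {G : Type*} [Group G] [IsFreeGroup G] (H : Subgroup G)
    (hcomm : ∀ x ∈ H, ∀ y ∈ H, Commute x y) :
    ∃ c ∈ H, ∀ x ∈ H, ∃ k : ℤ, x = c ^ k := by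
  have h' : ∀ X Y : H, Commute X Y := by
    intro X Y
    have := hcomm X.1 X.2 Y.1 Y.2
    exact Subtype.ext (by exact this)
  obtain ⟨c, hc⟩ := cyclic_of_isFreeGroup_comm h'
  refine ⟨c.1, c.2, fun x hx => ?_⟩
  obtain ⟨k, hk⟩ := hc ⟨x, hx⟩
  exact ⟨k, by simpa [← SubgroupClass.coe_zpow] using congrArg Subtype.val hk⟩

open Subgroup in
/-- An element of a free group commuting with two distinct generators is trivial. -/
lemma core_lemma {T : Type*} {a b : T} (hab : a ≠ b) {z : FreeGroup T}
    (ha : Commute z (FreeGroup.of a)) (hb : Commute z (FreeGroup.of b)) : z = 1 := by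
  have pair : ∀ (w : FreeGroup T), Commute z w →
      ∃ d : FreeGroup T, (∃ i : ℤ, z = d ^ i) ∧ (∃ j : ℤ, w = d ^ j) := by
    intro w hw
    have hcomm : ∀ x ∈ ({z, w} : Set (FreeGroup T)), ∀ y ∈ ({z, w} : Set (FreeGroup T)),
        Commute x y := by
      rintro x (rfl | rfl) y (rfl | rfl) <;>
        first | exact Commute.refl _ | exact hw | exact hw.symm
    obtain ⟨d, _, hd⟩ := subgroup_cyclic_of_comm (closure {z, w})
      (closure_comm hcomm)
    exact ⟨d, by
      obtain ⟨i, hi⟩ := hd z (subset_closure (by simp))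
      exact ⟨i, hi⟩, by
      obtain ⟨j, hj⟩ := hd w (subset_closure (by simp))
      exact ⟨j, hj⟩⟩
  obtain ⟨d, ⟨i, hi⟩, ⟨j, hj⟩⟩ := pair _ ha
  obtain ⟨e, ⟨i', hi'⟩, ⟨j', hj'⟩⟩ := pair _ hb
  have hda : j * eS a d = 1 := by rw [← eS_zpow, ← hj, eS_of_self]
  have hj'1 : j' * eS b e = 1 := by rw [← eS_zpow, ← hj', eS_of_self]
  have hj'0 : j' ≠ 0 := by rintro rfl; simp at hj'1
  have hea : j' * eS a e = 0 := by rw [← eS_zpow, ← hj', eS_of_ne (Ne.symm hab)]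
  have hea0 : eS a e = 0 := by
    rcases mul_eq_zero.mp hea with h | h
    · exact absurd h hj'0
    · exact h
  have hza : eS a z = 0 := by rw [hi', eS_zpow, hea0, mul_zero]
  have : i * eS a d = 0 := by rw [← eS_zpow, ← hi, hza]
  have hi0 : i = 0 := by
    rcases mul_eq_zero.mp this with h | h
    · exact h
    · rw [h, mul_zero] at hda; exact absurd hda.symm one_ne_zero
  rw [hi, hi0, zpow_zero]

/-- The centralizer of a nontrivial element of a free group is abelian. -/
lemma centralizer_comm {G : Type*} [Group G] [IsFreeGroup G] {c x y : G} (hc : c ≠ 1)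
    (hx : Commute x c) (hy : Commute y c) : Commute x y := by
  classical
  set C := Subgroup.centralizer ({c} : Set G) with hC
  have hmem : ∀ {g : G}, Commute g c → g ∈ C := fun h =>
    Subgroup.mem_centralizer_singleton_iff.mpr h
  have hcC : c ∈ C := hmem (Commute.refl c)
  set T := IsFreeGroup.Generators C
  have e : C ≃* FreeGroup T := IsFreeGroup.toFreeGroup C
  set c' : FreeGroup T := e ⟨c, hcC⟩ with hc'
  have hc'1 : c' ≠ 1 := by
    intro h
    have h2 : (⟨c, hcC⟩ : C) = 1 := e.injective (by rw [_root_.map_one]; exact h)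
    exact hc (by simpa using congrArg Subtype.val h2)
  have hcentral : ∀ u : FreeGroup T, Commute c' u := by
    intro u
    have hU : Commute (⟨c, hcC⟩ : C) (e.symm u) := by
      have hvc : ((e.symm u) : G) * c = c * ((e.symm u) : G) :=
        Subgroup.mem_centralizer_singleton_iff.mp (e.symm u).2
      exact Subtype.ext (by simpa using hvc.symm)
    simpa using hU.map e.toMonoidHom
  have hsub : Subsingleton T := by
    by_contra hns
    rw [not_subsingleton_iff_nontrivial] at hns
    obtain ⟨a, b, hab⟩ := hns
    exact hc'1 (core_lemma hab (hcentral (FreeGroup.of a)) (hcentral (FreeGroup.of b)))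
  have habel : ∀ X Y : FreeGroup T, Commute X Y := by
    intro X Y
    by_cases hT : Nonempty T
    · obtain ⟨t⟩ := hT
      obtain ⟨k, hk⟩ := freeGroup_subsingleton_zpow t X
      obtain ⟨l, hl⟩ := freeGroup_subsingleton_zpow t Y
      rw [hk, hl]
      exact (Commute.refl _).zpow_zpow k l
    · have : IsEmpty T := not_nonempty_iff.mp hT
      rw [freeGroup_isEmpty_eq_one X, freeGroup_isEmpty_eq_one Y]
  have hXY : Commute (⟨x, hmem hx⟩ : C) ⟨y, hmem hy⟩ := by
    have := (habel (e ⟨x, hmem hx⟩) (e ⟨y, hmem hy⟩)).map e.symm.toMonoidHom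
    simpa using this
  exact congrArg Subtype.val hXY

/-- Free groups are torsion-free. -/
lemma freeGroup_zpow_eq_one {G : Type*} [Group G] [IsFreeGroup G] {x : G} {k : ℤ}
    (hk : k ≠ 0) (h : x ^ k = 1) : x = 1 := by
  classical
  have hfin : IsOfFinOrder x := isOfFinOrder_iff_zpow_eq_one.mpr ⟨k, hk, h⟩
  set Z := Subgroup.zpowers x
  have : Finite Z := Finite.of_equiv _ (finEquivZPowers hfin)
  set T := IsFreeGroup.Generators Z
  have e : Z ≃* FreeGroup T := IsFreeGroup.toFreeGroup Z
  have hTempty : IsEmpty T := by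
    by_contra hne
    rw [not_isEmpty_iff] at hne
    obtain ⟨t⟩ := hne
    have hinj : Function.Injective (fun n : ℤ => e.symm (FreeGroup.of t ^ n)) := by
      intro p q hpq
      have : FreeGroup.of t ^ p = FreeGroup.of t ^ q := by
        have := congrArg e hpq
        simpa using this
      have := congrArg (eS t) this
      simpa [eS_zpow, eS_of_self] using this
    exact (Finite.not_infinite ‹Finite Z›) (Infinite.of_injective _ hinj)
  have h2 : (⟨x, Subgroup.mem_zpowers x⟩ : Z) = 1 :=
    e.injective (by rw [_root_.map_one]; exact freeGroup_isEmpty_eq_one (e ⟨x, Subgroup.mem_zpowers x⟩))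
  simpa using congrArg Subtype.val h2

open Subgroup in
lemma engine {G : Type*} [Group G] [IsFreeGroup G] (R : Subgroup G) {w : G}
    (hwR : w ∈ R) (hw : w ≠ 1)
    (hconj : ∀ v ∈ R, Commute (v * w * v⁻¹) w) :
    ∀ u ∈ R, ∀ v ∈ R, Commute (u ^ 2) (v ^ 2) := by
  classical
  -- step 1 : conjugates of w by elements of R pairwise commute
  have pairwise : ∀ u ∈ R, ∀ v ∈ R, Commute (u * w * u⁻¹) (v * w * v⁻¹) := by
    intro u hu v hv
    have h0 := hconj (v⁻¹ * u) (mul_mem (inv_mem hv) hu)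
    have h1 := h0.map (MulAut.conj v).toMonoidHom
    have e1 : (MulAut.conj v) ((v⁻¹ * u) * w * (v⁻¹ * u)⁻¹) = u * w * u⁻¹ := by
      simp [MulAut.conj_apply]; group
    have e2 : (MulAut.conj v) w = v * w * v⁻¹ := by simp [MulAut.conj_apply]
    rw [MulEquiv.coe_toMonoidHom] at h1
    rw [e1, e2] at h1
    exact h1
  set S : Set G := {x | ∃ v ∈ R, x = v * w * v⁻¹} with hS
  have hScomm : ∀ x ∈ S, ∀ y ∈ S, Commute x y := by
    rintro x ⟨u, hu, rfl⟩ y ⟨v, hv, rfl⟩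
    exact pairwise u hu v hv
  obtain ⟨c, hcN, hcyc⟩ := subgroup_cyclic_of_comm (closure S) (closure_comm hScomm)
  have hwN : w ∈ closure S := subset_closure ⟨1, R.one_mem, by simp⟩
  obtain ⟨p, hp⟩ := hcyc w hwN
  have hc1 : c ≠ 1 := fun h => hw (by rw [hp, h, _root_.one_zpow])
  -- conjugation invariance of `closure S` under R
  have hNinv : ∀ v ∈ R, ∀ x ∈ closure S, v * x * v⁻¹ ∈ closure S := by
    intro v hv x hx
    induction hx using closure_induction with
    | mem y hy =>
        obtain ⟨u, hu, rfl⟩ := hy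
        refine subset_closure ⟨v * u, mul_mem hv hu, by group⟩
    | one => simpa using one_mem (closure S)
    | mul y z hy hz hy' hz' =>
        have : v * (y * z) * v⁻¹ = (v * y * v⁻¹) * (v * z * v⁻¹) := by group
        rw [this]; exact mul_mem hy' hz'
    | inv y hy hy' =>
        have : v * y⁻¹ * v⁻¹ = (v * y * v⁻¹)⁻¹ := by group
        rw [this]; exact inv_mem hy'
  -- squares of elements of R commute with c
  have hsq : ∀ v ∈ R, Commute (v ^ 2) c := by
    intro v hv
    obtain ⟨k, hk⟩ := hcyc _ (hNinv v hv c hcN)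
    obtain ⟨l, hl⟩ := hcyc _ (hNinv v⁻¹ (inv_mem hv) c hcN)
    rw [inv_inv] at hl
    have hckl : c = c ^ (l * k) := by
      have h2 : v⁻¹ * (v * c * v⁻¹) * v = c := by group
      rw [hk] at h2
      have h3 : v⁻¹ * c ^ k * v = (v⁻¹ * c * v) ^ k := by
        have := _root_.map_zpow (MulAut.conj v⁻¹) c k
        simp only [MulAut.conj_apply, inv_inv] at this
        rw [this]
      rw [h3, hl, ← _root_.zpow_mul] at h2
      exact h2.symm
    have hlk : l * k = 1 := by
      by_contra hne
      have : c ^ (l * k - 1) = 1 := by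
        rw [_root_.zpow_sub, ← hckl, zpow_one, mul_inv_cancel]
      exact hc1 (freeGroup_zpow_eq_one (by omega) this)
    have hk1 : k = 1 ∨ k = -1 := Int.isUnit_iff.mp (IsUnit.of_mul_eq_one (a := k) l (by linarith))
    rcases hk1 with rfl | rfl
    · rw [zpow_one] at hk
      have hvc : Commute v c := by
        have : v * c = c * v := by
          calc v * c = (v * c * v⁻¹) * v := by group
          _ = c * v := by rw [hk]
        exact this
      exact hvc.pow_left 2
    · have hvc : v * c * v⁻¹ = c⁻¹ := by rw [hk, _root_.zpow_neg, zpow_one]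
      have h4 : v * c⁻¹ * v⁻¹ = c := by
        have h5 := congrArg Inv.inv hvc
        simp only [_root_.mul_inv_rev, inv_inv] at h5
        rw [← mul_assoc] at h5
        exact h5
      have : v ^ 2 * c = c * v ^ 2 := by
        calc v ^ 2 * c = v * (v * c * v⁻¹) * v := by rw [pow_two]; group
        _ = v * c⁻¹ * v := by rw [hvc]
        _ = (v * c⁻¹ * v⁻¹) * v ^ 2 := by rw [pow_two]; group
        _ = c * v ^ 2 := by rw [h4]
      exact this
  intro u hu v hv
  exact centralizer_comm hc1 (hsq u hu) (hsq v hv)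

/-- Squares of distinct generators of a free group do not commute. -/
lemma nc2 {T : Type*} {a b : T} (hab : a ≠ b) :
    ¬ Commute ((FreeGroup.of a) ^ (2:ℤ)) ((FreeGroup.of b) ^ (2:ℤ)) := by
  intro hc
  set x := (FreeGroup.of a) ^ (2:ℤ) with hxdef
  set y := (FreeGroup.of b) ^ (2:ℤ) with hydef
  have hcomm : ∀ u ∈ ({x, y} : Set (FreeGroup T)), ∀ v ∈ ({x, y} : Set (FreeGroup T)),
      Commute u v := by
    rintro u (rfl | rfl) v (rfl | rfl) <;>
      first | exact Commute.refl _ | exact hc | exact hc.symm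
  obtain ⟨d, _, hd⟩ := subgroup_cyclic_of_comm (Subgroup.closure {x, y}) (closure_comm hcomm)
  obtain ⟨i, hi⟩ := hd x (Subgroup.subset_closure (by simp))
  obtain ⟨j, hj⟩ := hd y (Subgroup.subset_closure (by simp))
  have h1 : (2:ℤ) = i * eS a d := by
    rw [← eS_zpow, ← hi, hxdef, eS_zpow, eS_of_self, mul_one]
  have h2 : (0:ℤ) = j * eS a d := by
    rw [← eS_zpow, ← hj, hydef, eS_zpow, eS_of_ne (Ne.symm hab), mul_zero]
  have h3 : (2:ℤ) = j * eS b d := by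
    rw [← eS_zpow, ← hj, hydef, eS_zpow, eS_of_self, mul_one]
  have had : eS a d ≠ 0 := by rintro h; rw [h, mul_zero] at h1; exact two_ne_zero h1
  have hj0 : j = 0 := by
    rcases mul_eq_zero.mp h2.symm with h | h
    · exact h
    · exact absurd h had
  rw [hj0, zero_mul] at h3
  exact two_ne_zero h3

open scoped commutatorElement

open Equiv in
def σp : Perm (Fin 5) := swap 0 1 * swap 1 2
open Equiv in
def τp : Perm (Fin 5) := swap 2 3 * swap 3 4

set_option maxRecDepth 10000 in
lemma sigma_tau_witness : ⁅⁅σp^2, τp^2⁆, ⁅σp^2, (τp^2)^2⁆⁆ ≠ 1 := by decide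

/-- The words `[x²,y²]` and `[x²,y⁴]` do not commute in a free group, for distinct
generators `x`, `y`. -/
lemma ncpq {T : Type*} {a b : T} (hab : a ≠ b) :
    ⁅⁅(FreeGroup.of a) ^ 2, (FreeGroup.of b) ^ 2⁆,
      ⁅(FreeGroup.of a) ^ 2, ((FreeGroup.of b) ^ 2) ^ 2⁆⁆ ≠ (1 : FreeGroup T) := by
  classical
  intro hone
  let f : T → Equiv.Perm (Fin 5) := fun t => if t = a then σp else if t = b then τp else 1
  have hfa : f a = σp := if_pos rfl
  have hfb : f b = τp := by simp [f, hab.symm]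
  have := congrArg (FreeGroup.lift f) hone
  simp only [map_commutatorElement, _root_.map_pow, FreeGroup.lift_apply_of, _root_.map_one, hfa, hfb] at this
  exact sigma_tau_witness this

open SemidirectProduct in
/-- In a semidirect product with abelian kernel, two elements of the kernel commute. -/
lemma sdcomm {N G : Type*} [CommGroup N] [Group G] {φ : G →* MulAut N}
    {x y : N ⋊[φ] G} (hx : x.right = 1) (hy : y.right = 1) : Commute x y := by
  have hx' : inl x.left = x := by
    conv_rhs => rw [← inl_left_mul_inr_right x]
    rw [hx, _root_.map_one, mul_one]
  have hy' : inl y.left = y := by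
    conv_rhs => rw [← inl_left_mul_inr_right y]
    rw [hy, _root_.map_one, mul_one]
  rw [← hx', ← hy']
  show inl x.left * inl y.left = inl y.left * inl x.left
  rw [← _root_.map_mul, ← _root_.map_mul, mul_comm]

lemma nc2' {T : Type*} {a b : T} (hab : a ≠ b) :
    ¬ Commute ((FreeGroup.of a) ^ 2) ((FreeGroup.of b) ^ 2) := by
  intro hc
  apply nc2 hab
  rw [show (2:ℤ) = ((2:ℕ):ℤ) from rfl, zpow_natCast, zpow_natCast]
  exact hc

/-- Type II homomorphisms are neither injective nor surjective. -/
theorem typeII_not_inj_not_surj {n m n' m' : ℕ} (hn : 2 ≤ n) (hm : 1 ≤ m)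
    (hn' : 2 ≤ n') (hm' : 1 ≤ m')
    (α : FreeGroup (Fin n) →* Matrix.GeneralLinearGroup (Fin m) ℤ)
    (β : FreeGroup (Fin n') →* Matrix.GeneralLinearGroup (Fin m') ℤ)
    (Φ : Gsd α →* Gsd β)
    (hII : ¬ ∀ a : Fin m → ℤ, ∃ b : Fin m' → ℤ, Φ (tA α a) = tA β b) :
    ¬ Function.Injective Φ ∧ ¬ Function.Surjective Φ := by
  classical
  obtain ⟨a₀, ha₀⟩ := not_forall.mp hII
  set t₀ : Gsd α := tA α a₀ with ht₀
  set h : Gsd α →* FreeGroup (Fin n') :=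
    (SemidirectProduct.rightHom : Gsd β →* FreeGroup (Fin n')).comp Φ with hh
  set w : FreeGroup (Fin n') := h t₀ with hwdef
  have hright : ∀ g : Gsd α, h g = (Φ g).right := fun g => rfl
  have hw : w ≠ 1 := by
    intro hw1
    apply ha₀
    refine ⟨Multiplicative.toAdd ((Φ t₀).left), ?_⟩
    have hr : (Φ t₀).right = 1 := by rw [← hright, ← hwdef, hw1]
    calc Φ t₀ = inl (Φ t₀).left * inr (Φ t₀).right := (inl_left_mul_inr_right _).symm
    _ = inl (Φ t₀).left := by rw [hr, _root_.map_one, mul_one]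
    _ = tA β (Multiplicative.toAdd ((Φ t₀).left)) := by
        simp [tA]
  have ht₀r : t₀.right = 1 := by rw [ht₀]; rfl
  have hconj : ∀ g : Gsd α, Commute (h g * w * (h g)⁻¹) w := by
    intro g
    have hcm : Commute (g * t₀ * g⁻¹) t₀ := by
      refine sdcomm ?_ ht₀r
      rw [mul_right, mul_right, inv_right, ht₀r, mul_one, mul_inv_cancel]
    have := hcm.map h
    simpa only [_root_.map_mul, map_inv, ← hwdef] using this
  constructor
  · -- not injective
    intro hinj
    have hconjR : ∀ v ∈ h.range, Commute (v * w * v⁻¹) w := by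
      rintro v ⟨g, rfl⟩
      exact hconj g
    have hsq := engine h.range ⟨t₀, rfl⟩ hw hconjR
    have h01 : (⟨0, by omega⟩ : Fin n) ≠ ⟨1, by omega⟩ := by
      simp [Fin.ext_iff]
    set x₁ : FreeGroup (Fin n) := FreeGroup.of ⟨0, by omega⟩ with hx₁
    set x₂ : FreeGroup (Fin n) := FreeGroup.of ⟨1, by omega⟩ with hx₂
    set g₁ : Gsd α := inr x₁ with hg₁
    set g₂ : Gsd α := inr x₂ with hg₂
    set g₃ : Gsd α := inr (x₂ ^ 2) with hg₃
    set P : Gsd α := ⁅g₁ ^ 2, g₂ ^ 2⁆ with hP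
    set Q : Gsd α := ⁅g₁ ^ 2, g₃ ^ 2⁆ with hQ
    have hPr : (Φ P).right = 1 := by
      rw [← hright, hP, map_commutatorElement, map_pow, map_pow]
      exact commutatorElement_eq_one_iff_commute.mpr
        (hsq _ ⟨g₁, rfl⟩ _ ⟨g₂, rfl⟩)
    have hQr : (Φ Q).right = 1 := by
      rw [← hright, hQ, map_commutatorElement, map_pow, map_pow]
      exact commutatorElement_eq_one_iff_commute.mpr
        (hsq _ ⟨g₁, rfl⟩ _ ⟨g₃, rfl⟩)
    have hPQ : Φ ⁅P, Q⁆ = Φ 1 := by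
      rw [map_commutatorElement, _root_.map_one]
      exact commutatorElement_eq_one_iff_commute.mpr (sdcomm hPr hQr)
    have hPQ1 : ⁅P, Q⁆ = (1 : Gsd α) := hinj hPQ
    have hinrPQ : ⁅P, Q⁆ = inr ⁅⁅x₁ ^ 2, x₂ ^ 2⁆, ⁅x₁ ^ 2, (x₂ ^ 2) ^ 2⁆⁆ := by
      rw [hP, hQ, hg₁, hg₂, hg₃]
      simp only [← map_pow, ← map_commutatorElement]
    rw [hinrPQ] at hPQ1
    have : ⁅⁅x₁ ^ 2, x₂ ^ 2⁆, ⁅x₁ ^ 2, (x₂ ^ 2) ^ 2⁆⁆ = (1 : FreeGroup (Fin n)) :=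
      inr_injective (by rw [hPQ1, _root_.map_one])
    exact ncpq h01 this
  · -- not surjective
    intro hsurj
    have hsurj' : Function.Surjective h := by
      intro v
      obtain ⟨g, hg⟩ := hsurj (inr v)
      exact ⟨g, by rw [hright, hg, right_inr]⟩
    have hconjT : ∀ v ∈ (⊤ : Subgroup (FreeGroup (Fin n'))), Commute (v * w * v⁻¹) w := by
      intro v _
      obtain ⟨g, rfl⟩ := hsurj' v
      exact hconj g
    have hsq := engine ⊤ (Subgroup.mem_top w) hw hconjT
    have h01 : (⟨0, by omega⟩ : Fin n') ≠ ⟨1, by omega⟩ := by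
      simp [Fin.ext_iff]
    exact nc2' h01
      (hsq _ (Subgroup.mem_top _) _ (Subgroup.mem_top _))
end

section
/- A group homomorphism Φ : G_α → G_β is injective if and only if Φ is of type I (Φ(ℤ^m) ⊆ ℤ^{m'}) and both the restriction Φ|_{ℤ^m} : ℤ^m → ℤ^{m'} and the homomorphism π'∘Φ|_{F_n} : F_n → F_{n'} are injective. -/
open Matrix SemidirectProduct


namespace FGAux
open FreeGroup

variable {α : Type*} [DecidableEq α]

lemma reduce_tail {x : α × Bool} {L : List (α × Bool)}
    (h : reduce (x :: L) = x :: L) : reduce L = L := by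
  rw [reduce.cons] at h
  rcases hL : reduce L with _ | ⟨hd, tl⟩
  · rw [hL] at h
    injection h
  · rw [hL] at h
    simp only at h
    split_ifs at h with hc
    · exfalso
      have hlen : (reduce L).length ≤ L.length := Red.length_le reduce.red
      rw [hL] at hlen
      have := congrArg List.length h
      simp at this hlen
      omega
    · injection h

lemma strip_head {c : FreeGroup α} {a : α} {t : Bool} {L : List (α × Bool)}
    (h : c.toWord = (a, t) :: L) :
    ∃ d : FreeGroup α, c = (cond t (of a) (of a)⁻¹) * d ∧ d.toWord = L := by
  have hred : reduce ((a, t) :: L) = (a, t) :: L := by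
    rw [← h]; exact reduce_toWord c
  have hL : reduce L = L := reduce_tail hred
  refine ⟨mk L, ?_, by rw [toWord_mk, hL]⟩
  have hc : c = mk ((a, t) :: L) := by rw [← h, mk_toWord]
  cases t
  · -- (of a)⁻¹ = mk [(a, false)]
    have : (of a)⁻¹ = mk [(a, false)] := by
      rw [show (of a) = mk [(a, true)] from rfl, inv_mk]
      rfl
    rw [hc, this]
    simp [mul_mk]
  · have : (of a) = mk [(a, true)] := rfl
    rw [hc, this]
    simp [mul_mk]


theorem pow_of_commute_of (a : α) (c : FreeGroup α) (hc : Commute c (of a)) :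
    ∃ k : ℤ, c = of a ^ k := by
  suffices H : ∀ (n : ℕ) (c : FreeGroup α), c.toWord.length ≤ n → Commute c (of a) →
      ∃ k : ℤ, c = of a ^ k from H c.toWord.length c le_rfl hc
  clear hc c
  intro n
  induction n with
  | zero =>
    intro c hl _
    refine ⟨0, ?_⟩
    rw [_root_.zpow_zero]
    exact toWord_eq_nil_iff.mp (List.eq_nil_of_length_eq_zero (Nat.le_zero.mp hl))
  | succ n ih =>
    intro c hl hc
    rcases hw : c.toWord with _ | ⟨⟨b, t⟩, L⟩
    · exact ⟨0, by rw [_root_.zpow_zero]; exact toWord_eq_nil_iff.mp hw⟩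
    by_cases hba : b = a
    · subst hba
      obtain ⟨d, hd, hdw⟩ := strip_head hw
      have hεc : Commute (cond t (of b) (of b)⁻¹) (of b) := by
        cases t
        · exact (Commute.refl (of b)).inv_left
        · exact Commute.refl (of b)
      have hcd : Commute d (of b) := by
        have hdc : d = (cond t (of b) (of b)⁻¹)⁻¹ * c := by
          rw [hd, ← mul_assoc, inv_mul_cancel, one_mul]
        rw [hdc]
        exact Commute.mul_left hεc.inv_left hc
      have hld : d.toWord.length ≤ n := by
        rw [hdw]
        have := congrArg List.length hw
        simp only [List.length_cons] at this
        omega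
      obtain ⟨k, hk⟩ := ih d hld hcd
      refine ⟨(cond t 1 (-1)) + k, ?_⟩
      rw [hd, hk, _root_.zpow_add]
      cases t
      · simp
      · simp
    · -- head letter is not a; look at c⁻¹
      rcases hw' : (c⁻¹).toWord with _ | ⟨⟨b', t'⟩, L'⟩
      · refine ⟨0, ?_⟩
        rw [_root_.zpow_zero]
        have : c⁻¹ = 1 := toWord_eq_nil_iff.mp hw'
        rwa [inv_eq_one] at this
      by_cases hba' : b' = a
      · subst hba'
        obtain ⟨d, hd, hdw⟩ := strip_head hw'
        have hεc : Commute (cond t' (of b') (of b')⁻¹) (of b') := by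
          cases t'
          · exact (Commute.refl (of b')).inv_left
          · exact Commute.refl (of b')
        have hcd : Commute d (of b') := by
          have hdc : d = (cond t' (of b') (of b')⁻¹)⁻¹ * c⁻¹ := by
            rw [hd, ← mul_assoc, inv_mul_cancel, one_mul]
          rw [hdc]
          exact Commute.mul_left hεc.inv_left hc.inv_left
        have hld : d.toWord.length ≤ n := by
          rw [hdw]
          have h1 := congrArg List.length hw'
          have h2 : (c⁻¹).toWord.length = c.toWord.length := by
            rw [toWord_inv, invRev_length]
          simp only [List.length_cons] at h1
          omega
        obtain ⟨k, hk⟩ := ih d hld hcd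
        refine ⟨-((cond t' 1 (-1)) + k), ?_⟩
        have : c⁻¹ = of b' ^ ((cond t' 1 (-1)) + k) := by
          rw [hd, hk, _root_.zpow_add]
          cases t'
          · simp
          · simp
        rw [← inv_inv c, this, ← _root_.zpow_neg]
      · -- contradiction: compare reduced words of (of a) * c and c * (of a)
        exfalso
        have hredc : reduce c.toWord = c.toWord := reduce_toWord c
        have h1 : (of a * c).toWord = (a, true) :: c.toWord := by
          conv_lhs => rw [← mk_toWord (x := c)]
          rw [show (of a) = mk [(a, true)] from rfl, mul_mk]
          show reduce ((a, true) :: c.toWord) = _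
          rw [reduce.cons, hredc, hw]
          simp only
          rw [if_neg (by simp only [not_and]; intro h; exact absurd h.symm hba)]
        have h2 : (c * of a).toWord = c.toWord ++ [(a, true)] := by
          conv_lhs => rw [← mk_toWord (x := c)]
          rw [show (of a) = mk [(a, true)] from rfl, mul_mk]
          show reduce (c.toWord ++ [(a, true)]) = _
          have hinv : invRev (c.toWord ++ [(a, true)]) = (a, false) :: invRev c.toWord := by
            simp [invRev]
          have hredinv : reduce (invRev (c.toWord ++ [(a, true)])) =
              invRev (c.toWord ++ [(a, true)]) := by
            rw [hinv]
            have hcw : invRev c.toWord = (c⁻¹).toWord := (toWord_inv c).symm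
            rw [hcw, reduce.cons, reduce_toWord, hw']
            simp only
            rw [if_neg (by simp only [not_and]; intro h; exact absurd h.symm hba')]
          rw [reduce_invRev] at hredinv
          exact invRev_injective hredinv
        have := hc.eq
        have heq : c.toWord ++ [(a, true)] = (a, true) :: c.toWord := by
          rw [← h1, ← h2, this]
        rw [hw] at heq
        simp only [List.cons_append] at heq
        injection heq with hhd _
        exact hba (congrArg Prod.fst hhd)


/-- Exponent-sum homomorphism counting signed occurrences of a generator. -/
def expCount (a : α) : FreeGroup α →* Multiplicative ℤ :=
  FreeGroup.lift fun s => Multiplicative.ofAdd (if s = a then 1 else 0)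

lemma expCount_of_self (a : α) : expCount a (of a) = Multiplicative.ofAdd 1 := by
  simp [expCount]

lemma expCount_of_ne {a b : α} (h : b ≠ a) : expCount a (of b) = 1 := by
  simp [expCount, h]

lemma zpow_of_eq_one {a : α} {k : ℤ} (h : (of a : FreeGroup α) ^ k = 1) : k = 0 := by
  have h2 := congrArg (expCount a) h
  rw [_root_.map_zpow, expCount_of_self, MonoidHom.map_one] at h2
  have h3 : Multiplicative.toAdd ((Multiplicative.ofAdd (1:ℤ)) ^ k) = 0 := by rw [h2]; rfl
  rw [toAdd_zpow] at h3
  simpa using h3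

lemma not_commute_of_of {a b : α} (h : a ≠ b) :
    ¬ Commute (of a : FreeGroup α) (of b) := by
  intro hcom
  obtain ⟨k, hk⟩ := pow_of_commute_of b (of a) hcom
  have h2 := congrArg (expCount a) hk
  rw [expCount_of_self, _root_.map_zpow, expCount_of_ne (Ne.symm h)] at h2
  rw [_root_.one_zpow] at h2
  simpa using h2


end FGAux

namespace FGAux
open FreeGroup

variable {α : Type*}

lemma eq_one_of_isEmpty [IsEmpty α] (x : FreeGroup α) : x = 1 := by
  induction x using FreeGroup.induction_on with
  | C1 => rfl
  | of s => exact isEmptyElim s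
  | inv_of s _ => exact isEmptyElim s
  | mul x y hx hy => rw [hx, hy, one_mul]

lemma exists_zpow_of_subsingleton [Subsingleton α] (s₀ : α) (x : FreeGroup α) :
    ∃ k : ℤ, x = of s₀ ^ k := by
  induction x using FreeGroup.induction_on with
  | C1 => exact ⟨0, by rw [_root_.zpow_zero]⟩
  | of s => exact ⟨1, by rw [_root_.zpow_one, Subsingleton.elim s₀ s]⟩
  | inv_of s _ => exact ⟨-1, by rw [_root_.zpow_neg, _root_.zpow_one, Subsingleton.elim s₀ s]⟩
  | mul x y hx hy =>
    obtain ⟨k, hk⟩ := hx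
    obtain ⟨l, hl⟩ := hy
    exact ⟨k + l, by rw [hk, hl, _root_.zpow_add]⟩

theorem freeGroup_subsingleton_of_center {c : FreeGroup α} (hc1 : c ≠ 1)
    (hc : ∀ x : FreeGroup α, Commute c x) (a b : α) : a = b := by
  classical
  by_contra hab
  obtain ⟨k, hk⟩ := pow_of_commute_of a c (hc (of a))
  obtain ⟨l, hl⟩ := pow_of_commute_of b c (hc (of b))
  apply hc1
  have h2 : expCount a c = 1 := by
    rw [hl, _root_.map_zpow, expCount_of_ne (Ne.symm hab), _root_.one_zpow]
  rw [hk, _root_.map_zpow, expCount_of_self] at h2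
  have h3 : Multiplicative.toAdd ((Multiplicative.ofAdd (1:ℤ)) ^ k) = 0 := by rw [h2]; rfl
  rw [toAdd_zpow] at h3
  have h4 : k = 0 := by simpa using h3
  rw [hk, h4, _root_.zpow_zero]

theorem isFreeGroup_comm_of_center (H : Type*) [Group H] [IsFreeGroup H] (c : H)
    (hc1 : c ≠ 1) (hc : ∀ h : H, Commute c h) (x y : H) : Commute x y := by
  classical
  let e : H ≃* FreeGroup (IsFreeGroup.Generators H) := IsFreeGroup.toFreeGroup (G := H)
  have hec1 : e c ≠ 1 := by
    intro h1
    apply hc1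
    have := congrArg e.symm h1
    rwa [e.symm_apply_apply, _root_.map_one] at this
  have hecent : ∀ x : FreeGroup (IsFreeGroup.Generators H), Commute (e c) x := by
    intro x
    have h2 := (hc (e.symm x)).map e.toMonoidHom
    simpa using h2
  have hsub : ∀ a b : IsFreeGroup.Generators H, a = b :=
    freeGroup_subsingleton_of_center hec1 hecent
  haveI : Subsingleton (IsFreeGroup.Generators H) := ⟨hsub⟩
  have hcomm : Commute (e x) (e y) := by
    rcases isEmpty_or_nonempty (IsFreeGroup.Generators H) with hS | ⟨⟨s₀⟩⟩
    · rw [eq_one_of_isEmpty (e x)]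
      exact Commute.one_left _
    · obtain ⟨k, hk⟩ := exists_zpow_of_subsingleton s₀ (e x)
      obtain ⟨l, hl⟩ := exists_zpow_of_subsingleton s₀ (e y)
      rw [hk, hl]
      exact (Commute.refl (of s₀)).zpow_zpow k l
  have h3 := hcomm.map e.symm.toMonoidHom
  simpa using h3

theorem exists_gen_of_comm (H : Type*) [Group H] [IsFreeGroup H]
    (hcomm : ∀ x y : H, Commute x y) :
    ∃ z : H, (∀ h : H, ∃ k : ℤ, h = z ^ k) ∧
      (z = 1 ∨ ∀ m : ℤ, z ^ m = 1 → m = 0) := by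
  classical
  let e : H ≃* FreeGroup (IsFreeGroup.Generators H) := IsFreeGroup.toFreeGroup (G := H)
  have hsub : ∀ a b : IsFreeGroup.Generators H, a = b := by
    intro a b
    by_contra hab
    refine not_commute_of_of hab ?_
    have h2 := (hcomm (e.symm (of a)) (e.symm (of b))).map e.toMonoidHom
    simpa using h2
  haveI : Subsingleton (IsFreeGroup.Generators H) := ⟨hsub⟩
  rcases isEmpty_or_nonempty (IsFreeGroup.Generators H) with hS | ⟨⟨s₀⟩⟩
  · refine ⟨1, fun h => ⟨0, ?_⟩, Or.inl rfl⟩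
    rw [_root_.zpow_zero]
    have h1 : e h = 1 := eq_one_of_isEmpty _
    have := congrArg e.symm h1
    rwa [e.symm_apply_apply, _root_.map_one] at this
  · refine ⟨e.symm (of s₀), fun h => ?_, Or.inr fun m hm => ?_⟩
    · obtain ⟨k, hk⟩ := exists_zpow_of_subsingleton s₀ (e h)
      refine ⟨k, ?_⟩
      have := congrArg e.symm hk
      rwa [e.symm_apply_apply, _root_.map_zpow] at this
    · have h1 : (of s₀ : FreeGroup (IsFreeGroup.Generators H)) ^ m = 1 := by
        have := congrArg e hm
        rwa [_root_.map_zpow, e.apply_symm_apply, _root_.map_one] at this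
      exact zpow_of_eq_one h1

theorem freeGroup_commute_trans {a x y : FreeGroup α} (ha : a ≠ 1)
    (hax : Commute a x) (hay : Commute a y) : Commute x y := by
  classical
  set K : Subgroup (FreeGroup α) := Subgroup.closure {x, y, a} with hK
  have hxK : x ∈ K := Subgroup.subset_closure (by simp)
  have hyK : y ∈ K := Subgroup.subset_closure (by simp)
  have haK : a ∈ K := Subgroup.subset_closure (by simp)
  have hcent : ∀ g ∈ K, Commute a g := by
    have hle : K ≤ Subgroup.centralizer {a} := by
      rw [hK]
      apply (Subgroup.closure_le _).mpr
      intro g hg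
      rw [SetLike.mem_coe, Subgroup.mem_centralizer_iff]
      intro h hh
      rw [Set.mem_singleton_iff] at hh
      subst hh
      rcases hg with hg | hg | hg
      · rw [hg]; exact hax.eq
      · rw [hg]; exact hay.eq
      · rw [Set.mem_singleton_iff] at hg; rw [hg]
    intro g hg
    have h1 := hle hg
    rw [Subgroup.mem_centralizer_iff] at h1
    exact h1 a (Set.mem_singleton a)
  have hfc : ∀ u v : K, Commute u v := by
    intro u v
    refine isFreeGroup_comm_of_center K ⟨a, haK⟩ ?_ ?_ u v
    · intro h1
      exact ha (congrArg Subtype.val h1)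
    · rintro ⟨g, hg⟩
      exact Subtype.ext (hcent g hg).eq
  have h2 := hfc ⟨x, hxK⟩ ⟨y, hyK⟩
  exact congrArg Subtype.val h2.eq

theorem exists_cyclic_centralizer (w : FreeGroup α) (hw : w ≠ 1) :
    ∃ z : FreeGroup α, z ≠ 1 ∧ (∀ m : ℤ, z ^ m = 1 → m = 0) ∧
      ∀ c : FreeGroup α, Commute w c → ∃ k : ℤ, c = z ^ k := by
  classical
  set C : Subgroup (FreeGroup α) := Subgroup.centralizer {w} with hC
  have hmem : ∀ c, Commute w c → c ∈ C := by
    intro c h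
    rw [hC, Subgroup.mem_centralizer_iff]
    intro g hg
    rw [Set.mem_singleton_iff] at hg
    subst hg
    exact h.eq
  have hwC : w ∈ C := hmem w (Commute.refl w)
  have hcomm : ∀ u v : C, Commute u v := by
    rintro ⟨u, hu⟩ ⟨v, hv⟩
    rw [hC, Subgroup.mem_centralizer_iff] at hu hv
    have hwu : Commute w u := hu w (Set.mem_singleton w)
    have hwv : Commute w v := hv w (Set.mem_singleton w)
    exact Subtype.ext (freeGroup_commute_trans hw hwu hwv).eq
  obtain ⟨zc, hzgen, hzalt⟩ := exists_gen_of_comm C hcomm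
  rcases hzalt with hz1 | hztf
  · exfalso
    obtain ⟨k, hk⟩ := hzgen ⟨w, hwC⟩
    apply hw
    have := congrArg Subtype.val hk
    rw [hz1] at this
    simpa using this
  · refine ⟨(zc : FreeGroup α), ?_, ?_, ?_⟩
    · intro h1
      have h2 : zc ^ (1 : ℤ) = 1 := by
        rw [_root_.zpow_one]
        exact Subtype.ext h1
      exact one_ne_zero (hztf 1 h2)
    · intro m hm
      refine hztf m (Subtype.ext ?_)
      simp only [SubgroupClass.coe_zpow, OneMemClass.coe_one]
      exact hm
    · intro c hc
      obtain ⟨k, hk⟩ := hzgen ⟨c, hmem c hc⟩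
      refine ⟨k, ?_⟩
      have := congrArg Subtype.val hk
      simpa using this

theorem conj_zpow' (u v : FreeGroup α) (m : ℤ) :
    u⁻¹ * v ^ m * u = (u⁻¹ * v * u) ^ m := by
  calc u⁻¹ * v ^ m * u = (MulAut.conj u⁻¹) (v ^ m) := by
        rw [MulAut.conj_apply, inv_inv]
  _ = ((MulAut.conj u⁻¹) v) ^ m := _root_.map_zpow _ v m
  _ = (u⁻¹ * v * u) ^ m := by rw [MulAut.conj_apply, inv_inv]

theorem master (P : Set (FreeGroup α)) (Q : Subgroup (FreeGroup α))
    (hP : ∀ p ∈ P, ∀ p' ∈ P, Commute p p')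
    (hconj : ∀ q ∈ Q, ∀ p ∈ P, q * p * q⁻¹ ∈ P)
    {w : FreeGroup α} (hwP : w ∈ P) (hw : w ≠ 1)
    {g h : FreeGroup α} (hg : g ∈ Q) (hh : h ∈ Q) :
    Commute (g ^ 2) (h ^ 2) := by
  obtain ⟨z, hz1, hztf, hzgen⟩ := exists_cyclic_centralizer w hw
  have key : ∀ q ∈ Q, ∃ j : ℤ, q⁻¹ * z * q = z ^ j := by
    intro q hq
    have h1 : q * w * q⁻¹ ∈ P := hconj q hq w hwP
    have h2 : Commute w (q * w * q⁻¹) := hP w hwP _ h1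
    obtain ⟨k₁, hk₁⟩ := hzgen _ h2
    have h3 : Commute (q * w * q⁻¹) z := by
      rw [hk₁]
      exact (Commute.refl z).zpow_left k₁
    have h4 := h3.map (MulAut.conj q⁻¹).toMonoidHom
    have e1 : (MulAut.conj q⁻¹).toMonoidHom (q * w * q⁻¹) = w := by
      simp only [MulAut.conj_apply, MulEquiv.coe_toMonoidHom, MulAut.conj_apply]
      group
    have e2 : (MulAut.conj q⁻¹).toMonoidHom z = q⁻¹ * z * q := by
      simp only [MulEquiv.coe_toMonoidHom, MulAut.conj_apply]
      group
    rw [e1, e2] at h4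
    exact hzgen _ h4
  have key2 : ∀ q ∈ Q, Commute z (q ^ 2) := by
    intro q hq
    obtain ⟨j, hj⟩ := key q hq
    obtain ⟨i, hi⟩ := key q⁻¹ (inv_mem hq)
    rw [inv_inv] at hi
    have h5 : z = z ^ (i * j) := by
      calc z = q⁻¹ * (q * z * q⁻¹) * q := by group
      _ = q⁻¹ * z ^ i * q := by rw [← hi]
      _ = (q⁻¹ * z * q) ^ i := conj_zpow' q z i
      _ = (z ^ j) ^ i := by rw [hj]
      _ = z ^ (i * j) := by rw [← _root_.zpow_mul, mul_comm]
    have h6 : z ^ (i * j - 1) = 1 := by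
      rw [_root_.zpow_sub, _root_.zpow_one, ← h5, _root_.mul_inv_cancel]
    have h7 : i * j = 1 := by
      have := hztf _ h6
      omega
    have hj1 : j = 1 ∨ j = -1 := by
      rcases Int.isUnit_iff.mp (IsUnit.of_mul_eq_one (a := j) i (by rw [mul_comm]; exact h7)) with h | h
      · exact Or.inl h
      · exact Or.inr h
    have h8 : (q ^ 2)⁻¹ * z * q ^ 2 = z := by
      have hq2 : (q ^ 2)⁻¹ * z * q ^ 2 = q⁻¹ * (q⁻¹ * z * q) * q := by
        rw [_root_.pow_two, _root_.mul_inv_rev]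
        simp only [mul_assoc]
      rw [hq2, hj, conj_zpow', hj, ← _root_.zpow_mul]
      rcases hj1 with hcase | hcase <;> rw [hcase] <;> norm_num
    have h9 : z * q ^ 2 = q ^ 2 * z := by
      calc z * q ^ 2 = q ^ 2 * ((q ^ 2)⁻¹ * z * q ^ 2) := by group
      _ = q ^ 2 * z := by rw [h8]
    exact h9
  exact freeGroup_commute_trans hz1 (key2 g hg) (key2 h hh)

theorem not_commute_sq {a b : α} (hab : a ≠ b) :
    ¬ Commute ((of a : FreeGroup α) ^ 2) (of b ^ 2) := by
  haveI := Classical.decEq α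
  intro hcom
  set p1 : Equiv.Perm (Fin 5) := Equiv.swap 0 1 * Equiv.swap 1 2 with hp1
  set p2 : Equiv.Perm (Fin 5) := Equiv.swap 2 3 * Equiv.swap 3 4 with hp2
  set f : FreeGroup α →* Equiv.Perm (Fin 5) :=
    FreeGroup.lift (fun s => if s = a then p1 else p2) with hf
  have h1 : f (of a) = p1 := by rw [hf, FreeGroup.lift_apply_of, if_pos rfl]
  have h2 : f (of b) = p2 := by rw [hf, FreeGroup.lift_apply_of, if_neg (Ne.symm hab)]
  have h3 := hcom.map f
  rw [_root_.map_pow, _root_.map_pow, h1, h2] at h3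
  have h4 : p1 ^ 2 * p2 ^ 2 ≠ p2 ^ 2 * p1 ^ 2 := by
    rw [hp1, hp2]
    decide
  exact h4 h3.eq

end FGAux


/-- `Φ : G_α → G_β` is injective iff it is of type I with both `Φ|_{ℤ^m}` and
`π'∘Φ|_{F_n}` injective. -/
theorem injective_iff {n m n' m' : ℕ} (hn : 2 ≤ n) (hm : 1 ≤ m)
    (hn' : 2 ≤ n') (hm' : 1 ≤ m')
    (α : FreeGroup (Fin n) →* Matrix.GeneralLinearGroup (Fin m) ℤ)
    (β : FreeGroup (Fin n') →* Matrix.GeneralLinearGroup (Fin m') ℤ)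
    (Φ : Gsd α →* Gsd β) :
    Function.Injective Φ ↔
      ((∀ a : Fin m → ℤ, ∃ b : Fin m' → ℤ, Φ (tA α a) = tA β b) ∧
        Function.Injective (fun a : Fin m → ℤ => Φ (tA α a)) ∧
        Function.Injective
          (fun u : FreeGroup (Fin n) => SemidirectProduct.rightHom (Φ (fE α u)))) := by
  constructor
  · intro hinj
    set ψ : Gsd α →* FreeGroup (Fin n') := SemidirectProduct.rightHom.comp Φ with hψ
    set θ : FreeGroup (Fin n) →* FreeGroup (Fin n') :=
      ψ.comp SemidirectProduct.inr with hθ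
    set i₀ : Fin n := ⟨0, by omega⟩ with hi₀
    set i₁ : Fin n := ⟨1, by omega⟩ with hi₁
    have hne : i₀ ≠ i₁ := by
      intro hcontr
      have := congrArg Fin.val hcontr
      simp [hi₀, hi₁] at this
    have hker3 : ∀ u : FreeGroup (Fin n), θ u = 1 → u = 1 := by
      intro u hu
      by_contra hu1
      have hmemP : ∀ v : FreeGroup (Fin n), θ v = 1 →
          ∃ x : FA m', Φ (SemidirectProduct.inr v) = SemidirectProduct.inl x := by
        intro v hv
        have hv2 : Φ (SemidirectProduct.inr v) ∈
            (SemidirectProduct.inl : FA m' →* Gsd β).range := by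
          rw [SemidirectProduct.range_inl_eq_ker_rightHom]
          exact hv
        obtain ⟨x, hx⟩ := hv2
        exact ⟨x, hx.symm⟩
      have hP : ∀ p ∈ {v : FreeGroup (Fin n) | θ v = 1},
          ∀ p' ∈ {v : FreeGroup (Fin n) | θ v = 1}, Commute p p' := by
        intro p hp p' hp'
        obtain ⟨x, hx⟩ := hmemP p hp
        obtain ⟨x', hx'⟩ := hmemP p' hp'
        have hc : Φ (SemidirectProduct.inr p) * Φ (SemidirectProduct.inr p')
            = Φ (SemidirectProduct.inr p') * Φ (SemidirectProduct.inr p) := by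
          rw [hx, hx', ← _root_.map_mul, ← _root_.map_mul, mul_comm]
        have h4 : Φ (SemidirectProduct.inr (p * p')) = Φ (SemidirectProduct.inr (p' * p)) := by
          simp only [_root_.map_mul]
          exact hc
        exact SemidirectProduct.inr_injective (hinj h4)
      have hconjP : ∀ q ∈ (⊤ : Subgroup (FreeGroup (Fin n))),
          ∀ p ∈ {v : FreeGroup (Fin n) | θ v = 1},
          q * p * q⁻¹ ∈ {v : FreeGroup (Fin n) | θ v = 1} := by
        intro q _ p hp
        have hp' : θ p = 1 := hp
        show θ (q * p * q⁻¹) = 1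
        rw [_root_.map_mul, _root_.map_mul, _root_.map_inv, hp', mul_one, _root_.mul_inv_cancel]
      have hcomm2 := FGAux.master {v : FreeGroup (Fin n) | θ v = 1} ⊤ hP hconjP
        (show u ∈ {v : FreeGroup (Fin n) | θ v = 1} from hu) hu1
        (Subgroup.mem_top (FreeGroup.of i₀)) (Subgroup.mem_top (FreeGroup.of i₁))
      exact FGAux.not_commute_sq hne hcomm2
    have hinj3 : Function.Injective θ := (injective_iff_map_eq_one θ).mpr hker3
    have hinj2 : Function.Injective (fun a : Fin m → ℤ => Φ (tA α a)) := by
      intro a₁ a₂ h12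
      have h3 : tA α a₁ = tA α a₂ := hinj h12
      have h4 : Multiplicative.ofAdd a₁ = Multiplicative.ofAdd a₂ :=
        SemidirectProduct.inl_injective h3
      exact congrArg Multiplicative.toAdd h4
    have htypeI : ∀ a : Fin m → ℤ, ∃ b : Fin m' → ℤ, Φ (tA α a) = tA β b := by
      intro a
      by_contra hno
      push_neg at hno
      have hw1 : ψ (tA α a) ≠ 1 := by
        intro hone
        have hv2 : Φ (tA α a) ∈ (SemidirectProduct.inl : FA m' →* Gsd β).range := by
          rw [SemidirectProduct.range_inl_eq_ker_rightHom]
          exact hone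
        obtain ⟨x, hx⟩ := hv2
        refine hno (Multiplicative.toAdd x) ?_
        rw [← hx]
        simp [tA]
      have hP' : ∀ p ∈ {x : FreeGroup (Fin n') | ∃ a' : Fin m → ℤ, x = ψ (tA α a')},
          ∀ p' ∈ {x : FreeGroup (Fin n') | ∃ a' : Fin m → ℤ, x = ψ (tA α a')},
          Commute p p' := by
        rintro p ⟨a₁, rfl⟩ p' ⟨a₂, rfl⟩
        have hcc : tA α a₁ * tA α a₂ = tA α a₂ * tA α a₁ := by
          show SemidirectProduct.inl (Multiplicative.ofAdd a₁) *
              SemidirectProduct.inl (Multiplicative.ofAdd a₂)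
            = SemidirectProduct.inl (Multiplicative.ofAdd a₂) *
              SemidirectProduct.inl (Multiplicative.ofAdd a₁)
          rw [← _root_.map_mul (SemidirectProduct.inl (φ := (rowAction m).comp α)),
            ← _root_.map_mul (SemidirectProduct.inl (φ := (rowAction m).comp α)), mul_comm]
        show ψ (tA α a₁) * ψ (tA α a₂) = ψ (tA α a₂) * ψ (tA α a₁)
        rw [← _root_.map_mul, ← _root_.map_mul, hcc]
      have hconj' : ∀ q ∈ ψ.range,
          ∀ p ∈ {x : FreeGroup (Fin n') | ∃ a' : Fin m → ℤ, x = ψ (tA α a')},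
          q * p * q⁻¹ ∈ {x : FreeGroup (Fin n') | ∃ a' : Fin m → ℤ, x = ψ (tA α a')} := by
        rintro q hq p ⟨a₁, rfl⟩
        obtain ⟨gq, rfl⟩ := MonoidHom.mem_range.mp hq
        have hmem2 : gq * tA α a₁ * gq⁻¹ ∈
            (SemidirectProduct.inl : FA m →* Gsd α).range := by
          rw [SemidirectProduct.range_inl_eq_ker_rightHom]
          show SemidirectProduct.rightHom (gq * tA α a₁ * gq⁻¹) = 1
          rw [_root_.map_mul, _root_.map_mul, _root_.map_inv]
          have hra : SemidirectProduct.rightHom (tA α a₁) = 1 :=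
            SemidirectProduct.rightHom_inl _
          rw [hra, mul_one, _root_.mul_inv_cancel]
        obtain ⟨x, hx⟩ := hmem2
        refine ⟨Multiplicative.toAdd x, ?_⟩
        show ψ gq * ψ (tA α a₁) * (ψ gq)⁻¹ = ψ (tA α (Multiplicative.toAdd x))
        rw [← _root_.map_inv, ← _root_.map_mul, ← _root_.map_mul]
        congr 1
        rw [← hx]
        simp [tA]
      have hcomm2 := FGAux.master
        {x : FreeGroup (Fin n') | ∃ a' : Fin m → ℤ, x = ψ (tA α a')} ψ.range hP' hconj'
        (w := ψ (tA α a)) ⟨a, rfl⟩ hw1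
        (g := ψ (SemidirectProduct.inr (FreeGroup.of i₀)))
        (h := ψ (SemidirectProduct.inr (FreeGroup.of i₁)))
        (MonoidHom.mem_range.mpr ⟨_, rfl⟩) (MonoidHom.mem_range.mpr ⟨_, rfl⟩)
      have heq : (FreeGroup.of i₀) ^ 2 * (FreeGroup.of i₁) ^ 2
          = (FreeGroup.of i₁) ^ 2 * (FreeGroup.of i₀) ^ 2 := by
        apply hinj3
        show θ _ = θ _
        rw [_root_.map_mul, _root_.map_mul, _root_.map_pow, _root_.map_pow]
        exact hcomm2
      exact FGAux.not_commute_sq hne heq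
    exact ⟨htypeI, hinj2, fun u v huv => hinj3 huv⟩
  · rintro ⟨h1, h2, h3⟩
    refine (injective_iff_map_eq_one Φ).mpr ?_
    intro g hg
    have hsplit : SemidirectProduct.inl g.left * SemidirectProduct.inr g.right = g :=
      SemidirectProduct.inl_left_mul_inr_right g
    obtain ⟨b, hb⟩ := h1 (Multiplicative.toAdd g.left)
    have hbl : Φ (SemidirectProduct.inl g.left)
        = SemidirectProduct.inl (Multiplicative.ofAdd b) := by
      have htA : tA α (Multiplicative.toAdd g.left) = SemidirectProduct.inl g.left := by
        simp [tA]
      rw [← htA]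
      exact hb
    have hr : SemidirectProduct.rightHom (Φ (SemidirectProduct.inr g.right)) = 1 := by
      have hgr := congrArg (fun x => SemidirectProduct.rightHom (Φ x)) hsplit
      simp only [_root_.map_mul] at hgr
      rw [hbl, hg] at hgr
      rw [SemidirectProduct.rightHom_inl] at hgr
      simpa using hgr
    have hright : g.right = 1 := by
      apply h3
      show SemidirectProduct.rightHom (Φ (fE α g.right))
        = SemidirectProduct.rightHom (Φ (fE α 1))
      have hfE1 : fE α (1 : FreeGroup (Fin n)) = 1 := _root_.map_one _
      rw [hfE1, _root_.map_one, _root_.map_one]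
      exact hr
    have hgl : Φ (SemidirectProduct.inl g.left) = 1 := by
      have hone : SemidirectProduct.inr g.right = (1 : Gsd α) := by
        rw [hright]; exact _root_.map_one _
      calc Φ (SemidirectProduct.inl g.left)
          = Φ (SemidirectProduct.inl g.left * SemidirectProduct.inr g.right) := by
            rw [hone, mul_one]
        _ = Φ g := by rw [hsplit]
        _ = 1 := hg
    have hleft : Multiplicative.toAdd g.left = 0 := by
      apply h2
      show Φ (tA α (Multiplicative.toAdd g.left)) = Φ (tA α 0)
      have htA : tA α (Multiplicative.toAdd g.left) = SemidirectProduct.inl g.left := by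
        simp [tA]
      have htA0 : tA α (0 : Fin m → ℤ) = 1 := by
        simp [tA]
      rw [htA, htA0, _root_.map_one, hgl]
    have hgleft : g.left = 1 := by
      have := congrArg Multiplicative.ofAdd hleft
      simpa using this
    rw [← hsplit, hgleft, hright]
    simp
end

section
/- A group homomorphism Φ : G_α → G_β is bijective if and only if Φ is of type I (Φ(ℤ^m) ⊆ ℤ^{m'}) and both the restriction Φ|_{ℤ^m} : ℤ^m → ℤ^{m'} and the homomorphism π'∘Φ|_{F_n} : F_n → F_{n'} are bijective. -/
private def pf : Bool → Equiv.Perm (Fin 3)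
  | true => Equiv.swap 0 1
  | false => Equiv.swap 1 2

lemma nc2_s8 : ¬ Commute (FreeGroup.of true) (FreeGroup.of false) := by
  intro h
  have h2 := h.map (FreeGroup.lift pf)
  rw [FreeGroup.lift_apply_of, FreeGroup.lift_apply_of] at h2
  have h3 : Equiv.swap (0 : Fin 3) 1 * Equiv.swap 1 2
      = Equiv.swap 1 2 * Equiv.swap (0 : Fin 3) 1 := h2
  exact absurd h3 (by decide)

/-- An abelian free group is "cyclic": every element is a power of a fixed element,
which moreover is torsion-free unless trivial. -/
lemma cyc (P : Type*) [Group P] [IsFreeGroup P] (hab : ∀ a b : P, a * b = b * a) :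
    ∃ w : P, (∀ p : P, ∃ k : ℤ, p = w ^ k) ∧ (∀ N : ℤ, w ^ N = 1 → w = 1 ∨ N = 0) := by
  classical
  set e := IsFreeGroup.toFreeGroup (G := P) with he
  rcases isEmpty_or_nonempty (IsFreeGroup.Generators P) with hemp | hne
  · refine ⟨1, fun p => ⟨0, ?_⟩, fun N _ => Or.inl rfl⟩
    have : e p = 1 := by
      induction e p with
      | C1 => rfl
      | of x => exact isEmptyElim x
      | inv_of x _ => exact isEmptyElim x
      | mul a b ha hb => rw [ha, hb, one_mul]
    have := congrArg e.symm this
    simpa using this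
  · obtain ⟨s₀⟩ := hne
    -- all elements of the free group commute
    have hab' : ∀ g h : FreeGroup (IsFreeGroup.Generators P), g * h = h * g := by
      intro g h
      have : e.symm g * e.symm h = e.symm h * e.symm g := hab _ _
      have := congrArg e this
      simpa using this
    -- all generators equal
    have hsub : ∀ s : IsFreeGroup.Generators P, s = s₀ := by
      intro s
      by_contra hst
      have hc : Commute (FreeGroup.of s) (FreeGroup.of s₀) := hab' _ _
      have h2 := hc.map (FreeGroup.lift
        (fun g => if g = s then FreeGroup.of true else FreeGroup.of false))
      simp only [FreeGroup.lift_apply_of, if_pos rfl, if_neg (Ne.symm hst)] at h2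
      exact nc2_s8 h2
    refine ⟨e.symm (FreeGroup.of s₀), ?_, ?_⟩
    · intro p
      have key : ∀ g : FreeGroup (IsFreeGroup.Generators P),
          ∃ k : ℤ, g = (FreeGroup.of s₀) ^ k := by
        intro g
        induction g with
        | C1 => exact ⟨0, rfl⟩
        | of x => exact ⟨1, by rw [hsub x]; exact (zpow_one _).symm⟩
        | inv_of x _ => exact ⟨-1, by rw [hsub x]; exact (zpow_neg_one _).symm⟩
        | mul a b ha hb =>
          obtain ⟨k, hk⟩ := ha; obtain ⟨l, hl⟩ := hb
          exact ⟨k + l, by rw [hk, hl, zpow_add]⟩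
      obtain ⟨k, hk⟩ := key (e p)
      refine ⟨k, ?_⟩
      have := congrArg e.symm hk
      simpa [map_zpow] using this
    · intro N hN
      right
      have h1 : e ((e.symm (FreeGroup.of s₀)) ^ N) = e 1 := by rw [hN]
      rw [map_zpow, map_one] at h1
      simp only [MulEquiv.apply_symm_apply] at h1
      have h2 := congrArg (FreeGroup.lift (fun _ : IsFreeGroup.Generators P =>
        Multiplicative.ofAdd (1 : ℤ))) h1
      rw [map_zpow, map_one (FreeGroup.lift _), FreeGroup.lift_apply_of] at h2
      have h3 := congrArg Multiplicative.toAdd h2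
      simpa using h3

lemma closure_pair_comm {G : Type*} [Group G] {a b : G} (h : a * b = b * a) :
    ∀ x ∈ Subgroup.closure {a, b}, ∀ y ∈ Subgroup.closure {a, b}, x * y = y * x := by
  have step : ∀ x ∈ Subgroup.closure {a, b}, a * x = x * a ∧ b * x = x * b := by
    have hle : Subgroup.closure {a, b} ≤ Subgroup.centralizer {a, b} := by
      rw [Subgroup.closure_le]
      rintro c (rfl | rfl) <;> rw [SetLike.mem_coe, Subgroup.mem_centralizer_iff] <;>
        rintro g (rfl | rfl) <;> simp_all
    intro x hx
    have hx' := Subgroup.mem_centralizer_iff.1 (hle hx)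
    exact ⟨hx' a (by simp), hx' b (by simp)⟩
  intro x hx y hy
  have hx' := step x hx
  have hle : Subgroup.closure {a, b} ≤ Subgroup.centralizer {x} := by
    rw [Subgroup.closure_le]
    rintro c (rfl | rfl) <;> rw [SetLike.mem_coe, Subgroup.mem_centralizer_iff] <;>
      rintro g rfl
    · exact hx'.1.symm
    · exact hx'.2.symm
  exact (Subgroup.mem_centralizer_iff.1 (hle hy)) x rfl

lemma key_normal {n' : ℕ} (hn' : 2 ≤ n') (P : Subgroup (FreeGroup (Fin n')))
    (hP : P.Normal) (hab : ∀ a ∈ P, ∀ b ∈ P, a * b = b * a) : P = ⊥ := by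
  by_contra hne
  have habP : ∀ a b : ↥P, a * b = b * a := fun a b => Subtype.ext (hab a a.2 b b.2)
  obtain ⟨w₀, hw₀, htor₀⟩ := cyc ↥P habP
  set w : FreeGroup (Fin n') := (w₀ : FreeGroup (Fin n')) with hwdef
  have hpow : ∀ p ∈ P, ∃ k : ℤ, p = w ^ k := by
    intro p hp
    obtain ⟨k, hk⟩ := hw₀ ⟨p, hp⟩
    exact ⟨k, by simpa using congrArg (Subtype.val) hk⟩
  have hw1 : w ≠ 1 := by
    intro h
    apply hne
    rw [eq_bot_iff]
    intro p hp
    obtain ⟨k, hk⟩ := hpow p hp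
    rw [Subgroup.mem_bot, hk, h, one_zpow]
  have htor : ∀ N : ℤ, w ^ N = 1 → N = 0 := by
    intro N hN
    have : w₀ ^ N = 1 := Subtype.ext (by simpa only [SubgroupClass.coe_zpow, OneMemClass.coe_one] using hN)
    rcases htor₀ N this with h | h
    · exact absurd (congrArg Subtype.val h) hw1
    · exact h
  -- every square commutes with w
  have hsq : ∀ u : FreeGroup (Fin n'), w * (u * u) = (u * u) * w := by
    intro u
    obtain ⟨k, hk⟩ := hpow (u⁻¹ * w * u) (by simpa using hP.conj_mem w w₀.2 u⁻¹)
    obtain ⟨j, hj⟩ := hpow (u * w * u⁻¹) (hP.conj_mem w w₀.2 u)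
    have hw_eq : w = w ^ (j * k) := by
      calc w = u⁻¹ * (u * w * u⁻¹) * u := by group
        _ = u⁻¹ * w ^ j * u := by rw [← hj]
        _ = (u⁻¹ * w * u⁻¹⁻¹) ^ j := by rw [conj_zpow, inv_inv]
        _ = (w ^ k) ^ j := by rw [inv_inv, ← hk]
        _ = w ^ (j * k) := by rw [← zpow_mul, mul_comm k j]
    have hjk : j * k = 1 := by
      have h0 : w ^ (j * k - 1) = 1 := by
        rw [zpow_sub, ← hw_eq, zpow_one, mul_inv_cancel]
      have := htor _ h0
      omega
    have hk1 : k * k = 1 := by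
      rcases Int.isUnit_iff.1 (IsUnit.of_mul_eq_one (a := k) j (by rw [mul_comm]; exact hjk)) with
        h | h <;> rw [h] <;> ring
    have h2 : (u * u)⁻¹ * w * (u * u) = w := by
      calc (u * u)⁻¹ * w * (u * u) = u⁻¹ * (u⁻¹ * w * u) * u := by group
        _ = u⁻¹ * w ^ k * u := by rw [← hk]
        _ = (u⁻¹ * w * u⁻¹⁻¹) ^ k := by rw [conj_zpow, inv_inv]
        _ = (w ^ k) ^ k := by rw [inv_inv, ← hk]
        _ = w := by rw [← zpow_mul, hk1, zpow_one]
    calc w * (u * u) = (u * u) * ((u * u)⁻¹ * w * (u * u)) := by group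
      _ = (u * u) * w := by rw [h2]
  -- for each s commuting with w, the pair lies in a cyclic subgroup
  have pairlemma : ∀ s : FreeGroup (Fin n'), w * s = s * w →
      ∃ z : FreeGroup (Fin n'), ∃ p q : ℤ, w = z ^ p ∧ s = z ^ q := by
    intro s hcomm
    have habH : ∀ a b : ↥(Subgroup.closure {w, s}), a * b = b * a := fun a b =>
      Subtype.ext (closure_pair_comm hcomm a a.2 b b.2)
    obtain ⟨z₀, hz₀, -⟩ := cyc ↥(Subgroup.closure {w, s}) habH
    have hwH : w ∈ Subgroup.closure {w, s} := Subgroup.subset_closure (by simp)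
    have hsH : s ∈ Subgroup.closure {w, s} := Subgroup.subset_closure (by simp)
    obtain ⟨p, hp⟩ := hz₀ ⟨w, hwH⟩
    obtain ⟨q, hq⟩ := hz₀ ⟨s, hsH⟩
    exact ⟨(z₀ : FreeGroup (Fin n')), p, q,
      by simpa using congrArg Subtype.val hp, by simpa using congrArg Subtype.val hq⟩
  -- exponent-sum homomorphisms
  let c : Fin n' → FreeGroup (Fin n') → ℤ := fun i g =>
    Multiplicative.toAdd (FreeGroup.lift
      (fun j => Multiplicative.ofAdd (if j = i then (1 : ℤ) else 0)) g)
  have hc_zpow : ∀ i (g : FreeGroup (Fin n')) (k : ℤ), c i (g ^ k) = k * c i g := by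
    intro i g k
    show Multiplicative.toAdd ((FreeGroup.lift _) (g ^ k)) = _
    rw [map_zpow, toAdd_zpow, smul_eq_mul]
  have hc_mul : ∀ i (g h : FreeGroup (Fin n')), c i (g * h) = c i g + c i h := by
    intro i g h
    show Multiplicative.toAdd ((FreeGroup.lift _) (g * h)) = _
    rw [map_mul, toAdd_mul]
  have hc_of : ∀ i j, c i (FreeGroup.of j) = if j = i then 1 else 0 := by
    intro i j
    show Multiplicative.toAdd ((FreeGroup.lift _) (FreeGroup.of j)) = _
    rw [FreeGroup.lift_apply_of]
    rfl
  have h01 : (0 : ℕ) < n' := by omega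
  have h11 : (1 : ℕ) < n' := by omega
  set i0 : Fin n' := ⟨0, h01⟩
  set i1 : Fin n' := ⟨1, h11⟩
  have hi01 : i1 ≠ i0 := by simp [i0, i1, Fin.ext_iff]
  obtain ⟨z₁, p₁, q₁, hw1', hs1⟩ :=
    pairlemma (FreeGroup.of i1 * FreeGroup.of i1) (hsq (FreeGroup.of i1))
  obtain ⟨z₂, p₂, q₂, hw2', hs2⟩ :=
    pairlemma (FreeGroup.of i0 * FreeGroup.of i1 * (FreeGroup.of i0 * FreeGroup.of i1))
      (hsq (FreeGroup.of i0 * FreeGroup.of i1))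
  -- exponent sums
  have e1 : q₁ * c i0 z₁ = 0 := by
    have := congrArg (c i0) hs1
    rw [hc_mul, hc_of, if_neg hi01, hc_zpow] at this
    omega
  have e2 : q₁ * c i1 z₁ = 2 := by
    have := congrArg (c i1) hs1
    rw [hc_mul, hc_of, if_pos rfl, hc_zpow] at this
    omega
  have e3 : c i0 w = 0 := by
    have h4 : c i0 z₁ = 0 := by
      rcases mul_eq_zero.1 e1 with h | h
      · exfalso; rw [h, zero_mul] at e2; omega
      · exact h
    have := congrArg (c i0) hw1'
    rw [hc_zpow, h4] at this
    omega
  have e4 : q₂ * c i0 z₂ = 2 := by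
    have := congrArg (c i0) hs2
    rw [hc_mul, hc_mul, hc_of, hc_of, hc_zpow] at this
    rw [if_pos rfl, if_neg hi01] at this
    omega
  have e5 : p₂ * c i0 z₂ = 0 := by
    have := congrArg (c i0) hw2'
    rw [hc_zpow] at this
    omega
  have hp₂ : p₂ = 0 := by
    rcases mul_eq_zero.1 e5 with h | h
    · exact h
    · exfalso; rw [h, mul_zero] at e4; omega
  apply hw1
  rw [hw2', hp₂, zpow_zero]

open Matrix SemidirectProduct

lemma tau_tA {n' m' : ℕ} (β : FreeGroup (Fin n') →* Matrix.GeneralLinearGroup (Fin m') ℤ)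
    (b : Fin m' → ℤ) : tau β (tA β b) = b := by
  unfold tau tA
  rw [SemidirectProduct.left_inl, SemidirectProduct.right_inl, _root_.map_one]
  simp

lemma eq_tA_of_right_eq_one {n' m' : ℕ}
    (β : FreeGroup (Fin n') →* Matrix.GeneralLinearGroup (Fin m') ℤ)
    {g : Gsd β} (h : SemidirectProduct.right g = 1) : g = tA β (tau β g) := by
  have h1 : tau β g = Multiplicative.toAdd (SemidirectProduct.left g) := by
    unfold tau
    rw [h, _root_.map_one]
    simp
  rw [h1]
  unfold tA
  rw [ofAdd_toAdd]
  conv_lhs => rw [← SemidirectProduct.inl_left_mul_inr_right g]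
  rw [h, _root_.map_one, mul_one]

lemma tA_injective {n' m' : ℕ}
    (β : FreeGroup (Fin n') →* Matrix.GeneralLinearGroup (Fin m') ℤ) :
    Function.Injective (tA β) := by
  intro a b h
  have := congrArg (fun g => Multiplicative.toAdd (SemidirectProduct.left g)) h
  simpa [tA] using this

/-- Any surjective homomorphism `G_α → G_β` is of type I. -/
lemma typeI {n m n' m' : ℕ} (hn' : 2 ≤ n')
    (α : FreeGroup (Fin n) →* Matrix.GeneralLinearGroup (Fin m) ℤ)
    (β : FreeGroup (Fin n') →* Matrix.GeneralLinearGroup (Fin m') ℤ)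
    (Φ : Gsd α →* Gsd β) (hs : Function.Surjective Φ) :
    ∀ a : Fin m → ℤ, SemidirectProduct.right (Φ (tA α a)) = 1 := by
  set P : Subgroup (FreeGroup (Fin n')) :=
    Subgroup.map SemidirectProduct.rightHom
      (Subgroup.map Φ (MonoidHom.range (SemidirectProduct.inl : FA m →* Gsd α))) with hPdef
  have h1 : (MonoidHom.range (SemidirectProduct.inl : FA m →* Gsd α)).Normal := by
    rw [SemidirectProduct.range_inl_eq_ker_rightHom]
    exact MonoidHom.normal_ker _
  have hnormal : P.Normal :=
    (h1.map Φ hs).map SemidirectProduct.rightHom SemidirectProduct.rightHom_surjective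
  have habel : ∀ a ∈ P, ∀ b ∈ P, a * b = b * a := by
    rintro x hx y hy
    rw [hPdef, Subgroup.mem_map] at hx hy
    obtain ⟨g1, hg1, rfl⟩ := hx
    obtain ⟨g2, hg2, rfl⟩ := hy
    rw [Subgroup.mem_map] at hg1 hg2
    obtain ⟨g1', hg1', rfl⟩ := hg1
    obtain ⟨g2', hg2', rfl⟩ := hg2
    obtain ⟨a1, rfl⟩ := hg1'
    obtain ⟨a2, rfl⟩ := hg2'
    rw [← _root_.map_mul, ← _root_.map_mul, ← _root_.map_mul, ← _root_.map_mul, ← _root_.map_mul, ← _root_.map_mul, mul_comm a1 a2]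
  have hbot := key_normal hn' P hnormal habel
  intro a
  have hmem : SemidirectProduct.rightHom (Φ (tA α a)) ∈ P := by
    rw [hPdef]
    exact ⟨Φ (tA α a), ⟨tA α a, ⟨Multiplicative.ofAdd a, rfl⟩, rfl⟩, rfl⟩
  rw [hbot, Subgroup.mem_bot] at hmem
  exact hmem

lemma tA_zero {n' m' : ℕ} (β : FreeGroup (Fin n') →* Matrix.GeneralLinearGroup (Fin m') ℤ) :
    tA β (0 : Fin m' → ℤ) = 1 := by
  unfold tA
  exact _root_.map_one SemidirectProduct.inl

lemma tau_one {n' m' : ℕ} (β : FreeGroup (Fin n') →* Matrix.GeneralLinearGroup (Fin m') ℤ) :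
    tau β (1 : Gsd β) = 0 := by
  rw [← tA_zero β, tau_tA]

/-- `Φ : G_α → G_β` is bijective iff it is of type I with both `Φ|_{ℤ^m}` and
`π'∘Φ|_{F_n}` bijective. -/
theorem bijective_iff {n m n' m' : ℕ} (hn : 2 ≤ n) (hm : 1 ≤ m)
    (hn' : 2 ≤ n') (hm' : 1 ≤ m')
    (α : FreeGroup (Fin n) →* Matrix.GeneralLinearGroup (Fin m) ℤ)
    (β : FreeGroup (Fin n') →* Matrix.GeneralLinearGroup (Fin m') ℤ)
    (Φ : Gsd α →* Gsd β) :
    Function.Bijective Φ ↔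
      ((∀ a : Fin m → ℤ, ∃ b : Fin m' → ℤ, Φ (tA α a) = tA β b) ∧
        Function.Bijective (fun a : Fin m → ℤ => tau β (Φ (tA α a))) ∧
        Function.Bijective
          (fun u : FreeGroup (Fin n) => SemidirectProduct.rightHom (Φ (fE α u)))) := by
  constructor
  · intro hbij
    set e := MulEquiv.ofBijective Φ hbij with he
    have hee : ∀ g : Gsd α, e g = Φ g := fun g => rfl
    have hsymm : ∀ g : Gsd α, e.symm (Φ g) = g := fun g => e.symm_apply_apply g
    have hI := typeI hn' α β Φ hbij.2
    have hI' := typeI hn β α (e.symm : Gsd β ≃* Gsd α).toMonoidHom e.symm.surjective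
    have hspec : ∀ a : Fin m → ℤ, Φ (tA α a) = tA β (tau β (Φ (tA α a))) :=
      fun a => eq_tA_of_right_eq_one β (hI a)
    have hspec' : ∀ b : Fin m' → ℤ, e.symm (tA β b) = tA α (tau α (e.symm (tA β b))) :=
      fun b => eq_tA_of_right_eq_one α (hI' b)
    refine ⟨fun a => ⟨tau β (Φ (tA α a)), hspec a⟩, ⟨?_, ?_⟩, ⟨?_, ?_⟩⟩
    · -- injectivity of the abelian restriction
      intro a a' h
      change tau β (Φ (tA α a)) = tau β (Φ (tA α a')) at h
      have : Φ (tA α a) = Φ (tA α a') := by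
        rw [hspec a, hspec a', h]
      exact tA_injective α (hbij.1 this)
    · -- surjectivity of the abelian restriction
      intro b
      refine ⟨tau α (e.symm (tA β b)), ?_⟩
      have h1 : Φ (tA α (tau α (e.symm (tA β b)))) = tA β b := by
        rw [← hspec' b, ← hee, e.apply_symm_apply]
      show tau β (Φ (tA α (tau α (e.symm (tA β b))))) = b
      rw [h1, tau_tA]
    · -- injectivity of the free part
      have hker : ∀ u : FreeGroup (Fin n),
          SemidirectProduct.rightHom (Φ (fE α u)) = 1 → u = 1 := by
        intro u hu
        have hr : SemidirectProduct.right (Φ (fE α u)) = 1 := hu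
        have h1 : Φ (fE α u) = tA β (tau β (Φ (fE α u))) := eq_tA_of_right_eq_one β hr
        have h2 : fE α u = tA α (tau α (e.symm (tA β (tau β (Φ (fE α u)))))) := by
          rw [← hspec']
          rw [← h1, hsymm]
        have := congrArg SemidirectProduct.right h2
        simpa [fE, tA] using this
      intro u u' h
      change SemidirectProduct.rightHom (Φ (fE α u))
        = SemidirectProduct.rightHom (Φ (fE α u')) at h
      have h1 : SemidirectProduct.rightHom (Φ (fE α (u * u'⁻¹))) = 1 := by
        have : fE α (u * u'⁻¹) = fE α u * (fE α u')⁻¹ := by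
          simp [fE, ← _root_.map_mul, ← _root_.map_inv]
        rw [this, _root_.map_mul, _root_.map_mul, _root_.map_inv, _root_.map_inv, h,
          mul_inv_cancel]
      exact mul_inv_eq_one.1 (hker _ h1)
    · -- surjectivity of the free part
      intro v
      refine ⟨SemidirectProduct.right (e.symm (SemidirectProduct.inr v)), ?_⟩
      set g := e.symm (SemidirectProduct.inr v) with hg
      have hgg : Φ g = SemidirectProduct.inr v := by rw [hg, ← hee, e.apply_symm_apply]
      have hsplit : g = SemidirectProduct.inl (SemidirectProduct.left g) *
          fE α (SemidirectProduct.right g) := (SemidirectProduct.inl_left_mul_inr_right g).symm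
      have hleft : SemidirectProduct.left g =
          Multiplicative.ofAdd (Multiplicative.toAdd (SemidirectProduct.left g)) := rfl
      have h2 : Φ (fE α (SemidirectProduct.right g)) =
          (Φ (SemidirectProduct.inl (SemidirectProduct.left g)))⁻¹ *
            SemidirectProduct.inr v := by
        rw [← hgg, ← _root_.map_inv, ← _root_.map_mul]
        exact congrArg Φ (inv_mul_eq_iff_eq_mul.2 hsplit).symm
      show SemidirectProduct.rightHom (Φ (fE α (SemidirectProduct.right g))) = v
      rw [h2, _root_.map_mul, _root_.map_inv]
      have h3 : SemidirectProduct.rightHom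
          (Φ (SemidirectProduct.inl (SemidirectProduct.left g))) = 1 :=
        hI (Multiplicative.toAdd (SemidirectProduct.left g))
      rw [h3]
      simp
  · rintro ⟨h1, h2, h3⟩
    have hspec : ∀ a : Fin m → ℤ, Φ (tA α a) = tA β (tau β (Φ (tA α a))) := by
      intro a
      obtain ⟨b, hb⟩ := h1 a
      rw [hb, tau_tA]
    have hQ1 : SemidirectProduct.rightHom (Φ (fE α (1 : FreeGroup (Fin n)))) = 1 := by
      have : fE α (1 : FreeGroup (Fin n)) = 1 := rfl
      rw [this, _root_.map_one, _root_.map_one]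
    have hf0 : tau β (Φ (tA α 0)) = 0 := by
      rw [tA_zero, _root_.map_one, tau_one]
    constructor
    · -- injective
      rw [injective_iff_map_eq_one]
      intro g hg
      have hsplit : g = SemidirectProduct.inl (SemidirectProduct.left g) *
          fE α (SemidirectProduct.right g) := (SemidirectProduct.inl_left_mul_inr_right g).symm
      have htA : SemidirectProduct.inl (SemidirectProduct.left g) =
          tA α (Multiplicative.toAdd (SemidirectProduct.left g)) := rfl
      have hstep : Φ (SemidirectProduct.inl (SemidirectProduct.left g)) *
          Φ (fE α (SemidirectProduct.right g)) = 1 := by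
        rw [← _root_.map_mul, ← hsplit, hg]
      have hr : SemidirectProduct.rightHom (Φ (fE α (SemidirectProduct.right g))) = 1 := by
        have h4 := congrArg SemidirectProduct.rightHom hstep
        rw [_root_.map_mul, _root_.map_one] at h4
        have h5 : SemidirectProduct.rightHom
            (Φ (SemidirectProduct.inl (SemidirectProduct.left g))) = 1 := by
          rw [show (SemidirectProduct.inl (SemidirectProduct.left g) : Gsd α) =
            tA α (Multiplicative.toAdd (SemidirectProduct.left g)) from rfl, hspec]
          exact SemidirectProduct.rightHom_inl _
        rw [h5, one_mul] at h4
        exact h4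
      have hright : SemidirectProduct.right g = 1 := h3.1 (hr.trans hQ1.symm)
      have hgeq : g = tA α (Multiplicative.toAdd (SemidirectProduct.left g)) := by
        rw [hsplit, hright]
        have : fE α (1 : FreeGroup (Fin n)) = 1 := rfl
        rw [this, mul_one, htA]
        rfl
      have hzero : tau β (Φ (tA α (Multiplicative.toAdd (SemidirectProduct.left g)))) = 0 := by
        rw [← hgeq, hg, tau_one]
      have : Multiplicative.toAdd (SemidirectProduct.left g) = (0 : Fin m → ℤ) :=
        h2.1 (hzero.trans hf0.symm)
      rw [hgeq, this]
      rfl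
    · -- surjective
      intro h
      obtain ⟨u, hu⟩ := h3.2 (SemidirectProduct.right h)
      obtain ⟨a, ha⟩ := h2.2
        (Multiplicative.toAdd (SemidirectProduct.left h) -
          Multiplicative.toAdd (SemidirectProduct.left (Φ (fE α u))))
      change tau β (Φ (tA α a)) = _ at ha
      change SemidirectProduct.rightHom (Φ (fE α u)) = _ at hu
      refine ⟨tA α a * fE α u, ?_⟩
      rw [_root_.map_mul, hspec, ha]
      have hΦu : Φ (fE α u) = SemidirectProduct.inl (SemidirectProduct.left (Φ (fE α u))) *
          SemidirectProduct.inr (SemidirectProduct.right h) := by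
        conv_lhs => rw [← SemidirectProduct.inl_left_mul_inr_right (Φ (fE α u))]
        congr 1
        rw [show SemidirectProduct.right (Φ (fE α u)) =
          SemidirectProduct.rightHom (Φ (fE α u)) from rfl, hu]
      rw [hΦu]
      unfold tA
      rw [← mul_assoc, ← _root_.map_mul]
      conv_rhs => rw [← SemidirectProduct.inl_left_mul_inr_right h]
      congr 1
      congr 1
      apply Multiplicative.toAdd.injective
      rw [toAdd_mul, toAdd_ofAdd, ← hΦu, sub_add_cancel]
end

section
/- For an endomorphism Φ of G_α, the following are equivalent: (i) Φ is bijective (an automorphism of G_α); (ii) Φ is surjective; (iii) Φ is of type I (Φ(ℤ^m) ⊆ ℤ^m) and both the restriction Φ|_{ℤ^m} : ℤ^m → ℤ^m and the homomorphism π∘Φ|_{F_n} : F_n → F_n are surjective. -/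
section Aux

open FreeGroup

variable {α : Type*} [DecidableEq α]

lemma reduce_length_le (L : List (α × Bool)) : (reduce L).length ≤ L.length :=
  FreeGroup.Red.length_le (FreeGroup.reduce.red)

/-- B2: structure of a reduced cons -/
lemma reduced_cons_elim {x : α × Bool} {L : List (α × Bool)}
    (h : reduce (x :: L) = x :: L) :
    reduce L = L ∧ ∀ y ∈ L.head?, ¬(x.1 = y.1 ∧ x.2 = !y.2) := by
  rcases hR : reduce L with _ | ⟨z, zs⟩
  · simp only [FreeGroup.reduce.cons, hR] at h
    have hL : [] = L := by injection h
    constructor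
    · rw [← hL]
    · rw [← hL]; simp
  · simp only [FreeGroup.reduce.cons, hR] at h
    by_cases hc : x.1 = z.1 ∧ x.2 = !z.2
    · rw [if_pos hc] at h
      exfalso
      have h1 : (reduce L).length ≤ L.length := reduce_length_le L
      rw [hR] at h1
      have h2 : zs.length = L.length + 1 := by rw [h]; simp
      simp at h1
      omega
    · rw [if_neg hc] at h
      have hL : L = z :: zs := by
        injection h with _ h'
        exact h'.symm
      constructor
      · rw [hL, ← hR, hL]
      · intro y hy
        rw [hL] at hy
        simp at hy
        subst hy
        exact hc

/-- RC: cons of reduced with no cancellation is reduced -/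
lemma reduced_cons_intro {x : α × Bool} {L : List (α × Bool)}
    (h : reduce L = L) (hnc : ∀ y ∈ L.head?, ¬(x.1 = y.1 ∧ x.2 = !y.2)) :
    reduce (x :: L) = x :: L := by
  rw [FreeGroup.reduce.cons, h]
  rcases L with _ | ⟨z, zs⟩
  · rfl
  · have := hnc z (by simp)
    simp only [List.casesOn]
    rw [if_neg this]

/-- RS: appending a singleton with no cancellation at the end stays reduced -/
lemma reduced_append_singleton {x : α × Bool} {L : List (α × Bool)}
    (h : reduce L = L) (hnc : L.getLast? ≠ some (x.1, !x.2)) :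
    reduce (L ++ [x]) = L ++ [x] := by
  induction L with
  | nil => simp [FreeGroup.reduce_singleton]
  | cons y L' ih =>
    obtain ⟨hL', hhead⟩ := reduced_cons_elim h
    have hih : reduce (L' ++ [x]) = L' ++ [x] := by
      apply ih hL'
      rcases L' with _ | ⟨z, zs⟩
      · simp
      · rwa [List.getLast?_cons_cons] at hnc
    rw [List.cons_append]
    apply reduced_cons_intro hih
    intro w hw
    rcases L' with _ | ⟨z, zs⟩
    · simp at hw
      subst hw
      rintro ⟨he1, he2⟩
      apply hnc
      have : y = (x.1, !x.2) := Prod.ext he1 he2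
      simp [this]
    · simp at hw
      subst hw
      exact hhead z (by simp)

omit [DecidableEq α] in
lemma cons_eq_append_singleton {x : α × Bool} {L : List (α × Bool)}
    (h : x :: L = L ++ [x]) : ∀ y ∈ L, y = x := by
  induction L generalizing x with
  | nil => simp
  | cons z L' ih =>
    rw [List.cons_append] at h
    obtain ⟨h1, h2⟩ := List.cons_eq_cons.mp h
    subst h1
    intro y hy
    rcases List.mem_cons.mp hy with rfl | hy'
    · rfl
    · exact ih h2 y hy'

lemma reduce_cancel_pair (a : α) : FreeGroup.mk [(a, false), (a, true)] = 1 := by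
  rw [FreeGroup.one_eq_mk]
  apply FreeGroup.reduce.exact
  simp [FreeGroup.reduce]

lemma of_inv_eq_mk (a : α) : (FreeGroup.of a)⁻¹ = FreeGroup.mk [(a, false)] := by
  rw [show FreeGroup.of a = FreeGroup.mk [(a, true)] from rfl, FreeGroup.inv_mk]
  rfl

/-- centralizer of a generator: any element commuting with `of a` is a power of it. -/
lemma eq_zpow_of_commute_of_aux (a : α) :
    ∀ (Nb : ℕ) (z : FreeGroup α), z.toWord.length ≤ Nb →
      z * of a = of a * z → ∃ k : ℤ, z = of a ^ k := by
  intro Nb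
  induction Nb with
  | zero =>
    intro z hlen _
    have : z.toWord = [] := List.length_eq_zero_iff.mp (Nat.le_zero.mp hlen)
    exact ⟨0, by rw [FreeGroup.toWord_eq_nil_iff.mp this]; simp⟩
  | succ Nb ih =>
    intro z hlen h
    rcases hL : z.toWord with _ | ⟨⟨c, b⟩, tl⟩
    · exact ⟨0, by rw [FreeGroup.toWord_eq_nil_iff.mp hL]; simp⟩
    · have hred : reduce ((c, b) :: tl) = (c, b) :: tl := by
        rw [← hL]; exact FreeGroup.reduce_toWord z
      have hz : z = FreeGroup.mk ((c, b) :: tl) := by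
        conv_lhs => rw [← FreeGroup.mk_toWord (x := z)]
        rw [hL]
      have htl : reduce tl = tl := (reduced_cons_elim hred).1
      have htw : (FreeGroup.mk tl).toWord = tl := by rw [FreeGroup.toWord_mk, htl]
      have hlt : (FreeGroup.mk tl).toWord.length ≤ Nb := by
        rw [htw]
        have : z.toWord.length ≤ Nb + 1 := hlen
        rw [hL] at this; simp at this; omega
      by_cases hc : c = a
      · subst hc
        cases b
        · -- z = (of c)⁻¹ * mk tl
          have hzz : z = (FreeGroup.of c)⁻¹ * FreeGroup.mk tl := by
            rw [hz, of_inv_eq_mk, FreeGroup.mul_mk]; rfl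
          have hz' : FreeGroup.mk tl = FreeGroup.of c * z := by
            rw [hzz, ← mul_assoc, mul_inv_cancel, one_mul]
          have hcomm' : FreeGroup.mk tl * of c = of c * FreeGroup.mk tl := by
            rw [hz']
            conv_lhs => rw [mul_assoc, h]
          obtain ⟨k, hk⟩ := ih (FreeGroup.mk tl) hlt hcomm'
          refine ⟨-1 + k, ?_⟩
          rw [hzz, hk, ← zpow_neg_one, ← zpow_add]
        · -- z = of c * mk tl
          have hzz : z = FreeGroup.of c * FreeGroup.mk tl := by
            rw [hz, show FreeGroup.of c = FreeGroup.mk [(c, true)] from rfl,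
              FreeGroup.mul_mk]; rfl
          have hz' : FreeGroup.mk tl = (FreeGroup.of c)⁻¹ * z := by
            rw [hzz, ← mul_assoc, inv_mul_cancel, one_mul]
          have hcomm' : FreeGroup.mk tl * of c = of c * FreeGroup.mk tl := by
            rw [hz']
            conv_lhs => rw [mul_assoc, h, ← mul_assoc, inv_mul_cancel, one_mul]
            conv_rhs => rw [← mul_assoc, mul_inv_cancel, one_mul]
          obtain ⟨k, hk⟩ := ih (FreeGroup.mk tl) hlt hcomm'
          refine ⟨1 + k, ?_⟩
          rw [hzz, hk, zpow_add, zpow_one]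
      · -- c ≠ a : contradiction
        exfalso
        have h1 : (of a * z).toWord = (a, true) :: ((c, b) :: tl) := by
          rw [hz, show FreeGroup.of a = FreeGroup.mk [(a, true)] from rfl,
            FreeGroup.mul_mk, List.singleton_append, FreeGroup.toWord_mk]
          apply reduced_cons_intro hred
          intro y hy
          simp only [List.head?_cons, Option.mem_def, Option.some.injEq] at hy
          subst hy
          rintro ⟨e1, _⟩
          exact hc e1.symm
        have hne : ((c, b) :: tl : List (α × Bool)) ≠ [] := by simp
        set e := ((c, b) :: tl).getLast hne with hedef
        by_cases he : e = (a, false)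
        · -- length contradiction
          have hdecomp : (c, b) :: tl = (((c, b) :: tl).dropLast) ++ [(a, false)] := by
            conv_lhs => rw [← List.dropLast_append_getLast hne]
            rw [← hedef, he]
          have hmul : z * of a = FreeGroup.mk (((c, b) :: tl).dropLast) := by
            rw [hz, show FreeGroup.of a = FreeGroup.mk [(a, true)] from rfl,
              FreeGroup.mul_mk]
            conv_lhs => rw [hdecomp]
            rw [List.append_assoc, List.singleton_append, ← FreeGroup.mul_mk,
              reduce_cancel_pair, mul_one]
          have hlen1 : (z * of a).toWord.length ≤ tl.length := by
            rw [hmul, FreeGroup.toWord_mk]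
            have h2 := reduce_length_le (((c, b) :: tl).dropLast)
            simp at h2 ⊢
            omega
          have hlen2 : (of a * z).toWord.length = tl.length + 2 := by
            rw [h1]; simp
          rw [h] at hlen1
          omega
        · -- word equality contradiction
          have h2 : (z * of a).toWord = ((c, b) :: tl) ++ [(a, true)] := by
            rw [hz, show FreeGroup.of a = FreeGroup.mk [(a, true)] from rfl,
              FreeGroup.mul_mk, FreeGroup.toWord_mk]
            apply reduced_append_singleton hred
            rw [List.getLast?_eq_getLast hne, ← hedef]
            intro hcon
            apply he
            injection hcon
          have heq : ((c, b) :: tl) ++ [(a, true)] = (a, true) :: ((c, b) :: tl) := by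
            rw [← h2, h, h1]
          have hall := cons_eq_append_singleton heq.symm
          have : (c, b) = (a, true) := hall _ (by simp)
          injection this with e1 _
          exact hc e1

lemma eq_zpow_of_commute_of {a : α} {z : FreeGroup α}
    (h : z * FreeGroup.of a = FreeGroup.of a * z) : ∃ k : ℤ, z = FreeGroup.of a ^ k :=
  eq_zpow_of_commute_of_aux a z.toWord.length z le_rfl h

lemma reduced_drop {L : List (α × Bool)} (h : reduce L = L) :
    ∀ j, reduce (L.drop j) = L.drop j := by
  intro j
  induction j with
  | zero => simpa using h
  | succ j ihj =>
    rcases hd : L.drop j with _ | ⟨y, M⟩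
    · have : L.drop (j+1) = [] := by
        have := List.drop_drop (i := 1) (j := j) (l := L)
        rw [← this, hd]
        simp
      rw [this]
      rfl
    · have hM : L.drop (j+1) = M := by
        have := List.drop_drop (i := 1) (j := j) (l := L)
        rw [← this, hd]
        simp
      rw [hM]
      rw [hd] at ihj
      exact (reduced_cons_elim ihj).1

lemma no_cancel_adj {L : List (α × Bool)} (h : reduce L = L) {j : ℕ}
    (hj : j + 1 < L.length) :
    ¬((L[j]'(by omega)).1 = (L[j+1]'hj).1 ∧ (L[j]'(by omega)).2 = !(L[j+1]'hj).2) := by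
  have h1 : L.drop j = L[j] :: L.drop (j+1) := List.drop_eq_getElem_cons (by omega)
  have h2 : L.drop (j+1) = L[j+1] :: L.drop (j+2) := List.drop_eq_getElem_cons hj
  have hr := reduced_drop h j
  rw [h1, h2] at hr
  exact (reduced_cons_elim hr).2 (L[j+1]'hj) (by simp)

section AbstractFree

omit [DecidableEq α] in
lemma of_not_commute {s t : α} (hst : s ≠ t) :
    FreeGroup.of s * FreeGroup.of t ≠ FreeGroup.of t * FreeGroup.of s := by
  classical
  intro hcon
  set f : α → Equiv.Perm (Fin 3) := fun u =>
    if u = s then Equiv.swap 0 1 else if u = t then Equiv.swap 1 2 else 1 with hf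
  have h2 := congrArg (FreeGroup.lift f) hcon
  simp only [_root_.map_mul, FreeGroup.lift_apply_of] at h2
  have hfs : f s = Equiv.swap 0 1 := by rw [hf]; simp
  have hft : f t = Equiv.swap 1 2 := by
    rw [hf]; simp [Ne.symm hst]
  rw [hfs, hft] at h2
  revert h2
  decide

lemma subsingleton_free_gen (S : Type*) [Subsingleton S] :
    ∃ w : FreeGroup S, ∀ x : FreeGroup S, x ∈ Subgroup.zpowers w := by
  rcases isEmpty_or_nonempty S with hS | ⟨⟨s₀⟩⟩
  · refine ⟨1, fun x => ?_⟩
    induction x using FreeGroup.induction_on with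
    | C1 => exact Subgroup.one_mem _
    | of x => exact hS.elim x
    | inv_of x _ => exact hS.elim x
    | mul x y hx hy => exact Subgroup.mul_mem _ hx hy
  · refine ⟨FreeGroup.of s₀, fun x => ?_⟩
    induction x using FreeGroup.induction_on with
    | C1 => exact Subgroup.one_mem _
    | of x => rw [Subsingleton.elim x s₀]; exact Subgroup.mem_zpowers _
    | inv_of x hx => exact Subgroup.inv_mem _ hx
    | mul x y hx hy => exact Subgroup.mul_mem _ hx hy

omit [DecidableEq α] in
lemma eq_one_of_commute_two {s t : α} (hst : s ≠ t) {z : FreeGroup α}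
    (hzs : z * FreeGroup.of s = FreeGroup.of s * z)
    (hzt : z * FreeGroup.of t = FreeGroup.of t * z) : z = 1 := by
  classical
  obtain ⟨i, hi⟩ := eq_zpow_of_commute_of hzs
  obtain ⟨j, hj⟩ := eq_zpow_of_commute_of hzt
  set χ : FreeGroup α →* Multiplicative ℤ :=
    FreeGroup.lift (fun u => if u = s then (Multiplicative.ofAdd (1 : ℤ)) else 1) with hχ
  have h1 : χ z = Multiplicative.ofAdd i := by
    rw [hi, map_zpow, hχ, FreeGroup.lift_apply_of, if_pos rfl, ← ofAdd_zsmul]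
    norm_num
  have h2 : χ z = 1 := by
    rw [hj, map_zpow, hχ, FreeGroup.lift_apply_of, if_neg hst.symm, one_zpow]
  rw [h2] at h1
  have : i = 0 := by
    have := congrArg Multiplicative.toAdd h1
    simpa using this.symm
  rw [hi, this, zpow_zero]

lemma isfree_exists_gen {G : Type*} [Group G] [IsFreeGroup G]
    (hc : ∀ x y : G, x * y = y * x) :
    ∃ w : G, ∀ x : G, x ∈ Subgroup.zpowers w := by
  classical
  set e := IsFreeGroup.toFreeGroup G with he
  have hsub : Subsingleton (IsFreeGroup.Generators G) := by
    by_contra hns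
    rw [not_subsingleton_iff_nontrivial] at hns
    obtain ⟨s, t, hst⟩ := hns.exists_pair_ne
    apply of_not_commute hst
    have := hc (e.symm (FreeGroup.of s)) (e.symm (FreeGroup.of t))
    have h2 := congrArg e this
    simpa using h2
  obtain ⟨w', hw'⟩ := subsingleton_free_gen (IsFreeGroup.Generators G)
  refine ⟨e.symm w', fun x => ?_⟩
  obtain ⟨k, hk⟩ := Subgroup.mem_zpowers_iff.mp (hw' (e x))
  apply Subgroup.mem_zpowers_iff.mpr
  refine ⟨k, ?_⟩
  rw [← map_zpow, hk]
  simp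

lemma isfree_comm_of_center {G : Type*} [Group G] [IsFreeGroup G]
    {z : G} (hz1 : z ≠ 1) (hz : ∀ x : G, z * x = x * z) :
    ∀ x y : G, x * y = y * x := by
  classical
  set e := IsFreeGroup.toFreeGroup G with he
  have hsub : Subsingleton (IsFreeGroup.Generators G) := by
    by_contra hns
    rw [not_subsingleton_iff_nontrivial] at hns
    obtain ⟨s, t, hst⟩ := hns.exists_pair_ne
    have hzs : e z * FreeGroup.of s = FreeGroup.of s * e z := by
      have := hz (e.symm (FreeGroup.of s))
      have h2 := congrArg e this
      simpa using h2
    have hzt : e z * FreeGroup.of t = FreeGroup.of t * e z := by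
      have := hz (e.symm (FreeGroup.of t))
      have h2 := congrArg e this
      simpa using h2
    have : e z = 1 := eq_one_of_commute_two hst hzs hzt
    exact hz1 (by simpa using congrArg e.symm this)
  obtain ⟨w', hw'⟩ := subsingleton_free_gen (IsFreeGroup.Generators G)
  intro x y
  obtain ⟨i, hi⟩ := Subgroup.mem_zpowers_iff.mp (hw' (e x))
  obtain ⟨j, hj⟩ := Subgroup.mem_zpowers_iff.mp (hw' (e y))
  apply e.injective
  rw [_root_.map_mul, _root_.map_mul, ← hi, ← hj, ← zpow_add, ← zpow_add, add_comm]

end AbstractFree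

section NAN

lemma conj_zpow_eq {G : Type*} [Group G] (g w : G) (j : ℤ) :
    g * w ^ j * g⁻¹ = (g * w * g⁻¹) ^ j := by
  have := _root_.map_zpow (MulAut.conj g) w j
  simpa [MulAut.conj_apply] using this

lemma conj_zpow_eq' {G : Type*} [Group G] (g w : G) (j : ℤ) :
    g⁻¹ * w ^ j * g = (g⁻¹ * w * g) ^ j := by
  simpa using conj_zpow_eq g⁻¹ w j

lemma no_abelian_normal {n : ℕ} (hn : 2 ≤ n) (N : Subgroup (FreeGroup (Fin n)))
    (hnormal : N.Normal) (hcomm : ∀ x ∈ N, ∀ y ∈ N, x * y = y * x) : N = ⊥ := by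
  by_contra hne
  obtain ⟨v, hv, hv1⟩ : ∃ v ∈ N, v ≠ 1 := by
    by_contra hcon
    push_neg at hcon
    exact hne ((Subgroup.eq_bot_iff_forall N).mpr hcon)
  have hcN : ∀ x y : ↥N, x * y = y * x := fun x y => Subtype.ext (hcomm x x.2 y y.2)
  obtain ⟨w₀, hw₀⟩ := isfree_exists_gen hcN
  set w : FreeGroup (Fin n) := (w₀ : FreeGroup (Fin n)) with hwdef
  have hwmem : w ∈ N := w₀.2
  have hpow : ∀ x ∈ N, ∃ k : ℤ, w ^ k = x := by
    intro x hx
    obtain ⟨k, hk⟩ := Subgroup.mem_zpowers_iff.mp (hw₀ ⟨x, hx⟩)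
    exact ⟨k, by simpa [hwdef] using congrArg Subtype.val hk⟩
  have hw1 : w ≠ 1 := by
    intro hcon
    obtain ⟨k, hk⟩ := hpow v hv
    rw [hcon, one_zpow] at hk
    exact hv1 hk.symm
  have hconj : ∀ g : FreeGroup (Fin n), ∃ k : ℤ, g * w * g⁻¹ = w ^ k := by
    intro g
    obtain ⟨k, hk⟩ := hpow _ (hnormal.conj_mem w hwmem g)
    exact ⟨k, hk.symm⟩
  have main : ∀ g h : FreeGroup (Fin n),
      (g * h * g⁻¹ * h⁻¹) * w * (g * h * g⁻¹ * h⁻¹)⁻¹ = w := by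
    intro g h
    obtain ⟨A, hA⟩ := hconj g
    obtain ⟨A', hA'⟩ := hconj g⁻¹
    obtain ⟨B, hB⟩ := hconj h
    obtain ⟨B', hB'⟩ := hconj h⁻¹
    simp only [inv_inv] at hA' hB'
    have hg1 : w ^ (A' * A) = w := by
      have h1 : g⁻¹ * (g * w * g⁻¹) * g = w := by group
      rw [hA, conj_zpow_eq' g w A, hA', ← zpow_mul] at h1
      exact h1
    have hh1 : w ^ (B' * B) = w := by
      have h1 : h⁻¹ * (h * w * h⁻¹) * h = w := by group
      rw [hB, conj_zpow_eq' h w B, hB', ← zpow_mul] at h1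
      exact h1
    have e2 : g⁻¹ * w ^ B' * g = w ^ (A' * B') := by
      rw [conj_zpow_eq' g w B', hA', ← zpow_mul]
    have e3 : h * w ^ (A' * B') * h⁻¹ = w ^ (B * (A' * B')) := by
      rw [conj_zpow_eq h w (A' * B'), hB, ← zpow_mul]
    have e4 : g * w ^ (B * (A' * B')) * g⁻¹ = w ^ (A * (B * (A' * B'))) := by
      rw [conj_zpow_eq g w (B * (A' * B')), hA, ← zpow_mul]
    calc (g * h * g⁻¹ * h⁻¹) * w * (g * h * g⁻¹ * h⁻¹)⁻¹
        = g * (h * (g⁻¹ * (h⁻¹ * w * h) * g) * h⁻¹) * g⁻¹ := by group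
      _ = g * (h * (g⁻¹ * w ^ B' * g) * h⁻¹) * g⁻¹ := by rw [hB']
      _ = g * (h * w ^ (A' * B') * h⁻¹) * g⁻¹ := by rw [e2]
      _ = g * w ^ (B * (A' * B')) * g⁻¹ := by rw [e3]
      _ = w ^ (A * (B * (A' * B'))) := e4
      _ = w ^ ((A' * A) * (B' * B)) := by
            rw [show A * (B * (A' * B')) = (A' * A) * (B' * B) by ring]
      _ = (w ^ (A' * A)) ^ (B' * B) := by rw [zpow_mul]
      _ = w ^ (B' * B) := by rw [hg1]
      _ = w := hh1
  set H := Subgroup.centralizer {w} with hHdef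
  have hwH : w ∈ H := by
    apply Subgroup.mem_centralizer_iff.mpr
    rintro y hy
    simp only [Set.mem_singleton_iff] at hy
    subst hy
    rfl
  have hcentral : ∀ x : ↥H, (⟨w, hwH⟩ : ↥H) * x = x * ⟨w, hwH⟩ := by
    rintro ⟨x, hx⟩
    apply Subtype.ext
    exact Subgroup.mem_centralizer_iff.mp hx w (Set.mem_singleton w)
  have hw1' : (⟨w, hwH⟩ : ↥H) ≠ 1 := by
    intro hcon
    exact hw1 (by simpa using congrArg Subtype.val hcon)
  have habel := isfree_comm_of_center hw1' hcentral
  set i0 : Fin n := ⟨0, by omega⟩ with hi0def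
  set i1 : Fin n := ⟨1, by omega⟩ with hi1def
  set a := FreeGroup.of i0 with hadef
  set b := FreeGroup.of i1 with hbdef
  have hcomm_mem : ∀ g h : FreeGroup (Fin n), g * h * g⁻¹ * h⁻¹ ∈ H := by
    intro g h
    apply Subgroup.mem_centralizer_iff.mpr
    rintro y hy
    simp only [Set.mem_singleton_iff] at hy
    subst hy
    have := main g h
    calc w * (g * h * g⁻¹ * h⁻¹) = ((g * h * g⁻¹ * h⁻¹) * w * (g * h * g⁻¹ * h⁻¹)⁻¹)
        * (g * h * g⁻¹ * h⁻¹) := by rw [this]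
      _ = (g * h * g⁻¹ * h⁻¹) * w := by group
  have hc2 := habel ⟨_, hcomm_mem a b⟩ ⟨_, hcomm_mem (a * a) b⟩
  have hc3 : (a * b * a⁻¹ * b⁻¹) * ((a * a) * b * (a * a)⁻¹ * b⁻¹)
      = ((a * a) * b * (a * a)⁻¹ * b⁻¹) * (a * b * a⁻¹ * b⁻¹) := by
    simpa using congrArg Subtype.val hc2
  have hi01 : i0 ≠ i1 := by
    intro hcon
    have := congrArg Fin.val hcon
    simp [hi0def, hi1def] at this
  classical
  set σ : Equiv.Perm (Fin 4) := Equiv.swap 1 2 * Equiv.swap 2 3 with hσdef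
  set τ : Equiv.Perm (Fin 4) := Equiv.swap 0 1 with hτdef
  set f : Fin n → Equiv.Perm (Fin 4) := fun u => if u = i0 then σ else if u = i1 then τ else 1
    with hfdef
  have hfa : FreeGroup.lift f a = σ := by rw [hadef, FreeGroup.lift_apply_of, hfdef]; simp
  have hfb : FreeGroup.lift f b = τ := by
    rw [hbdef, FreeGroup.lift_apply_of, hfdef]
    simp [Ne.symm hi01]
  have h4 := congrArg (FreeGroup.lift f) hc3
  simp only [_root_.map_mul, _root_.map_inv, hfa, hfb] at h4
  rw [hσdef, hτdef] at h4
  revert h4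
  decide

end NAN

section RF

lemma exists_perm_extend {N : ℕ} (s : Set (Fin N)) (f : Fin N → Fin N)
    (hinj : Set.InjOn f s) : ∃ σ : Equiv.Perm (Fin N), ∀ x ∈ s, σ x = f x := by
  classical
  have hcard : Fintype.card ↥(sᶜ) = Fintype.card ↥((f '' s)ᶜ) := by
    rw [Fintype.card_compl_set, Fintype.card_compl_set]
    congr 1
    exact Fintype.card_congr (Equiv.Set.imageOfInjOn f s hinj)
  refine ⟨((Equiv.Set.sumCompl s).symm.trans
    (((Equiv.Set.imageOfInjOn f s hinj).sumCongr (Fintype.equivOfCardEq hcard)).trans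
    (Equiv.Set.sumCompl (f '' s)))), ?_⟩
  intro x hx
  simp only [Equiv.trans_apply]
  rw [Equiv.Set.sumCompl_symm_apply_of_mem hx]
  simp only [Equiv.sumCongr_apply, Sum.map_inl]
  rw [Equiv.Set.sumCompl_apply_inl]
  simp [Equiv.Set.imageOfInjOn]

set_option maxHeartbeats 2000000 in
theorem free_residually_perm {n : ℕ} (x : FreeGroup (Fin n)) (hx : x ≠ 1) :
    ∃ (Nk : ℕ) (h : FreeGroup (Fin n) →* Equiv.Perm (Fin Nk)), h x ≠ 1 := by
  classical
  set L := x.toWord with hLdef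
  have hred : FreeGroup.reduce L = L := FreeGroup.reduce_toWord x
  set k := L.length with hkdef
  have hk1 : 1 ≤ k := by
    rcases Nat.eq_zero_or_pos k with h0 | h
    · exact absurd (FreeGroup.toWord_eq_nil_iff.mp (List.length_eq_zero_iff.mp h0)) hx
    · exact h
  set N := k + 1 with hNdef
  have key : ∀ i : Fin n, ∃ σ : Equiv.Perm (Fin N),
      (∀ y : Fin N, (hy1 : y.val < k) → L[k-1-y.val]? = some (i, true) →
        σ y = ⟨y.val + 1, by omega⟩) ∧
      (∀ y : Fin N, (hy1 : 1 ≤ y.val) → L[k-y.val]? = some (i, false) →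
        σ y = ⟨y.val - 1, by omega⟩) := by
    intro i
    set Cp : Fin N → Prop := fun y => y.val < k ∧ L[k-1-y.val]? = some (i, true) with hCp
    set Cm : Fin N → Prop := fun y => 1 ≤ y.val ∧ L[k-y.val]? = some (i, false) with hCm
    have hnot : ∀ y, Cp y → Cm y → False := by
      rintro y ⟨hy1, hy2⟩ ⟨hy3, hy4⟩
      have hj1 : k - 1 - y.val < L.length := (List.getElem?_eq_some_iff.mp hy2).1
      have hj2 : k - y.val < L.length := (List.getElem?_eq_some_iff.mp hy4).1
      have heq : k - y.val = (k - 1 - y.val) + 1 := by omega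
      apply no_cancel_adj hred (j := k - 1 - y.val) (by omega)
      have e2 : L[k-1-y.val]'(by omega) = (i, true) := by
        have := List.getElem?_eq_getElem (l := L) (i := k-1-y.val) (by omega)
        rw [this] at hy2; injection hy2
      have e4 : L[(k-1-y.val)+1]'(by omega) = (i, false) := by
        rw [heq] at hy4
        have := List.getElem?_eq_getElem (l := L) (i := (k-1-y.val)+1) (by omega)
        rw [this] at hy4
        injection hy4
      rw [e2, e4]
      exact ⟨rfl, rfl⟩
    set f : Fin N → Fin N := fun y =>
      if h : Cp y then ⟨y.val + 1, by have := h.1; omega⟩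
      else if h' : Cm y then ⟨y.val - 1, by omega⟩ else y with hf
    have hinj : Set.InjOn f {y | Cp y ∨ Cm y} := by
      intro u hu v hv huv
      simp only [Set.mem_setOf_eq] at hu hv
      by_cases hcu : Cp u <;> by_cases hcv : Cp v
      · rw [hf] at huv
        simp only [dif_pos hcu, dif_pos hcv] at huv
        have := congrArg Fin.val huv
        simp only at this
        exact Fin.ext (by omega)
      · have hmv : Cm v := hv.resolve_left hcv
        rw [hf] at huv
        simp only [dif_pos hcu, dif_neg hcv, dif_pos hmv] at huv
        have hval := congrArg Fin.val huv
        simp only at hval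
        -- u + 1 = v - 1, so v = u + 2
        exfalso
        have hvu : v.val = u.val + 2 := by omega
        obtain ⟨hu1, hu2⟩ := hcu
        obtain ⟨hv1, hv2⟩ := hmv
        have hj2 : k - v.val < L.length := (List.getElem?_eq_some_iff.mp hv2).1
        have heq : k - 1 - u.val = (k - v.val) + 1 := by omega
        apply no_cancel_adj hred (j := k - v.val) (by omega)
        have e2 : L[k-v.val]'(by omega) = (i, false) := by
          have := List.getElem?_eq_getElem (l := L) (i := k-v.val) (by omega)
          rw [this] at hv2; injection hv2
        have e4 : L[(k-v.val)+1]'(by omega) = (i, true) := by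
          rw [heq] at hu2
          have := List.getElem?_eq_getElem (l := L) (i := (k-v.val)+1) (by omega)
          rw [this] at hu2
          injection hu2
        rw [e2, e4]
        exact ⟨rfl, rfl⟩
      · have hmu : Cm u := hu.resolve_left hcu
        rw [hf] at huv
        simp only [dif_pos hcv, dif_neg hcu, dif_pos hmu] at huv
        have hval := congrArg Fin.val huv
        simp only at hval
        exfalso
        have huv2 : u.val = v.val + 2 := by omega
        obtain ⟨hv1, hv2⟩ := hcv
        obtain ⟨hu1, hu2⟩ := hmu
        have hj2 : k - u.val < L.length := (List.getElem?_eq_some_iff.mp hu2).1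
        have heq : k - 1 - v.val = (k - u.val) + 1 := by omega
        apply no_cancel_adj hred (j := k - u.val) (by omega)
        have e2 : L[k-u.val]'(by omega) = (i, false) := by
          have := List.getElem?_eq_getElem (l := L) (i := k-u.val) (by omega)
          rw [this] at hu2; injection hu2
        have e4 : L[(k-u.val)+1]'(by omega) = (i, true) := by
          rw [heq] at hv2
          have := List.getElem?_eq_getElem (l := L) (i := (k-u.val)+1) (by omega)
          rw [this] at hv2
          injection hv2
        rw [e2, e4]
        exact ⟨rfl, rfl⟩
      · have hmu : Cm u := hu.resolve_left hcu
        have hmv : Cm v := hv.resolve_left hcv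
        rw [hf] at huv
        simp only [dif_neg hcu, dif_neg hcv, dif_pos hmu, dif_pos hmv] at huv
        have hval := congrArg Fin.val huv
        simp only at hval
        have := hmu.1
        have := hmv.1
        exact Fin.ext (by omega)
    obtain ⟨σ, hσ⟩ := exists_perm_extend _ f hinj
    refine ⟨σ, ?_, ?_⟩
    · intro y hy1 hy2
      have hcp : Cp y := ⟨hy1, hy2⟩
      rw [hσ y (Or.inl hcp), hf]
      simp only [dif_pos hcp]
    · intro y hy1 hy2
      have hcm : Cm y := ⟨hy1, hy2⟩
      have hncp : ¬ Cp y := fun hcp => hnot y hcp hcm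
      rw [hσ y (Or.inr hcm), hf]
      simp only [dif_neg hncp, dif_pos hcm]
  choose σ hP1 hP2 using key
  set c : Fin n × Bool → Equiv.Perm (Fin N) :=
    fun p => bif p.2 then σ p.1 else (σ p.1)⁻¹ with hcdef
  have traj : ∀ j, j ≤ k → ((L.take j).map c).prod ⟨k - j, by omega⟩ = ⟨k, by omega⟩ := by
    intro j
    induction j with
    | zero =>
      intro _
      simp only [List.take_zero, List.map_nil, List.prod_nil, Nat.sub_zero]
      rfl
    | succ j ihj =>
      intro hj
      have hjk : j < k := hj
      have hjL : j < L.length := by omega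
      rw [List.take_succ, List.getElem?_eq_getElem hjL, Option.toList_some,
        List.map_append, List.prod_append]
      simp only [List.map_cons, List.map_nil, List.prod_cons, List.prod_nil, mul_one]
      rw [Equiv.Perm.mul_apply]
      have hstep : c (L[j]'hjL) ⟨k - (j+1), by omega⟩ = ⟨k - j, by omega⟩ := by
        rcases hLj : L[j]'hjL with ⟨i, b⟩
        cases b
        · -- negative letter
          show (σ i)⁻¹ _ = _
          have hs : σ i ⟨k - j, by omega⟩ = ⟨k - (j+1), by omega⟩ := by
            have := hP2 i ⟨k - j, by omega⟩ (by simp; omega) (by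
              have hidx : k - (k - j) = j := by omega
              rw [hidx, List.getElem?_eq_getElem hjL, hLj])
            rw [this]
            exact Fin.ext (by simp; omega)
          rw [← hs, Equiv.Perm.inv_def, Equiv.symm_apply_apply]
        · -- positive letter
          show σ i _ = _
          have := hP1 i ⟨k - (j+1), by omega⟩ (by simp; omega) (by
            have hidx : k - 1 - (k - (j+1)) = j := by omega
            rw [hidx, List.getElem?_eq_getElem hjL, hLj])
          rw [this]
          exact Fin.ext (by simp; omega)
      rw [hstep]
      exact ihj (by omega)
  refine ⟨N, FreeGroup.lift (fun i => σ i), ?_⟩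
  intro hcon
  have hx2 : FreeGroup.lift (fun i => σ i) x = (L.map c).prod := by
    conv_lhs => rw [← FreeGroup.mk_toWord (x := x)]
    rw [FreeGroup.lift_mk]
  have htk := traj k le_rfl
  have hLtake : List.take k L = L := by rw [hkdef]; exact List.take_length
  rw [hLtake] at htk
  rw [hcon] at hx2
  rw [← hx2] at htk
  have := congrArg Fin.val htk
  simp only [Equiv.Perm.one_apply] at this
  simp at this
  omega

end RF

theorem freegroup_hopf {n : ℕ} (θ : FreeGroup (Fin n) →* FreeGroup (Fin n))
    (hθ : Function.Surjective θ) : Function.Injective θ := by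
  rw [injective_iff_map_eq_one]
  intro x hx1
  by_contra hx
  obtain ⟨Nk, h, hh⟩ := free_residually_perm x hx
  haveI : Finite (FreeGroup (Fin n) →* Equiv.Perm (Fin Nk)) :=
    Finite.of_equiv _ (FreeGroup.lift (β := Equiv.Perm (Fin Nk)))
  have hTinj : Function.Injective
      (fun ψ : FreeGroup (Fin n) →* Equiv.Perm (Fin Nk) => ψ.comp θ) := by
    intro ψ₁ ψ₂ hcomp
    exact (MonoidHom.cancel_right hθ).mp hcomp
  have hTsurj := Finite.injective_iff_surjective.mp hTinj
  obtain ⟨ψ, hψ⟩ := hTsurj h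
  apply hh
  rw [← hψ]
  simp only [MonoidHom.coe_comp, Function.comp_apply]
  rw [hx1, _root_.map_one]

theorem zm_hopf {m : ℕ} (θ : (Fin m → ℤ) →+ (Fin m → ℤ))
    (hθ : Function.Surjective θ) : Function.Injective θ :=
  IsNoetherian.injective_of_surjective_endomorphism θ.toIntLinearMap hθ

end Aux


open Matrix SemidirectProduct

section GsdHelpers

variable {n m : ℕ} (α : FreeGroup (Fin n) →* Matrix.GeneralLinearGroup (Fin m) ℤ)

lemma tau_inl (l : FA m) :
    tau α (SemidirectProduct.inl l : Gsd α) = Multiplicative.toAdd l := by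
  unfold tau
  rw [SemidirectProduct.left_inl, SemidirectProduct.right_inl, _root_.map_one]
  simp

lemma tA_eq_inl (b : Fin m → ℤ) :
    tA α b = SemidirectProduct.inl (Multiplicative.ofAdd b) := rfl

lemma tA_tau (b : Fin m → ℤ) : tau α (tA α b) = b := by
  rw [tA_eq_inl, tau_inl]
  rfl

lemma tA_inj : Function.Injective (tA α) := by
  intro a b h
  rw [tA_eq_inl, tA_eq_inl] at h
  have h2 := SemidirectProduct.inl_injective h
  exact Multiplicative.ofAdd.injective h2

lemma tA_add (a b : Fin m → ℤ) : tA α (a + b) = tA α a * tA α b := by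
  rw [tA_eq_inl, tA_eq_inl, tA_eq_inl, ← _root_.map_mul]
  rfl

lemma tA_zero_s9 : tA α (0 : Fin m → ℤ) = 1 := by
  rw [tA_eq_inl]
  simp

lemma tA_toAdd (l : FA m) :
    tA α (Multiplicative.toAdd l) = SemidirectProduct.inl l := rfl

lemma fE_eq_inr (u : FreeGroup (Fin n)) : fE α u = SemidirectProduct.inr u := rfl

end GsdHelpers

/-- For an endomorphism `Φ` of `G_α`: bijective ↔ surjective ↔ (type I with both
`Φ|_{ℤ^m}` and `π∘Φ|_{F_n}` surjective). -/
theorem auto_tfae {n m : ℕ} (hn : 2 ≤ n) (hm : 1 ≤ m)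
    (α : FreeGroup (Fin n) →* Matrix.GeneralLinearGroup (Fin m) ℤ)
    (Φ : Gsd α →* Gsd α) :
    (Function.Bijective Φ ↔ Function.Surjective Φ) ∧
    (Function.Surjective Φ ↔
      ((∀ a : Fin m → ℤ, ∃ b : Fin m → ℤ, Φ (tA α a) = tA α b) ∧
        Function.Surjective (fun a : Fin m → ℤ => tau α (Φ (tA α a))) ∧
        Function.Surjective
          (fun u : FreeGroup (Fin n) => SemidirectProduct.rightHom (Φ (fE α u))))) := by
  classical
  set φF : FreeGroup (Fin n) →* FreeGroup (Fin n) :=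
    SemidirectProduct.rightHom.comp (Φ.comp SemidirectProduct.inr) with hφFdef
  have hφF_apply : ∀ u, φF u = SemidirectProduct.rightHom (Φ (fE α u)) := fun u => rfl
  set ψ : (Fin m → ℤ) → (Fin m → ℤ) := fun a => tau α (Φ (tA α a)) with hψdef
  -- direction A : surjective → conditions
  have dirA : Function.Surjective Φ →
      ((∀ a : Fin m → ℤ, ∃ b : Fin m → ℤ, Φ (tA α a) = tA α b) ∧
        Function.Surjective ψ ∧ Function.Surjective φF) := by
    intro hsurj
    set p : Gsd α →* FreeGroup (Fin n) := SemidirectProduct.rightHom.comp Φ with hpdef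
    have hp_apply : ∀ g, p g = SemidirectProduct.rightHom (Φ g) := fun g => rfl
    have hpsurj : Function.Surjective p :=
      SemidirectProduct.rightHom_surjective.comp hsurj
    set K : Subgroup (Gsd α) :=
      (SemidirectProduct.rightHom : Gsd α →* FreeGroup (Fin n)).ker with hKdef
    set Nsub : Subgroup (FreeGroup (Fin n)) := Subgroup.map p K with hNdef
    have hKnormal : K.Normal := MonoidHom.normal_ker _
    have hNnormal : Nsub.Normal := hKnormal.map p hpsurj
    have hKinl : ∀ g ∈ K, ∃ l : FA m, SemidirectProduct.inl l = g := by
      intro g hg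
      have : g ∈ (SemidirectProduct.inl : FA m →* Gsd α).range := by
        rw [SemidirectProduct.range_inl_eq_ker_rightHom]
        exact hg
      exact this
    have hNab : ∀ x ∈ Nsub, ∀ y ∈ Nsub, x * y = y * x := by
      rintro x ⟨g, hg, rfl⟩ y ⟨h, hh, rfl⟩
      obtain ⟨lg, hlg⟩ := hKinl g hg
      obtain ⟨lh, hlh⟩ := hKinl h hh
      rw [← hlg, ← hlh, ← _root_.map_mul, ← _root_.map_mul, ← _root_.map_mul,
        ← _root_.map_mul, mul_comm]
    have hNbot : Nsub = ⊥ := no_abelian_normal hn Nsub hNnormal hNab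
    have htypeI : ∀ a : Fin m → ℤ, ∃ b : Fin m → ℤ, Φ (tA α a) = tA α b := by
      intro a
      have hmem : tA α a ∈ K := by
        rw [hKdef, MonoidHom.mem_ker, tA_eq_inl, SemidirectProduct.rightHom_inl]
      have hin : p (tA α a) ∈ Nsub := ⟨_, hmem, rfl⟩
      rw [hNbot, Subgroup.mem_bot] at hin
      have h1 : SemidirectProduct.rightHom (Φ (tA α a)) = 1 := hin
      have h2 : Φ (tA α a) ∈ (SemidirectProduct.inl : FA m →* Gsd α).range := by
        rw [SemidirectProduct.range_inl_eq_ker_rightHom, MonoidHom.mem_ker]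
        exact h1
      obtain ⟨l, hl⟩ := h2
      exact ⟨Multiplicative.toAdd l, by rw [← hl, tA_toAdd]⟩
    have hI1 : ∀ a : Fin m → ℤ, SemidirectProduct.rightHom (Φ (tA α a)) = 1 := by
      intro a
      obtain ⟨b, hb⟩ := htypeI a
      rw [hb, tA_eq_inl, SemidirectProduct.rightHom_inl]
    have hdecomp : ∀ g : Gsd α,
        g = tA α (Multiplicative.toAdd (SemidirectProduct.left g)) *
          fE α (SemidirectProduct.right g) := by
      intro g
      rw [tA_toAdd, fE_eq_inr]
      exact (SemidirectProduct.inl_left_mul_inr_right g).symm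
    have hrightΦinr : ∀ g : Gsd α, SemidirectProduct.rightHom (Φ (fE α (SemidirectProduct.right g)))
        = SemidirectProduct.rightHom (Φ g) := by
      intro g
      conv_rhs => rw [hdecomp g]
      rw [_root_.map_mul, _root_.map_mul, hI1, one_mul]
    have hφFsurj : Function.Surjective φF := by
      intro v
      obtain ⟨g, hg⟩ := hsurj (SemidirectProduct.inr v)
      refine ⟨SemidirectProduct.right g, ?_⟩
      rw [hφF_apply, hrightΦinr g, hg, SemidirectProduct.rightHom_inr]
    have hφFinj : Function.Injective φF := freegroup_hopf φF hφFsurj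
    have hψsurj : Function.Surjective ψ := by
      intro b
      obtain ⟨g, hg⟩ := hsurj (tA α b)
      have hu1 : φF (SemidirectProduct.right g) = 1 := by
        rw [hφF_apply, hrightΦinr g, hg, tA_eq_inl, SemidirectProduct.rightHom_inl]
      have hu2 : SemidirectProduct.right g = 1 := by
        apply hφFinj
        rw [hu1, _root_.map_one]
      have hg2 : g = tA α (Multiplicative.toAdd (SemidirectProduct.left g)) := by
        conv_lhs => rw [hdecomp g]
        rw [hu2, fE_eq_inr, _root_.map_one, mul_one]
      refine ⟨Multiplicative.toAdd (SemidirectProduct.left g), ?_⟩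
      show tau α (Φ (tA α _)) = b
      rw [← hg2, hg, tA_tau]
    exact ⟨htypeI, hψsurj, hφFsurj⟩
  -- direction B : conditions → bijective
  have dirB : ((∀ a : Fin m → ℤ, ∃ b : Fin m → ℤ, Φ (tA α a) = tA α b) ∧
        Function.Surjective ψ ∧ Function.Surjective φF) → Function.Bijective Φ := by
    rintro ⟨htypeI, hψsurj, hφFsurj⟩
    have hΦtA : ∀ a, Φ (tA α a) = tA α (ψ a) := by
      intro a
      obtain ⟨b, hb⟩ := htypeI a
      have : ψ a = b := by
        show tau α (Φ (tA α a)) = b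
        rw [hb, tA_tau]
      rw [hb, this]
    have hψadd : ∀ a b, ψ (a + b) = ψ a + ψ b := by
      intro a b
      apply tA_inj α
      rw [tA_add, ← hΦtA, ← hΦtA, ← hΦtA, ← _root_.map_mul, ← tA_add]
    have hψinj : Function.Injective ψ := zm_hopf (AddMonoidHom.mk' ψ hψadd) hψsurj
    have hφFinj : Function.Injective φF := freegroup_hopf φF hφFsurj
    have hdecomp : ∀ g : Gsd α,
        g = tA α (Multiplicative.toAdd (SemidirectProduct.left g)) *
          fE α (SemidirectProduct.right g) := by
      intro g
      rw [tA_toAdd, fE_eq_inr]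
      exact (SemidirectProduct.inl_left_mul_inr_right g).symm
    constructor
    · rw [injective_iff_map_eq_one]
      intro g hg
      have h1 : φF (SemidirectProduct.right g) = 1 := by
        have h2 := congrArg SemidirectProduct.rightHom hg
        conv_lhs at h2 => rw [hdecomp g]
        rw [_root_.map_mul, _root_.map_mul, hΦtA, tA_eq_inl,
          SemidirectProduct.rightHom_inl, one_mul, _root_.map_one] at h2
        exact h2
      have hright : SemidirectProduct.right g = 1 := by
        apply hφFinj
        rw [h1, _root_.map_one]
      have hg2 : g = tA α (Multiplicative.toAdd (SemidirectProduct.left g)) := by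
        conv_lhs => rw [hdecomp g]
        rw [hright, fE_eq_inr, _root_.map_one, mul_one]
      rw [hg2, hΦtA] at hg
      have hψ0 : ψ (Multiplicative.toAdd (SemidirectProduct.left g)) = 0 := by
        apply tA_inj α
        rw [hg, tA_zero_s9]
      have h0 : ψ (0 : Fin m → ℤ) = 0 := by
        have := hψadd 0 0
        simpa using this
      have := hψinj (hψ0.trans h0.symm)
      rw [hg2, this, tA_zero_s9]
    · intro g
      obtain ⟨u, hu⟩ := hφFsurj (SemidirectProduct.rightHom g)
      have hker : g * (Φ (fE α u))⁻¹ ∈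
          (SemidirectProduct.inl : FA m →* Gsd α).range := by
        rw [SemidirectProduct.range_inl_eq_ker_rightHom, MonoidHom.mem_ker,
          _root_.map_mul, _root_.map_inv]
        rw [← hφF_apply, hu]
        exact mul_inv_cancel _
      obtain ⟨l, hl⟩ := hker
      obtain ⟨a, ha⟩ := hψsurj (Multiplicative.toAdd l)
      refine ⟨tA α a * fE α u, ?_⟩
      rw [_root_.map_mul, hΦtA, ha, tA_toAdd, hl]
      exact inv_mul_cancel_right g _
  constructor
  · exact ⟨fun h => h.2, fun hs => dirB (dirA hs)⟩
  · exact ⟨dirA, fun hc => (dirB hc).2⟩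
end

section
/- The group G_α is not coHopfian: there exists an injective group endomorphism of G_α that is not surjective. -/
open Matrix SemidirectProduct

/-- `G_α` is not coHopfian: it has an injective, non-surjective endomorphism. -/
theorem Gsd_not_cohopfian {n m : ℕ} (hn : 2 ≤ n) (hm : 1 ≤ m)
    (α : FreeGroup (Fin n) →* Matrix.GeneralLinearGroup (Fin m) ℤ) :
    ∃ Φ : Gsd α →* Gsd α, Function.Injective Φ ∧ ¬ Function.Surjective Φ := by
  refine ⟨SemidirectProduct.map (zpowGroupHom 2) (MonoidHom.id _) ?_, ?_, ?_⟩
  · intro g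
    ext a
    simp [zpowGroupHom]
  · intro x y hxy
    have h1 : (zpowGroupHom 2 : FA m →* FA m) x.left = zpowGroupHom 2 y.left := by
      simpa using congrArg SemidirectProduct.left hxy
    have h2 : x.right = y.right := by
      simpa using congrArg SemidirectProduct.right hxy
    have h1' : x.left = y.left := by
      simp only [zpowGroupHom_apply] at h1
      have := congrArg Multiplicative.toAdd h1
      simp only [toAdd_zpow] at this
      have : (2 : ℤ) • Multiplicative.toAdd x.left = 2 • Multiplicative.toAdd y.left := this
      have := smul_right_injective (Fin m → ℤ) (by norm_num : (2:ℤ) ≠ 0) this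
      exact Multiplicative.toAdd.injective this
    exact SemidirectProduct.ext h1' h2
  · intro hsurj
    obtain ⟨x, hx⟩ := hsurj (tA α (fun _ => 1))
    have h1 : (zpowGroupHom 2 : FA m →* FA m) x.left = Multiplicative.ofAdd (fun _ => 1) := by
      simpa [tA] using congrArg SemidirectProduct.left hx
    have := congrArg (fun z : FA m => Multiplicative.toAdd z ⟨0, hm⟩) h1
    simp only [zpowGroupHom_apply, toAdd_zpow, toAdd_ofAdd] at this
    have h2 : (2 : ℤ) * Multiplicative.toAdd x.left ⟨0, hm⟩ = 1 := by
      simpa [two_mul] using this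
    omega
end

section
/- If the groups G_α = F_n ⋉_α ℤ^m and G_β = F_{n'} ⋉_β ℤ^{m'} are isomorphic, then n = n' and m = m'. -/
open Matrix SemidirectProduct

set_option linter.unusedVariables false
set_option linter.unusedSectionVars false

namespace FGWords

open FreeGroup List

variable {α : Type*} [DecidableEq α]

/-- The "no cancellation" relation on adjacent letters of a word. -/
def R (x y : α × Bool) : Prop := ¬(x.1 = y.1 ∧ x.2 = !y.2)

instance : DecidableRel (R (α := α)) := fun x y => by unfold R; infer_instance

lemma reduce_eq_self_of_chain {L : List (α × Bool)} (h : List.Chain' (R) L) :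
    FreeGroup.reduce L = L := by
  induction L with
  | nil => rfl
  | cons x L ih =>
    have hL : List.Chain' R L := h.tail
    rw [FreeGroup.reduce.cons, ih hL]
    cases L with
    | nil => rfl
    | cons hd tl =>
      have hR : R x hd := List.isChain_cons_cons.mp h |>.1
      simp only [R] at hR
      simp [hR]

lemma chain_reduce (L : List (α × Bool)) : List.Chain' R (FreeGroup.reduce L) := by
  induction L with
  | nil => simp [List.Chain']
  | cons x L ih =>
    rw [FreeGroup.reduce.cons]
    cases h : FreeGroup.reduce L with
    | nil => simp [List.Chain']
    | cons hd tl =>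
      rw [h] at ih
      show List.Chain' R (if x.1 = hd.1 ∧ x.2 = !hd.2 then tl else x :: hd :: tl)
      by_cases hc : x.1 = hd.1 ∧ x.2 = !hd.2
      · rw [if_pos hc]; exact ih.tail
      · simp only [if_neg hc]
        exact List.isChain_cons_cons.mpr ⟨hc, ih⟩

lemma chain_toWord (x : FreeGroup α) : List.Chain' R x.toWord := by
  rw [← FreeGroup.reduce_toWord]
  exact chain_reduce _

lemma toWord_mul (x y : FreeGroup α) :
    (x * y).toWord = FreeGroup.reduce (x.toWord ++ y.toWord) := by
  conv_lhs => rw [← FreeGroup.mk_toWord (x := x), ← FreeGroup.mk_toWord (x := y)]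
  rw [FreeGroup.mul_mk, FreeGroup.toWord_mk]

lemma toWord_mul_of_chain {x y : FreeGroup α}
    (h : List.Chain' R (x.toWord ++ y.toWord)) :
    (x * y).toWord = x.toWord ++ y.toWord := by
  rw [toWord_mul, reduce_eq_self_of_chain h]

lemma reduce_length_le (L : List (α × Bool)) :
    (FreeGroup.reduce L).length ≤ L.length :=
  FreeGroup.Red.length_le (FreeGroup.reduce.red)

lemma reduce_eq_self_of_length {L : List (α × Bool)}
    (h : (FreeGroup.reduce L).length = L.length) : FreeGroup.reduce L = L :=
  (FreeGroup.Red.sublist FreeGroup.reduce.red).eq_of_length h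

/-- Core lemma: if `w*z = z*w` and the concatenation of reduced words of `w` and `z`
is reduced, then the reduced words commute as lists. -/
lemma comm_core {w z : FreeGroup α} (hch : List.Chain' R (w.toWord ++ z.toWord))
    (hc : w * z = z * w) : z.toWord ++ w.toWord = w.toWord ++ z.toWord := by
  have h1 : (w * z).toWord = w.toWord ++ z.toWord := toWord_mul_of_chain hch
  have h2 : (z * w).toWord = FreeGroup.reduce (z.toWord ++ w.toWord) := toWord_mul _ _
  rw [← hc, h1] at h2
  have hlen : (FreeGroup.reduce (z.toWord ++ w.toWord)).length
      = (z.toWord ++ w.toWord).length := by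
    rw [← h2]; simp [List.length_append, Nat.add_comm]
  rw [reduce_eq_self_of_length hlen] at h2
  exact h2.symm

lemma head_eq_of_append_comm {A B : List (α × Bool)} (hA : A ≠ []) (hB : B ≠ [])
    (h : A ++ B = B ++ A) : A.head? = B.head? := by
  cases A with
  | nil => exact absurd rfl hA
  | cons a A' =>
    cases B with
    | nil => exact absurd rfl hB
    | cons b B' =>
      simp only [List.cons_append] at h
      injection h with h1 _
      rw [List.head?_cons, List.head?_cons, h1]

omit [DecidableEq α] in
lemma exists_decomp {β : Type*} {L : List β} (h1 : L ≠ []) (h2 : L.tail ≠ []) :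
    ∃ f M l, L = f :: (M ++ [l]) ∧ L.head? = some f ∧ L.getLast? = some l := by
  obtain ⟨f, T, rfl⟩ := List.exists_cons_of_ne_nil h1
  simp only [List.tail_cons] at h2
  obtain ⟨M, l, rfl⟩ := T.eq_nil_or_concat'.resolve_left h2
  refine ⟨f, M, l, rfl, rfl, ?_⟩
  rw [show f :: (M ++ [l]) = (f :: M) ++ [l] by simp, List.getLast?_concat]

/-- Any nontrivial element is conjugate to a cyclically reduced one. -/
lemma exists_conj_cycred_aux (k : ℕ) (u : FreeGroup α) (hk : u.toWord.length ≤ k)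
    (hu : u ≠ 1) :
    ∃ c w : FreeGroup α, u = c * w * c⁻¹ ∧ w ≠ 1 ∧
      ∀ p, w.toWord.head? = some p → w.toWord.getLast? ≠ some (p.1, !p.2) := by
  induction k generalizing u with
  | zero =>
    exact absurd (FreeGroup.toWord_eq_nil_iff.mp (List.length_eq_zero_iff.mp
      (Nat.le_zero.mp hk))) hu
  | succ k ih =>
    have hL : u.toWord ≠ [] := fun h => hu (FreeGroup.toWord_eq_nil_iff.mp h)
    by_cases htail : u.toWord.tail = []
    · -- length-one word: automatically cyclically reduced
      refine ⟨1, u, by group, hu, ?_⟩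
      intro p hp hlast
      obtain ⟨f, T, hT⟩ := List.exists_cons_of_ne_nil hL
      rw [hT] at htail hp hlast
      simp only [List.tail_cons] at htail
      subst htail
      simp only [List.head?_cons, Option.some.injEq] at hp
      simp only [List.getLast?_singleton, Option.some.injEq] at hlast
      rw [hp] at hlast
      have := congrArg Prod.snd hlast
      simp at this
    · obtain ⟨f, M, l, hdec, hhead, hlast⟩ := exists_decomp hL htail
      by_cases hcyc : u.toWord.getLast? = some (f.1, !f.2)
      · -- strip the outer conjugating letter
        rw [hlast] at hcyc
        have hlf : l = (f.1, !f.2) := Option.some.inj hcyc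
        have hch : List.Chain' R u.toWord := chain_toWord u
        have hM : M ≠ [] := by
          rintro rfl
          rw [hdec, hlf] at hch
          simp only [List.Chain', List.nil_append, List.isChain_cons_cons, List.isChain_singleton,
            and_true] at hch
          exact hch ⟨rfl, by simp⟩
        have hchM : List.Chain' R M := by
          rw [hdec] at hch
          exact (List.isChain_append.mp hch.tail).1
        have hu' : FreeGroup.mk M ≠ 1 := by
          intro h
          rw [← FreeGroup.toWord_eq_nil_iff, FreeGroup.toWord_mk,
            reduce_eq_self_of_chain hchM] at h
          exact hM h
        have hlen : (FreeGroup.mk M).toWord.length ≤ k := by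
          rw [FreeGroup.toWord_mk, reduce_eq_self_of_chain hchM]
          have : u.toWord.length = M.length + 2 := by
            rw [hdec]; simp
          omega
        obtain ⟨c, w, hconj, hw1, hwcyc⟩ := ih (FreeGroup.mk M) hlen hu'
        refine ⟨FreeGroup.mk [f] * c, w, ?_, hw1, hwcyc⟩
        have hinv : (FreeGroup.mk [f])⁻¹ = FreeGroup.mk [(f.1, !f.2)] := by
          rw [FreeGroup.inv_mk]; simp [FreeGroup.invRev]
        have humk : u = FreeGroup.mk [f] * FreeGroup.mk M * (FreeGroup.mk [f])⁻¹ := by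
          rw [hinv, FreeGroup.mul_mk, FreeGroup.mul_mk, ← hlf]
          conv_lhs => rw [← FreeGroup.mk_toWord (x := u), hdec]
          simp
        rw [humk, hconj]
        group
      · refine ⟨1, u, by group, hu, ?_⟩
        intro p hp
        rw [hhead] at hp
        injection hp with hp
        rw [← hp]
        exact hcyc

/-- Cyclically reduced nontrivial words have a conjugate they don't commute with. -/
lemma exists_nc_of_cycred (hbig : ∀ a : α, ∃ b : α, b ≠ a) (w : FreeGroup α)
    (hw : w ≠ 1)
    (hcyc : ∀ p, w.toWord.head? = some p → w.toWord.getLast? ≠ some (p.1, !p.2)) :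
    ∃ v, w * (v * w * v⁻¹) ≠ (v * w * v⁻¹) * w := by
  by_contra hcon
  push_neg at hcon
  have hL : w.toWord ≠ [] := fun h => hw (FreeGroup.toWord_eq_nil_iff.mp h)
  have hchL : List.Chain' R w.toWord := chain_toWord w
  obtain ⟨f, T, hdec⟩ := List.exists_cons_of_ne_nil hL
  have hhead : w.toWord.head? = some f := by rw [hdec]; rfl
  obtain ⟨l, hlast⟩ : ∃ l, w.toWord.getLast? = some l := by
    rw [hdec]; exact ⟨_, List.getLast?_eq_getLast (by simp)⟩
  have hfl : ¬ l = (f.1, !f.2) := fun h => hcyc f hhead (h ▸ hlast)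
  have hW : w = FreeGroup.mk w.toWord := (FreeGroup.mk_toWord).symm
  by_cases hbase : f.1 = l.1
  · -- pick a fresh generator b and conjugate by it
    obtain ⟨b, hb⟩ := hbig f.1
    set v : FreeGroup α := FreeGroup.mk [(b, true)] with hv
    have hinv : v⁻¹ = FreeGroup.mk [(b, false)] := by
      rw [hv, FreeGroup.inv_mk]; simp [FreeGroup.invRev]
    have hz : v * w * v⁻¹ = FreeGroup.mk ((b, true) :: (w.toWord ++ [(b, false)])) := by
      rw [hinv, hv]
      conv_lhs => rw [hW]
      rw [FreeGroup.mul_mk, FreeGroup.mul_mk]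
      simp
    have hchZ : List.Chain' R ((b, true) :: (w.toWord ++ [(b, false)])) := by
      rw [List.Chain', List.isChain_cons]
      refine ⟨?_, ?_⟩
      · intro y hy
        simp only [Option.mem_def, List.head?_append_of_ne_nil _ hL, hhead,
          Option.some.injEq] at hy
        rw [← hy]
        exact fun hc => hb hc.1
      · rw [List.isChain_append]
        refine ⟨hchL, List.isChain_singleton _, ?_⟩
        intro x hx y hy
        simp only [Option.mem_def, hlast, Option.some.injEq,
          List.head?_cons] at hx hy
        rw [← hx, ← hy]
        intro hc
        exact hb ((hbase.trans hc.1).symm)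
    have hzw : (v * w * v⁻¹).toWord = (b, true) :: (w.toWord ++ [(b, false)]) := by
      rw [hz, FreeGroup.toWord_mk, reduce_eq_self_of_chain hchZ]
    have hch2 : List.Chain' R (w.toWord ++ (v * w * v⁻¹).toWord) := by
      rw [hzw, List.Chain', List.isChain_append]
      refine ⟨hchL, hchZ, ?_⟩
      intro x hx y hy
      simp only [Option.mem_def, hlast, Option.some.injEq, List.head?_cons] at hx hy
      rw [← hx, ← hy]
      intro hc
      exact hb ((hbase.trans hc.1).symm)
    have hcc := comm_core hch2 (hcon v)
    have hzn : (v * w * v⁻¹).toWord ≠ [] := by rw [hzw]; simp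
    have hhd := head_eq_of_append_comm hzn hL hcc
    rw [hzw, hdec] at hhd
    simp only [List.head?_cons, Option.some.injEq] at hhd
    exact hb (congrArg Prod.fst hhd)
  · -- conjugate by the last letter
    have htail : w.toWord.tail ≠ [] := by
      intro h
      rw [hdec] at h
      simp only [List.tail_cons] at h
      rw [hdec, h] at hlast
      simp only [List.getLast?_singleton, Option.some.injEq] at hlast
      exact hbase (by rw [hlast])
    obtain ⟨f', M, l', hdec2, hhead2, hlast2⟩ := exists_decomp hL htail
    have hf' : f' = f := by rw [hhead] at hhead2; injection hhead2 with h; exact h.symm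
    have hl' : l' = l := by rw [hlast] at hlast2; injection hlast2 with h; exact h.symm
    rw [hf', hl'] at hdec2
    set v : FreeGroup α := FreeGroup.mk [l] with hv
    have hinv : v⁻¹ = FreeGroup.mk [(l.1, !l.2)] := by
      rw [hv, FreeGroup.inv_mk]; simp [FreeGroup.invRev]
    have hz : v * w * v⁻¹ = FreeGroup.mk (l :: (f :: M)) := by
      have hwsplit : w = FreeGroup.mk (f :: M) * v := by
        rw [hv, FreeGroup.mul_mk]
        conv_lhs => rw [hW, hdec2]
        simp
      rw [hwsplit]
      rw [show v * (FreeGroup.mk (f :: M) * v) * v⁻¹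
        = v * FreeGroup.mk (f :: M) by group]
      rw [hv, FreeGroup.mul_mk]
      rfl
    have hchM : List.Chain' R (f :: M) := by
      rw [hdec2] at hchL
      have := List.isChain_append.mp (show List.Chain' R ((f :: M) ++ [l]) by
        simpa using hchL)
      exact this.1
    have hchZ : List.Chain' R (l :: (f :: M)) := by
      rw [List.Chain', List.isChain_cons_cons]
      exact ⟨fun hc => hbase (hc.1.symm), hchM⟩
    have hzw : (v * w * v⁻¹).toWord = l :: (f :: M) := by
      rw [hz, FreeGroup.toWord_mk, reduce_eq_self_of_chain hchZ]
    have hch2 : List.Chain' R (w.toWord ++ (v * w * v⁻¹).toWord) := by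
      rw [hzw, List.Chain', List.isChain_append]
      refine ⟨hchL, hchZ, ?_⟩
      intro x hx y hy
      simp only [Option.mem_def, hlast, Option.some.injEq, List.head?_cons] at hx hy
      rw [← hx, ← hy]
      intro hc
      exact absurd hc.2 (by simp)
    have hcc := comm_core hch2 (hcon v)
    have hzn : (v * w * v⁻¹).toWord ≠ [] := by rw [hzw]; simp
    have hhd := head_eq_of_append_comm hzn hL hcc
    rw [hzw, hdec] at hhd
    simp only [List.head?_cons, Option.some.injEq] at hhd
    exact hbase (congrArg Prod.fst hhd).symm

/-- In a free group on at least two generators, any nontrivial element fails to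
commute with some conjugate of itself. -/
lemma exists_nc (hbig : ∀ a : α, ∃ b : α, b ≠ a) (u : FreeGroup α) (hu : u ≠ 1) :
    ∃ v, u * (v * u * v⁻¹) ≠ (v * u * v⁻¹) * u := by
  obtain ⟨c, w, rfl, hw1, hwcyc⟩ :=
    exists_conj_cycred_aux (u.toWord.length) u le_rfl hu
  obtain ⟨v, hv⟩ := exists_nc_of_cycred hbig w hw1 hwcyc
  refine ⟨c * v * c⁻¹, fun hcon => hv ?_⟩
  have := congrArg (fun g => c⁻¹ * g * c) hcon
  calc w * (v * w * v⁻¹) = c⁻¹ * (c * w * c⁻¹ * (c * v * c⁻¹ * (c * w * c⁻¹) *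
        (c * v * c⁻¹)⁻¹)) * c := by group
    _ = c⁻¹ * (c * v * c⁻¹ * (c * w * c⁻¹) * (c * v * c⁻¹)⁻¹ * (c * w * c⁻¹)) * c := by
        rw [hcon]
    _ = v * w * v⁻¹ * w := by group

end FGWords

section Glue

variable {N : Type*} [CommGroup N] {n : ℕ} {φ : FreeGroup (Fin n) →* MulAut N}

lemma mem_ker_iff_forall (hn : 2 ≤ n) (g : N ⋊[φ] FreeGroup (Fin n)) :
    g ∈ (rightHom : N ⋊[φ] FreeGroup (Fin n) →* FreeGroup (Fin n)).ker ↔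
      ∀ h, g * (h * g * h⁻¹) = (h * g * h⁻¹) * g := by
  constructor
  · intro hg h
    have hg' : g ∈ (inl : N →* N ⋊[φ] FreeGroup (Fin n)).range := by
      rw [range_inl_eq_ker_rightHom]; exact hg
    obtain ⟨a, rfl⟩ := hg'
    have hconj : h * inl a * h⁻¹ ∈ (inl : N →* N ⋊[φ] FreeGroup (Fin n)).range := by
      rw [range_inl_eq_ker_rightHom]
      exact Subgroup.Normal.conj_mem inferInstance _ hg h
    obtain ⟨b, hb⟩ := hconj
    rw [← hb, ← _root_.map_mul, ← _root_.map_mul, mul_comm]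
  · intro hcomm
    by_contra hker
    have hne : rightHom g ≠ 1 := fun h1 => hker (MonoidHom.mem_ker.mpr h1)
    haveI : Nontrivial (Fin n) := Fin.nontrivial_iff_two_le.mpr hn
    obtain ⟨v, hv⟩ := FGWords.exists_nc (fun a => exists_ne a) (rightHom g) hne
    apply hv
    have := congrArg rightHom (hcomm (inr v))
    simpa [_root_.map_mul, _root_.map_inv, rightHom_inr] using this

end Glue

/-- Isomorphic FABF groups have the same factor ranks. -/
theorem iso_ranks {n m n' m' : ℕ} (hn : 2 ≤ n) (hm : 1 ≤ m)
    (hn' : 2 ≤ n') (hm' : 1 ≤ m')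
    (α : FreeGroup (Fin n) →* Matrix.GeneralLinearGroup (Fin m) ℤ)
    (β : FreeGroup (Fin n') →* Matrix.GeneralLinearGroup (Fin m') ℤ)
    (h : Nonempty (Gsd α ≃* Gsd β)) :
    n = n' ∧ m = m' := by
  obtain ⟨e⟩ := h
  set Kα := (rightHom : Gsd α →* FreeGroup (Fin n)).ker with hKα
  set Kβ := (rightHom : Gsd β →* FreeGroup (Fin n')).ker with hKβ
  have hmap : Kα.map e.toMonoidHom = Kβ := by
    ext x
    rw [Subgroup.mem_map_equiv, hKα, hKβ, mem_ker_iff_forall hn,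
      mem_ker_iff_forall hn']
    constructor
    · intro hx h
      have h2 := hx (e.symm h)
      have h3 := congrArg e h2
      simpa [_root_.map_mul, _root_.map_inv] using h3
    · intro hx h
      have h2 := hx (e h)
      have h3 := congrArg e.symm h2
      simpa [_root_.map_mul, _root_.map_inv] using h3
  -- the abelian parts are isomorphic
  have e1 : FA m ≃* FA m' := by
    refine ((MonoidHom.ofInjective (inl_injective (φ := (rowAction m).comp α))).trans
      ((MulEquiv.subgroupCongr range_inl_eq_ker_rightHom).trans ?_)).trans
      ((MonoidHom.ofInjective (inl_injective (φ := (rowAction m').comp β))).trans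
        (MulEquiv.subgroupCongr range_inl_eq_ker_rightHom)).symm
    exact (e.subgroupMap Kα).trans (MulEquiv.subgroupCongr hmap)
  have hmm : m = m' := by
    have madd : (Fin m → ℤ) ≃+ (Fin m' → ℤ) := MulEquiv.toAdditive e1
    have hfr := LinearEquiv.finrank_eq madd.toIntLinearEquiv
    simpa [Module.finrank_fintype_fun_eq_card] using hfr
  -- the free parts are isomorphic
  have qα : Gsd α ⧸ Kα ≃* FreeGroup (Fin n) :=
    QuotientGroup.quotientKerEquivOfSurjective _ rightHom_surjective
  have qβ : Gsd β ⧸ Kβ ≃* FreeGroup (Fin n') :=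
    QuotientGroup.quotientKerEquivOfSurjective _ rightHom_surjective
  have qc : Gsd α ⧸ Kα ≃* Gsd β ⧸ Kβ := QuotientGroup.congr Kα Kβ e hmap
  have E : FreeGroup (Fin n) ≃* FreeGroup (Fin n') := qα.symm.trans (qc.trans qβ)
  have hnn : n = n' := by
    set M := Multiplicative (ZMod 2) with hM
    have homEquiv : (FreeGroup (Fin n) →* M) ≃ (FreeGroup (Fin n') →* M) :=
    { toFun := fun f => f.comp E.symm.toMonoidHom
      invFun := fun f => f.comp E.toMonoidHom
      left_inv := fun f => by ext x; simp
      right_inv := fun f => by ext x; simp }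
    have c1 : (Fin n → M) ≃ (Fin n' → M) :=
      (FreeGroup.lift.trans homEquiv).trans FreeGroup.lift.symm
    have hcard := Fintype.card_congr c1
    simp only [Fintype.card_fun, Fintype.card_fin] at hcard
    have : Fintype.card M = 2 := rfl
    rw [this] at hcard
    exact Nat.pow_right_injective le_rfl hcard
  exact ⟨hnn, hmm⟩
end
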